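/- arXiv:1907.04542 — 4 statements merged into one kernel-verified Lean document; each statement's English description precedes it below -/
import Mathlib

section
/- Maximum principle: Assume J satisfies (J), T > 0, g, h ∈ C¹([0,T]) with h(0) = −g(0) = h0 > 0, h strictly increasing and g strictly decreasing. Let D_T = {(t,x): 0 < t ≤ T, g(t) < x < h(t)}. Suppose ψ and ∂t ψ are continuous on the closure of D_T, c ∈ L^∞(D_T), and: ∂t ψ(t,x) ≥ d ∫_{g(t)}^{h(t)} J(x−y) ψ(t,y) dy − d ψ(t,x) + c(t,x) ψ(t,x) for t ∈ (0,T], g(t) < x < h(t); ψ(t, g(t)) ≥ 0 and ψ(t, h(t)) ≥ 0 for t > 0; and ψ(0,x) ≥ 0 for |x| ≤ h0. Then ψ ≥ 0 on the closure of D_T. Moreover, if in addition ψ(0,·) is not identically 0 on [−h0, h0], then ψ > 0 in D_T. -/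
open MeasureTheory Filter

noncomputable section

/-- Condition (J): `J` is continuous, nonnegative, even, `J 0 > 0`,
`∫ J = 1`, and `J` is bounded above. -/
def KernelJ (J : ℝ → ℝ) : Prop :=
  Continuous J ∧ (∀ x, 0 ≤ J x) ∧ (∀ x, J (-x) = J x) ∧ 0 < J 0 ∧
    Integrable J ∧ (∫ x : ℝ, J x) = 1 ∧ BddAbove (Set.range J)

/-- Initial condition (1.3): continuous on `[-h0,h0]`, vanishing at `±h0`,
positive inside. -/
def InitCond (h0 : ℝ) (u0 : ℝ → ℝ) : Prop :=
  ContinuousOn u0 (Set.Icc (-h0) h0) ∧ u0 (-h0) = 0 ∧ u0 h0 = 0 ∧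
    ∀ x ∈ Set.Ioo (-h0) h0, 0 < u0 x

/-- `∫_{gt}^{ht} ∫_{ht}^{∞} J (x - y) u x dy dx`. -/
def fluxR (J : ℝ → ℝ) (u : ℝ → ℝ) (gt ht : ℝ) : ℝ :=
  ∫ x in gt..ht, ∫ y in Set.Ioi ht, J (x - y) * u x

/-- `∫_{gt}^{ht} ∫_{-∞}^{gt} J (x - y) u x dy dx`. -/
def fluxL (J : ℝ → ℝ) (u : ℝ → ℝ) (gt ht : ℝ) : ℝ :=
  ∫ x in gt..ht, ∫ y in Set.Iio gt, J (x - y) * u x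

/-- Condition (f): vanishing at zero density and local Lipschitz continuity. -/
def CondF (f1 f2 : ℝ → ℝ → ℝ → ℝ → ℝ) : Prop :=
  (∀ t x v2, 0 ≤ t → 0 ≤ v2 → f1 t x 0 v2 = 0) ∧
  (∀ t x v1, 0 ≤ t → 0 ≤ v1 → f2 t x v1 0 = 0) ∧
  ∀ K1 K2 : ℝ, 0 < K1 → 0 < K2 → ∃ L > (0:ℝ),
    ∀ t x u1 v1 u2 v2, 0 ≤ t → u1 ∈ Set.Icc (0:ℝ) K1 → v1 ∈ Set.Icc (0:ℝ) K1 →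
      u2 ∈ Set.Icc (0:ℝ) K2 → v2 ∈ Set.Icc (0:ℝ) K2 →
      |f1 t x u1 u2 - f1 t x v1 v2| ≤ L * (|u1 - v1| + |u2 - v2|) ∧
      |f2 t x u1 u2 - f2 t x v1 v2| ≤ L * (|u1 - v1| + |u2 - v2|)

/-- Condition (f1) with constants `k, r`. -/
def CondF1 (f1 : ℝ → ℝ → ℝ → ℝ → ℝ) (k r : ℝ) : Prop :=
  0 < k ∧ 0 < r ∧ ∀ t x u1 u2, 0 ≤ t → 0 ≤ u2 →
    (k < u1 → f1 t x u1 u2 < 0) ∧ (0 < u1 → u1 ≤ k → f1 t x u1 u2 ≤ r * u1)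

/-- Condition (f2) with function `Θ`. -/
def CondF2 (f2 : ℝ → ℝ → ℝ → ℝ → ℝ) (Θ : ℝ → ℝ) : Prop :=
  ∀ K : ℝ, 0 < K → 0 < Θ K ∧
    ∀ t x u1 u2, 0 ≤ t → 0 ≤ u1 → u1 ≤ K → Θ K ≤ u2 → f2 t x u1 u2 < 0

/-- A (global) solution of the free boundary problem (1.2). -/
structure IsSolution (d1 d2 μ1 μ2 h0 : ℝ) (J1 J2 : ℝ → ℝ)
    (f1 f2 : ℝ → ℝ → ℝ → ℝ → ℝ) (u10 u20 : ℝ → ℝ)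
    (u1 u2 : ℝ → ℝ → ℝ) (g h : ℝ → ℝ) : Prop where
  g_zero : g 0 = -h0
  h_zero : h 0 = h0
  cont1 : ContinuousOn (Function.uncurry u1)
    {p : ℝ × ℝ | 0 ≤ p.1 ∧ g p.1 ≤ p.2 ∧ p.2 ≤ h p.1}
  cont2 : ContinuousOn (Function.uncurry u2)
    {p : ℝ × ℝ | 0 ≤ p.1 ∧ g p.1 ≤ p.2 ∧ p.2 ≤ h p.1}
  ext1 : ∀ t x, 0 ≤ t → x ∉ Set.Icc (g t) (h t) → u1 t x = 0
  ext2 : ∀ t x, 0 ≤ t → x ∉ Set.Icc (g t) (h t) → u2 t x = 0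
  pde1 : ∀ t x, 0 < t → x ∈ Set.Ioo (g t) (h t) →
    HasDerivAt (fun τ => u1 τ x)
      (d1 * (∫ y in (g t)..(h t), J1 (x - y) * u1 t y) - d1 * u1 t x
        + f1 t x (u1 t x) (u2 t x)) t
  pde2 : ∀ t x, 0 < t → x ∈ Set.Ioo (g t) (h t) →
    HasDerivAt (fun τ => u2 τ x)
      (d2 * (∫ y in (g t)..(h t), J2 (x - y) * u2 t y) - d2 * u2 t x
        + f2 t x (u1 t x) (u2 t x)) t
  bdry1 : ∀ t, 0 ≤ t → u1 t (g t) = 0 ∧ u1 t (h t) = 0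
  bdry2 : ∀ t, 0 ≤ t → u2 t (g t) = 0 ∧ u2 t (h t) = 0
  fbh : ∀ t, 0 ≤ t → HasDerivWithinAt h
      (μ1 * fluxR J1 (u1 t) (g t) (h t) + μ2 * fluxR J2 (u2 t) (g t) (h t))
      (Set.Ici 0) t
  fbg : ∀ t, 0 ≤ t → HasDerivWithinAt g
      (-(μ1 * fluxL J1 (u1 t) (g t) (h t) + μ2 * fluxL J2 (u2 t) (g t) (h t)))
      (Set.Ici 0) t
  init1 : ∀ x ∈ Set.Icc (-h0) h0, u1 0 x = u10 x
  init2 : ∀ x ∈ Set.Icc (-h0) h0, u2 0 x = u20 x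

/-- Lotka–Volterra growth term for the first species (common to (1.4) and (1.5)). -/
def lvF1 (a1 b1 c1 : ℝ) : ℝ → ℝ → ℝ → ℝ → ℝ :=
  fun _ _ v1 v2 => v1 * (a1 - b1 * v1 - c1 * v2)

/-- Growth term of the second species in the competition model (1.4). -/
def compF2 (a2 b2 c2 : ℝ) : ℝ → ℝ → ℝ → ℝ → ℝ :=
  fun _ _ v1 v2 => v2 * (a2 - b2 * v2 - c2 * v1)

/-- Growth term of the second species in the predator–prey model (1.5). -/
def predF2 (a2 b2 c2 : ℝ) : ℝ → ℝ → ℝ → ℝ → ℝ :=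
  fun _ _ v1 v2 => v2 * (a2 - b2 * v2 + c2 * v1)

/-- Generalized principal eigenvalue of `L^d_{(a,b)} + θ` with kernel `J`. -/
def lambdaP (d : ℝ) (J : ℝ → ℝ) (a b : ℝ) (θ : ℝ → ℝ) : ℝ :=
  sInf {lam : ℝ | ∃ φ : ℝ → ℝ, ContinuousOn φ (Set.Icc a b) ∧
    (∀ x ∈ Set.Icc a b, 0 < φ x) ∧
    ∀ x ∈ Set.Icc a b,
      d * ((∫ y in a..b, J (x - y) * φ y) - φ x) + θ x * φ x ≤ lam * φ x}

section AuxMaxPrinciple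
open Topology Set


-- L1: derivative nonpositive at a left minimum
lemma aux_deriv_nonpos_of_left_min {f : ℝ → ℝ} {f' T t0 ε : ℝ}
    (hT : t0 ≤ T) (ht0 : 0 < t0)
    (hd : HasDerivWithinAt f f' (Set.Icc 0 T) t0)
    (hε : 0 < ε) (hmin : ∀ τ ∈ Set.Ioo (t0 - ε) t0, f t0 ≤ f τ) : f' ≤ 0 := by
  set a := t0 - min ε t0 with ha
  have hat0 : a < t0 := by
    have : 0 < min ε t0 := lt_min hε ht0
    rw [ha]; linarith
  have hsub : Set.Ioo a t0 ⊆ Set.Icc 0 T := by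
    intro τ hτ
    constructor
    · have : t0 - t0 ≤ a := by simp [ha]
      linarith [hτ.1]
    · linarith [hτ.2]
  have hd' : HasDerivWithinAt f f' (Set.Ioo a t0) t0 := hd.mono hsub
  have htend := hasDerivWithinAt_iff_tendsto_slope.mp hd'
  have hne : (𝓝[Set.Ioo a t0 \ {t0}] t0).NeBot := by
    have : Set.Ioo a t0 \ {t0} = Set.Ioo a t0 := by
      ext τ; simp only [Set.mem_diff, Set.mem_singleton_iff, Set.mem_Ioo]
      constructor
      · exact fun h => h.1
      · exact fun h => ⟨h, by linarith [h.2]⟩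
    rw [this]
    rw [mem_closure_iff_nhdsWithin_neBot.symm, closure_Ioo hat0.ne]
    exact ⟨hat0.le, le_refl _⟩
  refine le_of_tendsto htend ?_
  filter_upwards [self_mem_nhdsWithin] with τ hτ
  have hτ' : τ ∈ Set.Ioo a t0 := hτ.1
  have h1 : 0 ≤ f τ - f t0 := by
    have : f t0 ≤ f τ := by
      apply hmin τ
      constructor
      · have h2 : min ε t0 ≤ ε := min_le_left _ _
        have : t0 - ε ≤ a := by rw [ha]; linarith
        linarith [hτ'.1]
      · exact hτ'.2
    linarith
  have h2 : τ - t0 < 0 := by linarith [hτ'.2]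
  rw [slope_def_field]
  exact div_nonpos_of_nonneg_of_nonpos h1 h2.le

-- L2: kernel integral bounds
lemma aux_kernel_integral_le_one {J : ℝ → ℝ} (hJc : Continuous J)
    (hJ0 : ∀ x, 0 ≤ J x) (hJint : Integrable J) (hJ1 : (∫ x : ℝ, J x) = 1)
    (x a b : ℝ) (hab : a ≤ b) : ∫ y in a..b, J (x - y) ≤ 1 := by
  have h1 : (∫ y in a..b, J (x - y)) = ∫ y in (x - b)..(x - a), J y :=
    intervalIntegral.integral_comp_sub_left J x
  rw [h1, intervalIntegral.integral_of_le (by linarith : x - b ≤ x - a), ← hJ1]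
  exact setIntegral_le_integral hJint (Filter.Eventually.of_forall hJ0)

-- L5: continuous nonneg function with nonpositive interval integral vanishes inside
lemma aux_zero_of_integral_nonpos {f : ℝ → ℝ} {a b : ℝ} (hab : a ≤ b)
    (hcont : ContinuousOn f (Set.Icc a b)) (hpos : ∀ y ∈ Set.Icc a b, 0 ≤ f y)
    (hint : (∫ y in a..b, f y) ≤ 0) : ∀ y ∈ Set.Ioo a b, f y = 0 := by
  intro y hy
  set F : ℝ → ℝ := fun s => ∫ u in a..s, f u with hF
  have hfint : ∀ s ∈ Set.Icc a b, ∀ s' ∈ Set.Icc a b, IntervalIntegrable f volume s s' := by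
    intro s hs s' hs'
    apply ContinuousOn.intervalIntegrable
    apply hcont.mono
    exact Set.uIcc_subset_Icc hs hs'
  have hFmono : ∀ s ∈ Set.Icc a b, ∀ s' ∈ Set.Icc a b, s ≤ s' → F s ≤ F s' := by
    intro s hs s' hs' hss
    have hsplit : F s + (∫ u in s..s', f u) = F s' :=
      intervalIntegral.integral_add_adjacent_intervals
        (hfint a ⟨le_refl a, hab⟩ s hs) (hfint s hs s' hs')
    have : 0 ≤ ∫ u in s..s', f u := by
      apply intervalIntegral.integral_nonneg hss
      intro u hu
      exact hpos u ⟨le_trans hs.1 hu.1, le_trans hu.2 hs'.2⟩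
    linarith
  have hFa : F a = 0 := intervalIntegral.integral_same
  have hFzero : ∀ s ∈ Set.Icc a b, F s = 0 := by
    intro s hs
    have h1 : F a ≤ F s := hFmono a ⟨le_refl a, hab⟩ s hs hs.1
    have h2 : F s ≤ F b := hFmono s hs b ⟨hab, le_refl b⟩ hs.2
    have : F b ≤ 0 := hint
    linarith [hFa ▸ h1]
  -- F is eventually 0 near y, and has derivative f y at y
  have hy' : Set.Icc a b ∈ 𝓝 y := Icc_mem_nhds hy.1 hy.2
  have hcf : ContinuousAt f y := (hcont y (Set.mem_Icc_of_Ioo hy)).continuousAt hy'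
  have hderiv : HasDerivAt F (f y) y := by
    apply intervalIntegral.integral_hasDerivAt_right
      (hfint a ⟨le_refl a, hab⟩ y (Set.mem_Icc_of_Ioo hy))
    · exact ⟨Set.Icc a b, hy', (hcont.mono (by simp)).aestronglyMeasurable measurableSet_Icc⟩
    · exact hcf
  have hzero : HasDerivAt F 0 y := by
    have : F =ᶠ[𝓝 y] (fun _ => (0:ℝ)) := by
      filter_upwards [hy'] with s hs using hFzero s hs
    exact (hasDerivAt_const y (0:ℝ)).congr_of_eventuallyEq this
  exact hderiv.unique hzero

end AuxMaxPrinciple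

open Topology Set

set_option maxHeartbeats 1000000 in
/-- Lemma 2.2, maximum principle for the nonlocal operator on a
moving domain. -/
theorem maximum_principle
    (T d h0 : ℝ) (J : ℝ → ℝ) (g h : ℝ → ℝ) (ψ ψt c : ℝ → ℝ → ℝ) (Cb : ℝ)
    (hT : 0 < T) (hd : 0 < d) (hh0 : 0 < h0) (hJ : KernelJ J)
    (hgC1 : ContDiffOn ℝ 1 g (Set.Icc 0 T)) (hhC1 : ContDiffOn ℝ 1 h (Set.Icc 0 T))
    (hg0 : g 0 = -h0) (hh0eq : h 0 = h0)
    (hhmono : StrictMonoOn h (Set.Icc 0 T)) (hgmono : StrictAntiOn g (Set.Icc 0 T))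
    (hψcont : ContinuousOn (Function.uncurry ψ)
      {p : ℝ × ℝ | p.1 ∈ Set.Icc 0 T ∧ g p.1 ≤ p.2 ∧ p.2 ≤ h p.1})
    (hψtcont : ContinuousOn (Function.uncurry ψt)
      {p : ℝ × ℝ | p.1 ∈ Set.Icc 0 T ∧ g p.1 ≤ p.2 ∧ p.2 ≤ h p.1})
    (hψt : ∀ t ∈ Set.Icc (0:ℝ) T, ∀ x ∈ Set.Icc (g t) (h t),
      HasDerivWithinAt (fun τ => ψ τ x) (ψt t x) (Set.Icc 0 T) t)
    (hc : ∀ t ∈ Set.Ioc (0:ℝ) T, ∀ x ∈ Set.Ioo (g t) (h t), |c t x| ≤ Cb)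
    (hineq : ∀ t ∈ Set.Ioc (0:ℝ) T, ∀ x ∈ Set.Ioo (g t) (h t),
      d * (∫ y in (g t)..(h t), J (x - y) * ψ t y) - d * ψ t x + c t x * ψ t x
        ≤ ψt t x)
    (hbg : ∀ t ∈ Set.Ioc (0:ℝ) T, 0 ≤ ψ t (g t))
    (hbh : ∀ t ∈ Set.Ioc (0:ℝ) T, 0 ≤ ψ t (h t))
    (hinit : ∀ x ∈ Set.Icc (-h0) h0, 0 ≤ ψ 0 x) :
    (∀ t ∈ Set.Icc (0:ℝ) T, ∀ x ∈ Set.Icc (g t) (h t), 0 ≤ ψ t x) ∧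
    ((∃ x ∈ Set.Icc (-h0) h0, ψ 0 x ≠ 0) →
      ∀ t ∈ Set.Ioc (0:ℝ) T, ∀ x ∈ Set.Ioo (g t) (h t), 0 < ψ t x) := by
  classical
  have hgc : ContinuousOn g (Set.Icc 0 T) := hgC1.continuousOn
  have hhc : ContinuousOn h (Set.Icc 0 T) := hhC1.continuousOn
  set K : Set (ℝ × ℝ) :=
    {p : ℝ × ℝ | p.1 ∈ Set.Icc 0 T ∧ g p.1 ≤ p.2 ∧ p.2 ≤ h p.1} with hKdef
  -- basic bounds on g and h
  have hgle : ∀ t ∈ Set.Icc (0:ℝ) T, g t ≤ -h0 := by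
    intro t ht
    rcases eq_or_lt_of_le ht.1 with heq | hlt
    · rw [← heq, hg0]
    · exact le_of_lt (hg0 ▸ hgmono ⟨le_refl 0, hT.le⟩ ht hlt)
  have hhge : ∀ t ∈ Set.Icc (0:ℝ) T, h0 ≤ h t := by
    intro t ht
    rcases eq_or_lt_of_le ht.1 with heq | hlt
    · rw [← heq, hh0eq]
    · exact le_of_lt (hh0eq ▸ hhmono ⟨le_refl 0, hT.le⟩ ht hlt)
  have hglt : ∀ t ∈ Set.Ioc (0:ℝ) T, g t < -h0 := by
    intro t ht
    exact hg0 ▸ hgmono ⟨le_refl 0, hT.le⟩ ⟨ht.1.le, ht.2⟩ ht.1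
  have hhgt : ∀ t ∈ Set.Ioc (0:ℝ) T, h0 < h t := by
    intro t ht
    exact hh0eq ▸ hhmono ⟨le_refl 0, hT.le⟩ ⟨ht.1.le, ht.2⟩ ht.1
  have hgh : ∀ t ∈ Set.Icc (0:ℝ) T, g t < h t := by
    intro t ht
    calc g t ≤ -h0 := hgle t ht
    _ < h0 := by linarith
    _ ≤ h t := hhge t ht
  -- compactness of K
  have hKc : IsCompact K := by
    have hφ : ContinuousOn (fun q : ℝ × ℝ => (q.1, g q.1 + q.2 * (h q.1 - g q.1)))
        (Set.Icc 0 T ×ˢ Set.Icc (0:ℝ) 1) := by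
      refine ContinuousOn.prodMk continuous_fst.continuousOn ?_
      have hgq : ContinuousOn (fun q : ℝ × ℝ => g q.1) (Set.Icc 0 T ×ˢ Set.Icc (0:ℝ) 1) :=
        hgc.comp continuous_fst.continuousOn (fun q hq => hq.1)
      have hhq : ContinuousOn (fun q : ℝ × ℝ => h q.1) (Set.Icc 0 T ×ˢ Set.Icc (0:ℝ) 1) :=
        hhc.comp continuous_fst.continuousOn (fun q hq => hq.1)
      exact hgq.add (continuous_snd.continuousOn.mul (hhq.sub hgq))
    have hKeq : K = (fun q : ℝ × ℝ => (q.1, g q.1 + q.2 * (h q.1 - g q.1))) ''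
        (Set.Icc 0 T ×ˢ Set.Icc (0:ℝ) 1) := by
      ext p
      constructor
      · intro hp
        obtain ⟨hp1, hp2, hp3⟩ := hp
        have hgap : 0 < h p.1 - g p.1 := sub_pos.mpr (hgh p.1 hp1)
        refine ⟨(p.1, (p.2 - g p.1) / (h p.1 - g p.1)), ⟨hp1, ?_, ?_⟩, ?_⟩
        · exact div_nonneg (by linarith) hgap.le
        · rw [div_le_one hgap]; linarith
        · show (p.1, _) = p
          have : g p.1 + (p.2 - g p.1) / (h p.1 - g p.1) * (h p.1 - g p.1) = p.2 := by
            field_simp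
            ring
          rw [this]
      · rintro ⟨q, ⟨hq1, hq2⟩, rfl⟩
        refine ⟨hq1, ?_, ?_⟩
        · have : 0 ≤ q.2 * (h q.1 - g q.1) :=
            mul_nonneg hq2.1 (sub_pos.mpr (hgh q.1 hq1)).le
          simpa using this
        · have : q.2 * (h q.1 - g q.1) ≤ 1 * (h q.1 - g q.1) :=
            mul_le_mul_of_nonneg_right hq2.2 (sub_pos.mpr (hgh q.1 hq1)).le
          simp only []
          nlinarith
    rw [hKeq]
    exact (isCompact_Icc.prod isCompact_Icc).image_of_continuousOn hφ
  -- slices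
  have hslicex : ∀ t ∈ Set.Icc (0:ℝ) T, ContinuousOn (ψ t) (Set.Icc (g t) (h t)) := by
    intro t ht
    have : ContinuousOn (Function.uncurry ψ ∘ fun x : ℝ => (t, x)) (Set.Icc (g t) (h t)) :=
      hψcont.comp (Continuous.continuousOn (by fun_prop)) (fun x hx => ⟨ht, hx.1, hx.2⟩)
    exact this
  have hslicet : ∀ x ∈ Set.Icc (-h0) h0, ContinuousOn (fun τ => ψ τ x) (Set.Icc 0 T) := by
    intro x hx
    have : ContinuousOn (Function.uncurry ψ ∘ fun τ : ℝ => (τ, x)) (Set.Icc 0 T) :=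
      hψcont.comp (Continuous.continuousOn (by fun_prop))
        (fun τ hτ => ⟨hτ, le_trans (hgle τ hτ) hx.1, le_trans hx.2 (hhge τ hτ)⟩)
    exact this
  -- left windows
  have hwindow : ∀ t0 ∈ Set.Ioc (0:ℝ) T, ∀ x0 : ℝ, g t0 < x0 → x0 < h t0 →
      ∃ ε > 0, ∀ τ ∈ Set.Ioo (t0 - ε) t0, τ ∈ Set.Icc (0:ℝ) T ∧ g τ < x0 ∧ x0 < h τ := by
    intro t0 ht0 x0 h1 h2
    have hmem : t0 ∈ Set.Icc (0:ℝ) T := ⟨ht0.1.le, ht0.2⟩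
    have hg' : ∀ᶠ τ in 𝓝[Set.Icc 0 T] t0, g τ < x0 :=
      (hgc t0 hmem).eventually (eventually_lt_nhds h1)
    have hh' : ∀ᶠ τ in 𝓝[Set.Icc 0 T] t0, x0 < h τ :=
      (hhc t0 hmem).eventually (eventually_gt_nhds h2)
    have hcomb := hg'.and hh'
    rw [eventually_nhdsWithin_iff] at hcomb
    rw [Metric.eventually_nhds_iff] at hcomb
    obtain ⟨ε1, hε1, hball⟩ := hcomb
    refine ⟨min ε1 t0, lt_min hε1 ht0.1, ?_⟩
    intro τ hτ
    have hτ0 : 0 < τ := by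
      have := min_le_right ε1 t0; linarith [hτ.1]
    have hτT : τ ∈ Set.Icc (0:ℝ) T := ⟨hτ0.le, le_trans hτ.2.le ht0.2⟩
    have hd' : dist τ t0 < ε1 := by
      rw [Real.dist_eq, abs_of_neg (by linarith [hτ.2] : τ - t0 < 0)]
      have := min_le_left ε1 t0; linarith [hτ.1]
    exact ⟨hτT, (hball hd' hτT).1, (hball hd' hτT).2⟩
  -- PART 1
  have key1 : ∀ t ∈ Set.Icc (0:ℝ) T, ∀ x ∈ Set.Icc (g t) (h t), 0 ≤ ψ t x := by
    set k : ℝ := Cb + 1 with hk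
    set w : ℝ × ℝ → ℝ := fun p => Real.exp (-k * p.1) * ψ p.1 p.2 with hw
    have hwc : ContinuousOn w K := by
      apply ContinuousOn.mul
      · exact (Real.continuous_exp.comp (continuous_const.mul continuous_fst)).continuousOn
      · exact hψcont
    have hKne : K.Nonempty := by
      refine ⟨(0, 0), ⟨⟨le_refl 0, hT.le⟩, ?_, ?_⟩⟩
      · show g 0 ≤ (0:ℝ); rw [hg0]; linarith
      · show (0:ℝ) ≤ h 0; rw [hh0eq]; linarith
    obtain ⟨p0, hp0, hmin⟩ := hKc.exists_isMinOn hKne hwc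
    rw [isMinOn_iff] at hmin
    by_cases hw0 : 0 ≤ w p0
    · intro t ht x hx
      have h1 : w p0 ≤ Real.exp (-k * t) * ψ t x := hmin (t, x) ⟨ht, hx.1, hx.2⟩
      have h2 : 0 < Real.exp (-k * t) := Real.exp_pos _
      by_contra hneg
      push_neg at hneg
      have := mul_neg_of_pos_of_neg h2 hneg
      linarith
    · exfalso
      push_neg at hw0
      obtain ⟨ht0K, hgx, hxh⟩ := hp0
      set t0 := p0.1 with ht0def
      set x0 := p0.2 with hx0def
      have hexp0 : 0 < Real.exp (-k * t0) := Real.exp_pos _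
      have hwp0 : w p0 = Real.exp (-k * t0) * ψ t0 x0 := rfl
      have hψ0neg : ψ t0 x0 < 0 := by
        by_contra hneg
        push_neg at hneg
        have := mul_nonneg hexp0.le hneg
        rw [← hwp0] at this
        linarith
      have ht0pos : 0 < t0 := by
        rcases eq_or_lt_of_le ht0K.1 with heq | hlt
        · exfalso
          have hx0m : x0 ∈ Set.Icc (-h0) h0 := by
            constructor
            · rw [← hg0]; rw [← heq] at hgx; exact hgx
            · rw [← hh0eq]; rw [← heq] at hxh; exact hxh
          have := hinit x0 hx0m
          rw [← heq] at hψ0neg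
          linarith
        · exact hlt
      have ht0I : t0 ∈ Set.Ioc (0:ℝ) T := ⟨ht0pos, ht0K.2⟩
      have hx0g : g t0 < x0 := by
        rcases eq_or_lt_of_le hgx with heq | hlt
        · exfalso; have := hbg t0 ht0I; rw [heq] at this; linarith
        · exact hlt
      have hx0h : x0 < h t0 := by
        rcases eq_or_lt_of_le hxh with heq | hlt
        · exfalso; have := hbh t0 ht0I; rw [← heq] at this; linarith
        · exact hlt
      obtain ⟨ε, hε, hwin⟩ := hwindow t0 ht0I x0 hx0g hx0h
      -- time derivative bound at minimum
      have hder : HasDerivWithinAt (fun τ => Real.exp (-k * τ) * ψ τ x0)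
          ((Real.exp (-k * t0) * (-k)) * ψ t0 x0 + Real.exp (-k * t0) * ψt t0 x0)
          (Set.Icc 0 T) t0 := by
        have he : HasDerivWithinAt (fun τ : ℝ => Real.exp (-k * τ))
            (Real.exp (-k * t0) * (-k)) (Set.Icc 0 T) t0 := by
          have : HasDerivWithinAt (fun τ : ℝ => -k * τ) (-k) (Set.Icc 0 T) t0 :=
            ((hasDerivAt_id t0).const_mul (-k)).hasDerivWithinAt.congr_deriv (mul_one (-k))
          exact this.exp
        exact he.mul (hψt t0 ht0K x0 ⟨hgx, hxh⟩)
      have hfmin : ∀ τ ∈ Set.Ioo (t0 - ε) t0,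
          Real.exp (-k * t0) * ψ t0 x0 ≤ Real.exp (-k * τ) * ψ τ x0 := by
        intro τ hτ
        obtain ⟨hτI, hgτ, hhτ⟩ := hwin τ hτ
        exact hmin (τ, x0) ⟨hτI, hgτ.le, hhτ.le⟩
      have hd0 := aux_deriv_nonpos_of_left_min ht0K.2 ht0pos hder hε hfmin
      have hψtle : ψt t0 x0 ≤ k * ψ t0 x0 := by nlinarith [hd0, hexp0]
      -- integral lower bound
      have hghle : g t0 ≤ h t0 := (hgh t0 ht0K).le
      have hIlb : ψ t0 x0 ≤ ∫ y in (g t0)..(h t0), J (x0 - y) * ψ t0 y := by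
        have hmono : ∫ y in (g t0)..(h t0), J (x0 - y) * ψ t0 x0 ≤
            ∫ y in (g t0)..(h t0), J (x0 - y) * ψ t0 y := by
          apply intervalIntegral.integral_mono_on hghle
          · apply ContinuousOn.intervalIntegrable
            rw [Set.uIcc_of_le hghle]
            exact ((hJ.1.comp (continuous_const.sub continuous_id)).continuousOn).mul
              continuousOn_const
          · apply ContinuousOn.intervalIntegrable
            rw [Set.uIcc_of_le hghle]
            exact ((hJ.1.comp (continuous_const.sub continuous_id)).continuousOn).mul
              (hslicex t0 ht0K)
          · intro y hy
            have hcmp : Real.exp (-k * t0) * ψ t0 x0 ≤ Real.exp (-k * t0) * ψ t0 y :=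
              hmin (t0, y) ⟨ht0K, hy.1, hy.2⟩
            have : ψ t0 x0 ≤ ψ t0 y := by nlinarith [hexp0]
            exact mul_le_mul_of_nonneg_left this (hJ.2.1 _)
        have heq1 : (∫ y in (g t0)..(h t0), J (x0 - y) * ψ t0 x0) =
            (∫ y in (g t0)..(h t0), J (x0 - y)) * ψ t0 x0 :=
          intervalIntegral.integral_mul_const _ _
        have hle1 : (∫ y in (g t0)..(h t0), J (x0 - y)) ≤ 1 :=
          aux_kernel_integral_le_one hJ.1 hJ.2.1 hJ.2.2.2.2.1 hJ.2.2.2.2.2.1 x0 _ _ hghle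
        have : (1:ℝ) * ψ t0 x0 ≤ (∫ y in (g t0)..(h t0), J (x0 - y)) * ψ t0 x0 :=
          mul_le_mul_of_nonpos_right hle1 hψ0neg.le
        rw [one_mul] at this
        linarith [heq1 ▸ hmono]
      have hiq := hineq t0 ht0I x0 ⟨hx0g, hx0h⟩
      have hcb := hc t0 ht0I x0 ⟨hx0g, hx0h⟩
      have hcle : c t0 x0 ≤ Cb := (abs_le.mp hcb).2
      have hstrict : k * ψ t0 x0 < c t0 x0 * ψ t0 x0 := by
        apply mul_lt_mul_of_neg_right _ hψ0neg
        rw [hk]; linarith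
      nlinarith [hiq, hIlb, hψtle, hstrict, hd.le]
  refine ⟨key1, ?_⟩
  -- PART 2
  intro hne t0 ht0 x0 hx0
  by_contra hcon
  push_neg at hcon
  have ht0K : t0 ∈ Set.Icc (0:ℝ) T := ⟨ht0.1.le, ht0.2⟩
  have hψ00 : ψ t0 x0 = 0 :=
    le_antisymm hcon (key1 t0 ht0K x0 ⟨hx0.1.le, hx0.2.le⟩)
  -- J is positive on a small ball
  obtain ⟨δ, hδ, hJδ⟩ : ∃ δ > 0, ∀ u : ℝ, |u| < δ → 0 < J u := by
    have h1 : ∀ᶠ u in 𝓝 (0:ℝ), 0 < J u :=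
      hJ.1.continuousAt.eventually (eventually_gt_nhds hJ.2.2.2.1)
    rw [Metric.eventually_nhds_iff] at h1
    obtain ⟨δ, hδ, hb⟩ := h1
    exact ⟨δ, hδ, fun u hu => hb (by rwa [Real.dist_eq, sub_zero])⟩
  -- Claim A: a zero point spreads to nearby points at the same time
  have claimA : ∀ t ∈ Set.Ioc (0:ℝ) T, ∀ z ∈ Set.Ioo (g t) (h t), ψ t z = 0 →
      ∀ y ∈ Set.Ioo (g t) (h t), J (z - y) ≠ 0 → ψ t y = 0 := by
    intro t ht z hz hz0 y hy hJy
    have htK : t ∈ Set.Icc (0:ℝ) T := ⟨ht.1.le, ht.2⟩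
    obtain ⟨ε, hε, hwin⟩ := hwindow t ht z hz.1 hz.2
    have hdz : ψt t z ≤ 0 := by
      apply aux_deriv_nonpos_of_left_min ht.2 ht.1 (hψt t htK z ⟨hz.1.le, hz.2.le⟩) hε
      intro τ hτ
      obtain ⟨hτK, hgτ, hhτ⟩ := hwin τ hτ
      show ψ t z ≤ ψ τ z
      rw [hz0]
      exact key1 τ hτK z ⟨hgτ.le, hhτ.le⟩
    have hiq := hineq t ht z hz
    rw [hz0] at hiq
    have hI : (∫ u in (g t)..(h t), J (z - u) * ψ t u) ≤ 0 := by
      by_contra hI'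
      push_neg at hI'
      linarith [mul_pos hd hI', hiq, hdz]
    have hzero := aux_zero_of_integral_nonpos (hgh t htK).le
      (((hJ.1.comp (continuous_const.sub continuous_id)).continuousOn).mul (hslicex t htK))
      (fun u hu => mul_nonneg (hJ.2.1 _) (key1 t htK u hu)) hI y hy
    rcases mul_eq_zero.mp hzero with h1 | h1
    · exact absurd h1 hJy
    · exact h1
  have claimB : ∀ t ∈ Set.Ioc (0:ℝ) T, ∀ z ∈ Set.Ioo (g t) (h t), ψ t z = 0 →
      ∀ y ∈ Set.Ioo (g t) (h t), |z - y| < δ → ψ t y = 0 :=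
    fun t ht z hz hz0 y hy hd' =>
      claimA t ht z hz hz0 y hy (ne_of_gt (hJδ _ hd'))
  -- staircase propagation at time t0
  have stair : ∀ n : ℕ, ∀ x ∈ Set.Ioo (g t0) (h t0),
      |x - x0| ≤ δ / 2 + (n : ℝ) * (δ / 2) → ψ t0 x = 0 := by
    intro n
    induction n with
    | zero =>
      intro x hx hdist
      apply claimB t0 ht0 x0 hx0 hψ00 x hx
      rw [abs_sub_comm]
      push_cast at hdist
      calc |x - x0| ≤ δ / 2 + 0 * (δ / 2) := hdist
      _ < δ := by linarith
    | succ n ih =>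
      intro x hx hdist
      push_cast at hdist
      by_cases hcase : |x - x0| ≤ δ / 2 + (n : ℝ) * (δ / 2)
      · exact ih x hx hcase
      · push_neg at hcase
        have hn0 : (0:ℝ) ≤ (n : ℝ) := Nat.cast_nonneg n
        rcases le_or_gt x0 x with hside | hside
        · have h1 : δ / 2 + (n : ℝ) * (δ / 2) < x - x0 := by
            rwa [abs_of_nonneg (by linarith)] at hcase
          have hx'Ioo : x - δ / 2 ∈ Set.Ioo (g t0) (h t0) := by
            constructor
            · have : x0 < x - δ / 2 := by nlinarith
              linarith [hx0.1]
            · linarith [hx.2]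
          have hx'dist : |x - δ / 2 - x0| ≤ δ / 2 + (n : ℝ) * (δ / 2) := by
            rw [abs_of_nonneg (by nlinarith)]
            have h2 : x - x0 ≤ |x - x0| := le_abs_self _
            linarith [hdist]
          have hψx' := ih (x - δ / 2) hx'Ioo hx'dist
          apply claimB t0 ht0 (x - δ / 2) hx'Ioo hψx' x hx
          have : x - δ / 2 - x = -(δ / 2) := by ring
          rw [this, abs_neg, abs_of_nonneg (by linarith)]
          linarith
        · have h1 : δ / 2 + (n : ℝ) * (δ / 2) < x0 - x := by
            rw [abs_of_nonpos (by linarith)] at hcase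
            linarith
          have hx'Ioo : x + δ / 2 ∈ Set.Ioo (g t0) (h t0) := by
            constructor
            · linarith [hx.1]
            · have : x + δ / 2 < x0 := by nlinarith
              linarith [hx0.2]
          have hx'dist : |x + δ / 2 - x0| ≤ δ / 2 + (n : ℝ) * (δ / 2) := by
            rw [abs_of_nonpos (by nlinarith)]
            have h2' : x0 - x ≤ |x - x0| := by
              rw [abs_sub_comm]; exact le_abs_self _
            linarith [hdist]
          have hψx' := ih (x + δ / 2) hx'Ioo hx'dist
          apply claimB t0 ht0 (x + δ / 2) hx'Ioo hψx' x hx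
          have : x + δ / 2 - x = δ / 2 := by ring
          rw [this, abs_of_nonneg (by linarith)]
          linarith
  -- everything in (-h0, h0) vanishes at time t0
  have hzero_t0 : ∀ x ∈ Set.Ioo (-h0) h0, ψ t0 x = 0 := by
    intro x hx
    have hxIoo : x ∈ Set.Ioo (g t0) (h t0) :=
      ⟨lt_of_lt_of_le (hglt t0 ht0) hx.1.le, lt_of_le_of_lt hx.2.le (hhgt t0 ht0)⟩
    obtain ⟨n, hn⟩ := exists_nat_ge (|x - x0| / (δ / 2))
    apply stair n x hxIoo
    rw [div_le_iff₀ (by linarith : (0:ℝ) < δ / 2)] at hn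
    linarith
  -- propagate back in time to 0
  have hCb : 0 ≤ Cb := le_trans (abs_nonneg _) (hc t0 ht0 x0 hx0)
  have hzero_0 : ∀ x ∈ Set.Ioo (-h0) h0, ψ 0 x = 0 := by
    intro x hx
    have hxI : x ∈ Set.Icc (-h0) h0 := ⟨hx.1.le, hx.2.le⟩
    set F : ℝ → ℝ := fun τ => Real.exp ((d + Cb) * τ) * ψ τ x with hF
    have hFcont : ContinuousOn F (Set.Icc 0 t0) := by
      apply ContinuousOn.mul
      · exact (Real.continuous_exp.comp (continuous_const.mul continuous_id)).continuousOn
      · exact (hslicet x hxI).mono (Set.Icc_subset_Icc_right ht0.2)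
    have hFderiv : ∀ τ ∈ Set.Ioo (0:ℝ) t0,
        HasDerivAt F (Real.exp ((d + Cb) * τ) * ((d + Cb) * ψ τ x + ψt τ x)) τ := by
      intro τ hτ
      have hτK : τ ∈ Set.Icc (0:ℝ) T := ⟨hτ.1.le, le_trans hτ.2.le ht0.2⟩
      have hxgh : x ∈ Set.Icc (g τ) (h τ) :=
        ⟨le_trans (hgle τ hτK) hxI.1, le_trans hxI.2 (hhge τ hτK)⟩
      have hder1 : HasDerivAt (fun σ => ψ σ x) (ψt τ x) τ :=
        (hψt τ hτK x hxgh).hasDerivAt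
          (Icc_mem_nhds hτ.1 (lt_of_lt_of_le hτ.2 ht0.2))
      have hder2 : HasDerivAt (fun σ : ℝ => Real.exp ((d + Cb) * σ))
          (Real.exp ((d + Cb) * τ) * (d + Cb)) τ := by
        have hlin : HasDerivAt (fun σ : ℝ => (d + Cb) * σ) (d + Cb) τ := by
          simpa using (hasDerivAt_id τ).const_mul (d + Cb)
        exact hlin.exp
      have := hder2.mul hder1
      exact this.congr_deriv (by ring)
    have hFmono : MonotoneOn F (Set.Icc 0 t0) := by
      apply monotoneOn_of_deriv_nonneg (convex_Icc 0 t0) hFcont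
      · intro τ hτ
        rw [interior_Icc] at hτ
        exact (hFderiv τ hτ).differentiableAt.differentiableWithinAt
      · intro τ hτ
        rw [interior_Icc] at hτ
        rw [(hFderiv τ hτ).deriv]
        apply mul_nonneg (Real.exp_nonneg _)
        have hτIoc : τ ∈ Set.Ioc (0:ℝ) T := ⟨hτ.1, le_trans hτ.2.le ht0.2⟩
        have hτK : τ ∈ Set.Icc (0:ℝ) T := ⟨hτ.1.le, hτIoc.2⟩
        have hxoo : x ∈ Set.Ioo (g τ) (h τ) :=
          ⟨lt_of_lt_of_le (hglt τ hτIoc) hxI.1, lt_of_le_of_lt hxI.2 (hhgt τ hτIoc)⟩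
        have hiq := hineq τ hτIoc x hxoo
        have hcb := hc τ hτIoc x hxoo
        have hψnn := key1 τ hτK x ⟨hxoo.1.le, hxoo.2.le⟩
        have hInn : 0 ≤ ∫ y in (g τ)..(h τ), J (x - y) * ψ τ y := by
          apply intervalIntegral.integral_nonneg (hgh τ hτK).le
          intro u hu
          exact mul_nonneg (hJ.2.1 _) (key1 τ hτK u hu)
        have hcψ : -Cb * ψ τ x ≤ c τ x * ψ τ x :=
          mul_le_mul_of_nonneg_right (abs_le.mp hcb).1 hψnn
        nlinarith [mul_nonneg hd.le hInn]
    have hF0 : F 0 ≤ F t0 :=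
      hFmono ⟨le_refl 0, ht0.1.le⟩ ⟨ht0.1.le, le_refl t0⟩ ht0.1.le
    have hFt0 : F t0 = 0 := by
      rw [hF]
      simp only []
      rw [hzero_t0 x hx, mul_zero]
    have hF0eq : F 0 = ψ 0 x := by
      rw [hF]
      simp only []
      rw [mul_zero, Real.exp_zero, one_mul]
    have hinit' := hinit x hxI
    rw [hFt0] at hF0
    rw [hF0eq] at hF0
    linarith
  -- contradiction with hne
  obtain ⟨xs, hxs, hxsne⟩ := hne
  have hψ0cont : ContinuousOn (ψ 0) (Set.Icc (-h0) h0) := by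
    have := hslicex 0 ⟨le_refl 0, hT.le⟩
    rwa [hg0, hh0eq] at this
  apply hxsne
  have hxscl : xs ∈ closure (Set.Ioo (-h0) h0) := by
    rw [closure_Ioo (by linarith : -h0 ≠ h0)]
    exact hxs
  have hne2 : (𝓝[Set.Ioo (-h0) h0] xs).NeBot :=
    mem_closure_iff_nhdsWithin_neBot.mp hxscl
  have htend : Tendsto (ψ 0) (𝓝[Set.Ioo (-h0) h0] xs) (𝓝 (ψ 0 xs)) :=
    (hψ0cont xs hxs).mono Set.Ioo_subset_Icc_self
  have htend0 : Tendsto (ψ 0) (𝓝[Set.Ioo (-h0) h0] xs) (𝓝 0) := by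
    apply Tendsto.congr' _ tendsto_const_nhds
    filter_upwards [self_mem_nhdsWithin] with u hu
    exact (hzero_0 u hu).symm
  exact tendsto_nhds_unique htend htend0

end
end

section
/- Assume J1 and J2 satisfy (J) with in addition J1(x) > 0 and J2(x) > 0 for all x ∈ ℝ, and (f1, f2) is given by either the competition model (1.4) or the predator–prey model (1.5). Let (u1, u2, g, h) be the unique global solution of problem (1.2), with g_∞ := lim_{t→∞} g(t) and h_∞ := lim_{t→∞} h(t). If a1 ≥ d1 or a2 ≥ d2, then necessarily h_∞ − g_∞ = ∞, i.e., spreading always happens. -/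
open MeasureTheory Filter

noncomputable section

set_option maxHeartbeats 1000000

lemma deriv_nonpos_of_left_min {f : ℝ → ℝ} {v t₀ : ℝ} (ht₀ : 0 < t₀)
    (hf : HasDerivAt f v t₀) (hmin : ∀ τ ∈ Set.Icc (0:ℝ) t₀, f t₀ ≤ f τ) : v ≤ 0 := by
  have hslope := hasDerivAt_iff_tendsto_slope.mp hf
  have hsub : Set.Ioo (0:ℝ) t₀ ⊆ {t₀}ᶜ := fun x hx => ne_of_lt hx.2
  have h1 : Tendsto (slope f t₀) (nhdsWithin t₀ (Set.Ioo 0 t₀)) (nhds v) :=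
    hslope.mono_left (nhdsWithin_mono _ hsub)
  have hne : (nhdsWithin t₀ (Set.Ioo 0 t₀)).NeBot := by
    apply mem_closure_iff_nhdsWithin_neBot.mp
    rw [closure_Ioo (ne_of_lt ht₀)]
    exact ⟨le_of_lt ht₀, le_refl _⟩
  refine le_of_tendsto h1 ?_
  filter_upwards [self_mem_nhdsWithin] with τ hτ
  have hle : f t₀ ≤ f τ := hmin τ ⟨hτ.1.le, hτ.2.le⟩
  have hd : τ - t₀ < 0 := sub_neg.mpr hτ.2
  rw [slope_def_field]
  exact div_nonpos_of_nonneg_of_nonpos (by linarith) hd.le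

lemma monoOn_Icc_of_hasDerivAt {f φ : ℝ → ℝ} {a b : ℝ}
    (hc : ContinuousOn f (Set.Icc a b))
    (hd : ∀ t ∈ Set.Ioo a b, HasDerivAt f (φ t) t)
    (hnn : ∀ t ∈ Set.Ioo a b, 0 ≤ φ t) : MonotoneOn f (Set.Icc a b) := by
  apply monotoneOn_of_deriv_nonneg (convex_Icc a b) hc
  · intro t ht
    rw [interior_Icc] at ht
    exact (hd t ht).differentiableAt.differentiableWithinAt
  · intro t ht
    rw [interior_Icc] at ht
    rw [(hd t ht).deriv]
    exact hnn t ht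

lemma monoOn_Ici_of_hasDerivAt {f φ : ℝ → ℝ}
    (hc : ContinuousOn f (Set.Ici 0))
    (hd : ∀ t : ℝ, 0 < t → HasDerivAt f (φ t) t)
    (hnn : ∀ t : ℝ, 0 < t → 0 ≤ φ t) : MonotoneOn f (Set.Ici 0) := by
  apply monotoneOn_of_deriv_nonneg (convex_Ici 0) hc
  · intro t ht
    rw [interior_Ici] at ht
    exact (hd t ht).differentiableAt.differentiableWithinAt
  · intro t ht
    rw [interior_Ici] at ht
    rw [(hd t ht).deriv]
    exact hnn t ht

lemma species_min_step {J : ℝ → ℝ} {u : ℝ → ℝ → ℝ} {g h : ℝ → ℝ}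
    {d lam m P t₀ x₀ : ℝ}
    (hd : 0 < d)
    (hJc : Continuous J) (hJnn : ∀ z, 0 ≤ J z) (hJint : Integrable J)
    (hJ1 : (∫ z : ℝ, J z) = 1)
    (ht₀ : 0 < t₀) (hx₀ : x₀ ∈ Set.Ioo (g t₀) (h t₀))
    (hpde : HasDerivAt (fun τ => u τ x₀)
      (d * (∫ y in (g t₀)..(h t₀), J (x₀ - y) * u t₀ y) - d * u t₀ x₀ + u t₀ x₀ * P) t₀)
    (hm : u t₀ x₀ = m * Real.exp (lam * t₀)) (hmneg : m < 0)
    (hlb : ∀ y ∈ Set.Icc (g t₀) (h t₀), m * Real.exp (lam * t₀) ≤ u t₀ y)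
    (hcont_slice : ContinuousOn (fun y => u t₀ y) (Set.Icc (g t₀) (h t₀)))
    (hmin_time : ∀ τ ∈ Set.Icc (0:ℝ) t₀, m ≤ Real.exp (-(lam * τ)) * u τ x₀)
    (hP : P - lam ≤ -1) : False := by
  set u₀ : ℝ := u t₀ x₀ with hu₀
  have hgh : g t₀ ≤ h t₀ := le_of_lt (lt_trans hx₀.1 hx₀.2)
  have hu₀neg : u₀ < 0 := by
    rw [hm]
    exact mul_neg_of_neg_of_pos hmneg (Real.exp_pos _)
  set ψ : ℝ → ℝ := fun τ => Real.exp (-(lam * τ)) * u τ x₀ with hψ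
  have hψt₀ : ψ t₀ = m := by
    show Real.exp (-(lam * t₀)) * u t₀ x₀ = m
    rw [← hu₀, hm, mul_comm m, ← mul_assoc, ← Real.exp_add]
    simp
  have hψd : HasDerivAt ψ
      (Real.exp (-(lam * t₀)) * ((d * (∫ y in (g t₀)..(h t₀), J (x₀ - y) * u t₀ y)
        - d * u₀ + u₀ * P) - lam * u₀)) t₀ := by
    have h1 : HasDerivAt (fun τ : ℝ => Real.exp (-(lam * τ))) (Real.exp (-(lam * t₀)) * (-lam)) t₀ := by
      have : HasDerivAt (fun τ : ℝ => -(lam * τ)) (-lam) t₀ := by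
        exact ((hasDerivAt_id t₀).const_mul lam).neg.congr_deriv (by ring)
      exact this.exp
    have := h1.mul hpde
    refine this.congr_deriv ?_
    rw [hu₀]; ring
  have hle0 := deriv_nonpos_of_left_min ht₀ hψd (by
    intro τ hτ
    rw [hψt₀]
    exact hmin_time τ hτ)
  have hD : d * (∫ y in (g t₀)..(h t₀), J (x₀ - y) * u t₀ y) - d * u₀ + u₀ * P - lam * u₀ ≤ 0 := by
    by_contra hcon
    push_neg at hcon
    have := mul_pos (Real.exp_pos (-(lam * t₀))) hcon
    linarith
  have hIlb : u₀ ≤ ∫ y in (g t₀)..(h t₀), J (x₀ - y) * u t₀ y := by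
    have hint1 : IntervalIntegrable (fun y => J (x₀ - y) * u t₀ y) volume (g t₀) (h t₀) := by
      apply ContinuousOn.intervalIntegrable
      rw [Set.uIcc_of_le hgh]
      exact ((hJc.comp (continuous_const.sub continuous_id)).continuousOn).mul hcont_slice
    have hint2 : IntervalIntegrable (fun y => J (x₀ - y) * u₀) volume (g t₀) (h t₀) := by
      apply ContinuousOn.intervalIntegrable
      exact ((hJc.comp (continuous_const.sub continuous_id)).continuousOn).mul continuousOn_const
    have hmono : ∫ y in (g t₀)..(h t₀), J (x₀ - y) * u₀ ≤ ∫ y in (g t₀)..(h t₀), J (x₀ - y) * u t₀ y := by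
      apply intervalIntegral.integral_mono_on hgh hint2 hint1
      intro y hy
      have := hlb y hy
      rw [← hm] at this
      exact mul_le_mul_of_nonneg_left this (hJnn _)
    have heq : (∫ y in (g t₀)..(h t₀), J (x₀ - y) * u₀) = (∫ y in (g t₀)..(h t₀), J (x₀ - y)) * u₀ := by
      rw [← intervalIntegral.integral_mul_const]
    have hq01 : (∫ y in (g t₀)..(h t₀), J (x₀ - y)) ≤ 1 := by
      rw [intervalIntegral.integral_of_le hgh]
      calc ∫ y in Set.Ioc (g t₀) (h t₀), J (x₀ - y)
          ≤ ∫ y : ℝ, J (x₀ - y) := by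
            apply setIntegral_le_integral ((integrable_comp_sub_left J x₀).mpr hJint)
            filter_upwards with y using hJnn _
        _ = 1 := by rw [integral_sub_left_eq_self J volume x₀]; exact hJ1
    have : u₀ ≤ (∫ y in (g t₀)..(h t₀), J (x₀ - y)) * u₀ := by
      nlinarith [hu₀neg]
    linarith
  have h1 : u₀ * (-1) ≤ u₀ * (P - lam) := mul_le_mul_of_nonpos_left hP hu₀neg.le
  have h2 : 0 ≤ d * ((∫ y in (g t₀)..(h t₀), J (x₀ - y) * u t₀ y) - u₀) :=
    mul_nonneg hd.le (sub_nonneg.mpr hIlb)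
  nlinarith [hu₀neg]

/-- Nonnegativity of solutions. -/
lemma sol_nonneg
    (d1 d2 μ1 μ2 h0 a1 b1 c1 a2 b2 c2 : ℝ) (J1 J2 : ℝ → ℝ)
    (u10 u20 : ℝ → ℝ) (u1 u2 : ℝ → ℝ → ℝ) (g h : ℝ → ℝ)
    (F2 : ℝ → ℝ → ℝ → ℝ → ℝ)
    (hd1 : 0 < d1) (hd2 : 0 < d2) (hh0 : 0 < h0)
    (ha1 : 0 < a1) (hb1 : 0 < b1) (hc1 : 0 < c1)
    (ha2 : 0 < a2) (hb2 : 0 < b2) (hc2 : 0 < c2)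
    (hJ1 : KernelJ J1) (hJ2 : KernelJ J2)
    (hu10 : InitCond h0 u10) (hu20 : InitCond h0 u20)
    (hmodel : F2 = compF2 a2 b2 c2 ∨ F2 = predF2 a2 b2 c2)
    (hsol : IsSolution d1 d2 μ1 μ2 h0 J1 J2 (lvF1 a1 b1 c1) F2 u10 u20 u1 u2 g h) :
    ∀ t x, 0 ≤ t → 0 ≤ u1 t x ∧ 0 ≤ u2 t x := by
  -- continuity of g and h on [0,∞)
  have hgcont : ContinuousOn g (Set.Ici 0) := fun s hs =>
    (hsol.fbg s hs).continuousWithinAt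
  have hhcont : ContinuousOn h (Set.Ici 0) := fun s hs =>
    (hsol.fbh s hs).continuousWithinAt
  -- initial data nonneg
  have hinit1 : ∀ x ∈ Set.Icc (-h0) h0, 0 ≤ u10 x := by
    intro x hx
    rcases eq_or_lt_of_le hx.1 with he | hlt
    · rw [← he, hu10.2.1]
    rcases eq_or_lt_of_le hx.2 with he | hlt2
    · rw [he, hu10.2.2.1]
    exact (hu10.2.2.2 x ⟨hlt, hlt2⟩).le
  have hinit2 : ∀ x ∈ Set.Icc (-h0) h0, 0 ≤ u20 x := by
    intro x hx
    rcases eq_or_lt_of_le hx.1 with he | hlt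
    · rw [← he, hu20.2.1]
    rcases eq_or_lt_of_le hx.2 with he | hlt2
    · rw [he, hu20.2.2.1]
    exact (hu20.2.2.2 x ⟨hlt, hlt2⟩).le
  intro t x ht
  by_cases hx : x ∈ Set.Icc (g t) (h t)
  swap
  · rw [hsol.ext1 t x ht hx, hsol.ext2 t x ht hx]
    exact ⟨le_refl 0, le_refl 0⟩
  rcases eq_or_lt_of_le ht with h0t | htpos
  · -- t = 0
    have hx' : x ∈ Set.Icc (-h0) h0 := by
      rw [← h0t] at hx
      rwa [hsol.g_zero, hsol.h_zero] at hx
    rw [← h0t, hsol.init1 x hx', hsol.init2 x hx']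
    exact ⟨hinit1 x hx', hinit2 x hx'⟩
  -- main case : t > 0
  set T := t with hT
  set gc : ℝ → ℝ := fun s => g (max s 0) with hgc
  set hc : ℝ → ℝ := fun s => h (max s 0) with hhc
  have hgccont : Continuous gc :=
    hgcont.comp_continuous (continuous_id.max continuous_const) (fun s => Set.mem_Ici.mpr (le_max_right _ _))
  have hhccont : Continuous hc :=
    hhcont.comp_continuous (continuous_id.max continuous_const) (fun s => Set.mem_Ici.mpr (le_max_right _ _))
  set K : Set (ℝ × ℝ) := {p | p.1 ∈ Set.Icc 0 T ∧ gc p.1 ≤ p.2 ∧ p.2 ≤ hc p.1} with hKdef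
  have hgcEq : ∀ s, 0 ≤ s → gc s = g s := by
    intro s hs; rw [hgc]; simp only; rw [max_eq_left hs]
  have hhcEq : ∀ s, 0 ≤ s → hc s = h s := by
    intro s hs; rw [hhc]; simp only; rw [max_eq_left hs]
  have hKregion : K ⊆ {p : ℝ × ℝ | 0 ≤ p.1 ∧ g p.1 ≤ p.2 ∧ p.2 ≤ h p.1} := by
    intro p hp
    refine ⟨hp.1.1, ?_, ?_⟩
    · rw [← hgcEq p.1 hp.1.1]; exact hp.2.1
    · rw [← hhcEq p.1 hp.1.1]; exact hp.2.2
  have hKclosed : IsClosed K := by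
    apply IsClosed.inter
    · exact isClosed_Icc.preimage continuous_fst
    apply IsClosed.inter
    · exact isClosed_le (hgccont.comp continuous_fst) continuous_snd
    · exact isClosed_le continuous_snd (hhccont.comp continuous_fst)
  have hKcompact : IsCompact K := by
    obtain ⟨Cg, hCg⟩ := (isCompact_Icc (a := (0:ℝ)) (b := T)).bddBelow_image hgccont.continuousOn
    obtain ⟨Ch, hCh⟩ := (isCompact_Icc (a := (0:ℝ)) (b := T)).bddAbove_image hhccont.continuousOn
    apply IsCompact.of_isClosed_subset ((isCompact_Icc (a := (0:ℝ)) (b := T)).prod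
      (isCompact_Icc (a := Cg) (b := Ch))) hKclosed
    intro p hp
    refine ⟨hp.1, ?_, ?_⟩
    · exact le_trans (hCg ⟨p.1, hp.1, rfl⟩) hp.2.1
    · exact le_trans hp.2.2 (hCh ⟨p.1, hp.1, rfl⟩)
  have hKne : K.Nonempty := by
    refine ⟨(0, 0), ⟨le_refl 0, htpos.le⟩, ?_, ?_⟩
    · show gc 0 ≤ 0
      rw [hgcEq 0 (le_refl 0), hsol.g_zero]; linarith
    · show (0:ℝ) ≤ hc 0
      rw [hhcEq 0 (le_refl 0), hsol.h_zero]; linarith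
  have hcontK1 : ContinuousOn (fun p : ℝ × ℝ => u1 p.1 p.2) K := hsol.cont1.mono hKregion
  have hcontK2 : ContinuousOn (fun p : ℝ × ℝ => u2 p.1 p.2) K := hsol.cont2.mono hKregion
  -- sup bound S
  obtain ⟨pS, hpSK, hpSmax⟩ := hKcompact.exists_isMaxOn hKne
    ((hcontK1.abs).add (hcontK2.abs))
  set S : ℝ := |u1 pS.1 pS.2| + |u2 pS.1 pS.2| with hSdef
  have hSnn : 0 ≤ S := add_nonneg (abs_nonneg _) (abs_nonneg _)
  set lam : ℝ := 1 + a1 + a2 + (b1 + c1 + b2 + c2) * S with hlam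
  set W : ℝ × ℝ → ℝ := fun p => Real.exp (-(lam * p.1)) * min (u1 p.1 p.2) (u2 p.1 p.2) with hW
  have hWcont : ContinuousOn W K := by
    apply ContinuousOn.mul
    · exact ((continuous_const.mul continuous_fst).neg.rexp).continuousOn
    · exact ContinuousOn.inf hcontK1 hcontK2
  obtain ⟨p₀, hp₀K, hp₀min⟩ := hKcompact.exists_isMinOn hKne hWcont
  by_cases hW0 : 0 ≤ W p₀
  · -- min is nonneg : done
    have htx : (t, x) ∈ K := by
      refine ⟨⟨ht, le_refl T⟩, ?_, ?_⟩
      · rw [hgcEq t ht]; exact hx.1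
      · rw [hhcEq t ht]; exact hx.2
    have h1 : 0 ≤ W (t, x) := le_trans hW0 (hp₀min htx)
    have h2 : 0 ≤ min (u1 t x) (u2 t x) :=
      nonneg_of_mul_nonneg_right h1 (Real.exp_pos _)
    exact ⟨le_trans h2 (min_le_left _ _), le_trans h2 (min_le_right _ _)⟩
  exfalso
  push_neg at hW0
  set t₀ := p₀.1 with ht₀def
  set x₀ := p₀.2 with hx₀def
  have ht₀mem : t₀ ∈ Set.Icc 0 T := hp₀K.1
  have hglex : g t₀ ≤ x₀ := by rw [← hgcEq t₀ ht₀mem.1]; exact hp₀K.2.1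
  have hxleh : x₀ ≤ h t₀ := by rw [← hhcEq t₀ ht₀mem.1]; exact hp₀K.2.2
  set m := W p₀ with hmdef
  have hWp₀ : m = Real.exp (-(lam * t₀)) * min (u1 t₀ x₀) (u2 t₀ x₀) := rfl
  have hmneg : m < 0 := hW0
  -- t₀ is positive
  have ht₀pos : 0 < t₀ := by
    rcases eq_or_lt_of_le ht₀mem.1 with he | hlt
    · exfalso
      have hx₀' : x₀ ∈ Set.Icc (-h0) h0 := by
        constructor
        · rw [← hsol.g_zero, he]; exact hglex
        · rw [← hsol.h_zero, he]; exact hxleh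
      have h1 : 0 ≤ u1 t₀ x₀ := by
        rw [← he, hsol.init1 x₀ hx₀']; exact hinit1 x₀ hx₀'
      have h2 : 0 ≤ u2 t₀ x₀ := by
        rw [← he, hsol.init2 x₀ hx₀']; exact hinit2 x₀ hx₀'
      have : 0 ≤ m := by
        rw [hWp₀]
        exact mul_nonneg (Real.exp_pos _).le (le_min h1 h2)
      linarith
    · exact hlt
  -- x₀ is interior
  have hx₀Ioo : x₀ ∈ Set.Ioo (g t₀) (h t₀) := by
    constructor
    · rcases eq_or_lt_of_le hglex with he | hgood
      · exfalso
        have h1 := (hsol.bdry1 t₀ ht₀mem.1).1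
        have h2 := (hsol.bdry2 t₀ ht₀mem.1).1
        rw [he] at h1 h2
        have : m = 0 := by rw [hWp₀, h1, h2]; simp
        linarith
      · exact hgood
    · rcases eq_or_lt_of_le hxleh with he | hgood
      · exfalso
        have h1 := (hsol.bdry1 t₀ ht₀mem.1).2
        have h2 := (hsol.bdry2 t₀ ht₀mem.1).2
        rw [← he] at h1 h2
        have : m = 0 := by rw [hWp₀, h1, h2]; simp
        linarith
      · exact hgood
  -- lower bound from the minimum over K
  have hWlb : ∀ s y, s ∈ Set.Icc 0 T → g s ≤ y → y ≤ h s →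
      m ≤ Real.exp (-(lam * s)) * u1 s y ∧ m ≤ Real.exp (-(lam * s)) * u2 s y := by
    intro s y hs h1 h2
    have hmem : ((s, y) : ℝ × ℝ) ∈ K := by
      refine ⟨hs, ?_, ?_⟩
      · show gc s ≤ y; rw [hgcEq s hs.1]; exact h1
      · show y ≤ hc s; rw [hhcEq s hs.1]; exact h2
    have hm1 := hp₀min hmem
    constructor
    · exact le_trans hm1 (mul_le_mul_of_nonneg_left (min_le_left _ _) (Real.exp_pos _).le)
    · exact le_trans hm1 (mul_le_mul_of_nonneg_left (min_le_right _ _) (Real.exp_pos _).le)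
  have hSb : |u1 t₀ x₀| + |u2 t₀ x₀| ≤ S := hpSmax hp₀K
  have habs1 : |u1 t₀ x₀| ≤ S := le_trans (le_add_of_nonneg_right (abs_nonneg _)) hSb
  have habs2 : |u2 t₀ x₀| ≤ S := le_trans (le_add_of_nonneg_left (abs_nonneg _)) hSb
  -- exponential algebra helper
  have hexp_cancel : ∀ s v : ℝ, Real.exp (lam * s) * (Real.exp (-(lam * s)) * v) = v := by
    intro s v
    rw [← mul_assoc, ← Real.exp_add]
    simp
  rcases le_total (u1 t₀ x₀) (u2 t₀ x₀) with hcas | hcas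
  · -- the minimum is attained by u1
    have hmin_eq : min (u1 t₀ x₀) (u2 t₀ x₀) = u1 t₀ x₀ := min_eq_left hcas
    have hmrepr : m = Real.exp (-(lam * t₀)) * u1 t₀ x₀ := by rw [hWp₀, hmin_eq]
    refine species_min_step (J := J1) (u := u1) (g := g) (h := h) (d := d1) (lam := lam)
      (m := m) (P := a1 - b1 * u1 t₀ x₀ - c1 * u2 t₀ x₀) (t₀ := t₀) (x₀ := x₀)
      hd1 hJ1.1 hJ1.2.1 hJ1.2.2.2.2.1 hJ1.2.2.2.2.2.1 ht₀pos hx₀Ioo ?_ ?_ hmneg ?_ ?_ ?_ ?_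
    · exact hsol.pde1 t₀ x₀ ht₀pos hx₀Ioo
    · calc u1 t₀ x₀ = Real.exp (lam * t₀) * (Real.exp (-(lam * t₀)) * u1 t₀ x₀) :=
            (hexp_cancel t₀ _).symm
        _ = m * Real.exp (lam * t₀) := by rw [← hmrepr]; ring
    · intro y hy
      have h1 := (hWlb t₀ y ht₀mem hy.1 hy.2).1
      have h2 := mul_le_mul_of_nonneg_left h1 (Real.exp_pos (lam * t₀)).le
      calc m * Real.exp (lam * t₀) = Real.exp (lam * t₀) * m := mul_comm _ _
        _ ≤ Real.exp (lam * t₀) * (Real.exp (-(lam * t₀)) * u1 t₀ y) := h2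
        _ = u1 t₀ y := hexp_cancel _ _
    · exact hsol.cont1.comp (Continuous.continuousOn (continuous_const.prodMk continuous_id))
        (fun y hy => ⟨ht₀mem.1, hy.1, hy.2⟩)
    · intro τ hτ
      by_cases hin : x₀ ∈ Set.Icc (g τ) (h τ)
      · exact (hWlb τ x₀ ⟨hτ.1, le_trans hτ.2 ht₀mem.2⟩ hin.1 hin.2).1
      · rw [hsol.ext1 τ x₀ hτ.1 hin, mul_zero]; exact hmneg.le
    · have hX : b1 * (-(u1 t₀ x₀)) ≤ b1 * S :=
        mul_le_mul_of_nonneg_left (le_trans (neg_le_abs _) habs1) hb1.le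
      have hY : c1 * (-(u2 t₀ x₀)) ≤ c1 * S :=
        mul_le_mul_of_nonneg_left (le_trans (neg_le_abs _) habs2) hc1.le
      rw [hlam]
      nlinarith [mul_nonneg hb2.le hSnn, mul_nonneg hc2.le hSnn]
  · -- the minimum is attained by u2
    have hmin_eq : min (u1 t₀ x₀) (u2 t₀ x₀) = u2 t₀ x₀ := min_eq_right hcas
    have hmrepr : m = Real.exp (-(lam * t₀)) * u2 t₀ x₀ := by rw [hWp₀, hmin_eq]
    have hF2form : ∃ e : ℝ, |e| ≤ c2 ∧ ∀ v1 v2 : ℝ,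
        F2 t₀ x₀ v1 v2 = v2 * (a2 - b2 * v2 + e * v1) := by
      rcases hmodel with rfl | rfl
      · refine ⟨-c2, by rw [abs_neg, abs_of_pos hc2], fun v1 v2 => ?_⟩
        show v2 * (a2 - b2 * v2 - c2 * v1) = _
        ring
      · refine ⟨c2, by rw [abs_of_pos hc2], fun v1 v2 => ?_⟩
        show v2 * (a2 - b2 * v2 + c2 * v1) = _
        ring
    obtain ⟨e, he, hF2⟩ := hF2form
    have hpde2 := hsol.pde2 t₀ x₀ ht₀pos hx₀Ioo
    rw [hF2] at hpde2
    refine species_min_step (J := J2) (u := u2) (g := g) (h := h) (d := d2) (lam := lam)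
      (m := m) (P := a2 - b2 * u2 t₀ x₀ + e * u1 t₀ x₀) (t₀ := t₀) (x₀ := x₀)
      hd2 hJ2.1 hJ2.2.1 hJ2.2.2.2.2.1 hJ2.2.2.2.2.2.1 ht₀pos hx₀Ioo hpde2 ?_ hmneg ?_ ?_ ?_ ?_
    · calc u2 t₀ x₀ = Real.exp (lam * t₀) * (Real.exp (-(lam * t₀)) * u2 t₀ x₀) :=
            (hexp_cancel t₀ _).symm
        _ = m * Real.exp (lam * t₀) := by rw [← hmrepr]; ring
    · intro y hy
      have h1 := (hWlb t₀ y ht₀mem hy.1 hy.2).2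
      have h2 := mul_le_mul_of_nonneg_left h1 (Real.exp_pos (lam * t₀)).le
      calc m * Real.exp (lam * t₀) = Real.exp (lam * t₀) * m := mul_comm _ _
        _ ≤ Real.exp (lam * t₀) * (Real.exp (-(lam * t₀)) * u2 t₀ y) := h2
        _ = u2 t₀ y := hexp_cancel _ _
    · exact hsol.cont2.comp (Continuous.continuousOn (continuous_const.prodMk continuous_id))
        (fun y hy => ⟨ht₀mem.1, hy.1, hy.2⟩)
    · intro τ hτ
      by_cases hin : x₀ ∈ Set.Icc (g τ) (h τ)
      · exact (hWlb τ x₀ ⟨hτ.1, le_trans hτ.2 ht₀mem.2⟩ hin.1 hin.2).2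
      · rw [hsol.ext2 τ x₀ hτ.1 hin, mul_zero]; exact hmneg.le
    · have hX : e * u1 t₀ x₀ ≤ c2 * S := by
        calc e * u1 t₀ x₀ ≤ |e * u1 t₀ x₀| := le_abs_self _
          _ = |e| * |u1 t₀ x₀| := abs_mul _ _
          _ ≤ c2 * S := mul_le_mul he habs1 (abs_nonneg _) hc2.le
      have hY : b2 * (-(u2 t₀ x₀)) ≤ b2 * S :=
        mul_le_mul_of_nonneg_left (le_trans (neg_le_abs _) habs2) hb2.le
      rw [hlam]
      nlinarith [mul_nonneg hb1.le hSnn, mul_nonneg hc1.le hSnn]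


/-- Monotonicity of the free boundaries, given nonnegativity of the densities. -/
lemma sol_monotone
    (d1 d2 μ1 μ2 h0 a1 b1 c1 a2 b2 c2 : ℝ) (J1 J2 : ℝ → ℝ)
    (u10 u20 : ℝ → ℝ) (u1 u2 : ℝ → ℝ → ℝ) (g h : ℝ → ℝ)
    (F2 : ℝ → ℝ → ℝ → ℝ → ℝ)
    (hμ1 : 0 < μ1) (hμ2 : 0 < μ2) (hh0 : 0 < h0)
    (hJ1 : KernelJ J1) (hJ2 : KernelJ J2)
    (hsol : IsSolution d1 d2 μ1 μ2 h0 J1 J2 (lvF1 a1 b1 c1) F2 u10 u20 u1 u2 g h)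
    (hnn : ∀ t x, 0 ≤ t → 0 ≤ u1 t x ∧ 0 ≤ u2 t x) :
    MonotoneOn h (Set.Ici 0) ∧ AntitoneOn g (Set.Ici 0) ∧
      (∀ t, 0 ≤ t → g t ≤ -h0 ∧ h0 ≤ h t) := by
  have hgcont : ContinuousOn g (Set.Ici 0) := fun s hs =>
    (hsol.fbg s hs).continuousWithinAt
  have hhcont : ContinuousOn h (Set.Ici 0) := fun s hs =>
    (hsol.fbh s hs).continuousWithinAt
  -- nonnegativity of the fluxes
  have hfluxR : ∀ (J : ℝ → ℝ) (u : ℝ → ℝ), (∀ z, 0 ≤ J z) → (∀ x, 0 ≤ u x) →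
      ∀ gt ht : ℝ, gt ≤ ht → 0 ≤ fluxR J u gt ht := by
    intro J u hJ hu gt ht hle
    apply intervalIntegral.integral_nonneg hle
    intro x _
    apply setIntegral_nonneg measurableSet_Ioi
    intro y _
    exact mul_nonneg (hJ _) (hu _)
  have hfluxL : ∀ (J : ℝ → ℝ) (u : ℝ → ℝ), (∀ z, 0 ≤ J z) → (∀ x, 0 ≤ u x) →
      ∀ gt ht : ℝ, gt ≤ ht → 0 ≤ fluxL J u gt ht := by
    intro J u hJ hu gt ht hle
    apply intervalIntegral.integral_nonneg hle
    intro x _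
    apply setIntegral_nonneg measurableSet_Iio
    intro y _
    exact mul_nonneg (hJ _) (hu _)
  have hφh : ∀ t, 0 ≤ t → g t ≤ h t →
      0 ≤ μ1 * fluxR J1 (u1 t) (g t) (h t) + μ2 * fluxR J2 (u2 t) (g t) (h t) := by
    intro t ht hle
    have h1 := hfluxR J1 (u1 t) hJ1.2.1 (fun x => (hnn t x ht).1) (g t) (h t) hle
    have h2 := hfluxR J2 (u2 t) hJ2.2.1 (fun x => (hnn t x ht).2) (g t) (h t) hle
    nlinarith
  have hφg : ∀ t, 0 ≤ t → g t ≤ h t →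
      0 ≤ μ1 * fluxL J1 (u1 t) (g t) (h t) + μ2 * fluxL J2 (u2 t) (g t) (h t) := by
    intro t ht hle
    have h1 := hfluxL J1 (u1 t) hJ1.2.1 (fun x => (hnn t x ht).1) (g t) (h t) hle
    have h2 := hfluxL J2 (u2 t) hJ2.2.1 (fun x => (hnn t x ht).2) (g t) (h t) hle
    nlinarith
  -- width function
  have hG0 : h 0 - g 0 = 2 * h0 := by
    rw [hsol.g_zero, hsol.h_zero]; ring
  have hGcont : ContinuousOn (fun t => h t - g t) (Set.Ici 0) := hhcont.sub hgcont
  have hGderiv : ∀ t : ℝ, 0 < t → HasDerivAt (fun t => h t - g t)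
      ((μ1 * fluxR J1 (u1 t) (g t) (h t) + μ2 * fluxR J2 (u2 t) (g t) (h t))
        + (μ1 * fluxL J1 (u1 t) (g t) (h t) + μ2 * fluxL J2 (u2 t) (g t) (h t))) t := by
    intro t ht
    have h1 := (hsol.fbh t ht.le).hasDerivAt (Ici_mem_nhds ht)
    have h2 := (hsol.fbg t ht.le).hasDerivAt (Ici_mem_nhds ht)
    have := h1.sub h2
    refine this.congr_deriv ?_
    ring
  -- bootstrap: the width always remains at least 3h0/2
  have hG32 : ∀ t, 0 ≤ t → 3 * h0 / 2 ≤ h t - g t := by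
    by_contra hcon
    push_neg at hcon
    obtain ⟨tb, htb0, htbA⟩ := hcon
    set A : Set ℝ := {t : ℝ | 0 ≤ t ∧ h t - g t < 3 * h0 / 2} with hAdef
    have hAne : A.Nonempty := ⟨tb, htb0, htbA⟩
    have hAbdd : BddBelow A := ⟨0, fun a ha => ha.1⟩
    set ts : ℝ := sInf A with htsdef
    have hts0 : 0 ≤ ts := le_csInf hAne (fun a ha => ha.1)
    have hlow : ∀ s, 0 ≤ s → s < ts → 3 * h0 / 2 ≤ h s - g s := by
      intro s hs hsts
      by_contra hcon2
      push_neg at hcon2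
      exact absurd (csInf_le hAbdd ⟨hs, hcon2⟩) (not_le.mpr hsts)
    have hGts : h ts - g ts ≤ 3 * h0 / 2 := by
      by_contra hgt
      push_neg at hgt
      have hcwa : ContinuousWithinAt (fun t => h t - g t) (Set.Ici 0) ts := hGcont ts hts0
      have hev : ∀ᶠ s in nhdsWithin ts (Set.Ici 0), 3 * h0 / 2 < h s - g s :=
        hcwa.eventually (eventually_gt_nhds hgt)
      have hev' : {s : ℝ | 3 * h0 / 2 < h s - g s} ∈ nhdsWithin ts (Set.Ici 0) := hev
      rw [Metric.mem_nhdsWithin_iff] at hev'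
      obtain ⟨δ, hδpos, hδ⟩ := hev' 
      have hex : ∃ a ∈ A, a < ts + δ := exists_lt_of_csInf_lt hAne (by linarith)
      obtain ⟨a, haA, halt⟩ := hex
      have hage : ts ≤ a := csInf_le hAbdd haA
      have hdist : dist a ts < δ := by
        rw [Real.dist_eq, abs_of_nonneg (by linarith)]
        linarith
      exact absurd (hδ ⟨Metric.mem_ball.mpr hdist, haA.1⟩) (not_lt.mpr haA.2.le)
    have htspos : 0 < ts := by
      rcases eq_or_lt_of_le hts0 with he | hlt
      · exfalso
        rw [← he, hG0] at hGts
        linarith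
      · exact hlt
    have hmono : MonotoneOn (fun t => h t - g t) (Set.Icc 0 ts) := by
      apply monoOn_Icc_of_hasDerivAt (hGcont.mono (fun s hs => hs.1))
      · intro τ hτ
        exact hGderiv τ hτ.1
      · intro τ hτ
        have hGτ : 3 * h0 / 2 ≤ h τ - g τ := hlow τ hτ.1.le hτ.2
        have hglh : g τ ≤ h τ := by linarith
        have := hφh τ hτ.1.le hglh
        have := hφg τ hτ.1.le hglh
        linarith
    have hfin := hmono ⟨le_refl 0, hts0⟩ ⟨hts0, le_refl ts⟩ hts0
    simp only at hfin
    rw [hG0] at hfin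
    linarith
  have hglh : ∀ t, 0 ≤ t → g t ≤ h t := by
    intro t ht
    have := hG32 t ht
    linarith
  have hmonoh : MonotoneOn h (Set.Ici 0) := by
    apply monoOn_Ici_of_hasDerivAt hhcont
    · intro t ht
      exact (hsol.fbh t ht.le).hasDerivAt (Ici_mem_nhds ht)
    · intro t ht
      exact hφh t ht.le (hglh t ht.le)
  have hantig : AntitoneOn g (Set.Ici 0) := by
    have hmononeg : MonotoneOn (fun t => -(g t)) (Set.Ici 0) := by
      apply monoOn_Ici_of_hasDerivAt hgcont.neg
      · intro t ht
        have := ((hsol.fbg t ht.le).hasDerivAt (Ici_mem_nhds ht)).neg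
        simpa using this
      · intro t ht
        exact hφg t ht.le (hglh t ht.le)
    intro s hs t ht hst
    have h1 := hmononeg hs ht hst
    simp only [neg_le_neg_iff] at h1
    exact h1
  refine ⟨hmonoh, hantig, ?_⟩
  intro t ht
  constructor
  · have := hantig Set.self_mem_Ici ht ht
    rw [hsol.g_zero] at this
    exact this
  · have := hmonoh Set.self_mem_Ici ht ht
    rw [hsol.h_zero] at this
    exact this


lemma monoOn_Ici_of_exists_hasDerivAt {f : ℝ → ℝ}
    (hc : ContinuousOn f (Set.Ici 0))
    (hd : ∀ t : ℝ, 0 < t → ∃ D, HasDerivAt f D t ∧ 0 ≤ D) : MonotoneOn f (Set.Ici 0) := by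
  apply monotoneOn_of_deriv_nonneg (convex_Ici 0) hc
  · intro t ht
    rw [interior_Ici] at ht
    obtain ⟨D, hD, _⟩ := hd t ht
    exact hD.differentiableAt.differentiableWithinAt
  · intro t ht
    rw [interior_Ici] at ht
    obtain ⟨D, hD, hDnn⟩ := hd t ht
    rw [hD.deriv]
    exact hDnn

/-- Pointwise Gronwall-type persistence estimate. -/
lemma gronwall_persist {ψ β : ℝ → ℝ}
    (hψc : Continuous ψ) (hβc : Continuous β)
    (hd : ∀ τ : ℝ, 0 < τ → ∃ D : ℝ, HasDerivAt ψ D τ ∧ -(β τ) * ψ τ ≤ D) :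
    ∀ τ, 0 ≤ τ → ψ 0 * Real.exp (-(∫ s in (0:ℝ)..τ, β s)) ≤ ψ τ := by
  set B : ℝ → ℝ := fun τ => ∫ s in (0:ℝ)..τ, β s with hB
  have hBd : ∀ τ : ℝ, HasDerivAt B (β τ) τ := by
    intro τ
    exact intervalIntegral.integral_hasDerivAt_right (hβc.intervalIntegrable _ _)
      (hβc.stronglyMeasurableAtFilter _ _) hβc.continuousAt
  have hBc : Continuous B := by
    rw [continuous_iff_continuousAt]
    intro τ
    exact (hBd τ).continuousAt
  have hwmono : MonotoneOn (fun τ => ψ τ * Real.exp (B τ)) (Set.Ici 0) := by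
    apply monoOn_Ici_of_exists_hasDerivAt ((hψc.mul hBc.rexp).continuousOn)
    intro τ hτ
    obtain ⟨D, hD, hDlb⟩ := hd τ hτ
    refine ⟨D * Real.exp (B τ) + ψ τ * (Real.exp (B τ) * β τ), hD.mul (hBd τ).exp, ?_⟩
    have h1 : (-(β τ) * ψ τ) * Real.exp (B τ) ≤ D * Real.exp (B τ) :=
      mul_le_mul_of_nonneg_right hDlb (Real.exp_pos _).le
    nlinarith [Real.exp_pos (B τ)]
  intro τ hτ
  have hmono := hwmono Set.self_mem_Ici hτ hτ
  simp only at hmono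
  have hB0 : B 0 = 0 := intervalIntegral.integral_same
  rw [hB0, Real.exp_zero, mul_one] at hmono
  have h2 := mul_le_mul_of_nonneg_right hmono (Real.exp_pos (-(B τ))).le
  calc ψ 0 * Real.exp (-(B τ)) ≤ ψ τ * Real.exp (B τ) * Real.exp (-(B τ)) := h2
    _ = ψ τ := by rw [mul_assoc, ← Real.exp_add]; simp

lemma kernel_tail_le_one {J : ℝ → ℝ} (hJnn : ∀ z, 0 ≤ J z) (hJint : Integrable J)
    (hJ1 : (∫ z : ℝ, J z) = 1) (S : Set ℝ) (x : ℝ) :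
    (∫ y in S, J (x - y)) ≤ 1 := by
  calc ∫ y in S, J (x - y)
      ≤ ∫ y : ℝ, J (x - y) :=
        setIntegral_le_integral ((integrable_comp_sub_left J x).mpr hJint)
          (Filter.Eventually.of_forall fun y => hJnn _)
    _ = 1 := by rw [integral_sub_left_eq_self J volume x]; exact hJ1

/-- Corollary 3.4: if a1 ≥ d1 or a2 ≥ d2 then spreading happens. -/
theorem spreading_when_growth_dominates_dispersal
    (d1 d2 μ1 μ2 h0 a1 b1 c1 a2 b2 c2 : ℝ) (J1 J2 : ℝ → ℝ)
    (u10 u20 : ℝ → ℝ) (u1 u2 : ℝ → ℝ → ℝ) (g h : ℝ → ℝ)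
    (F2 : ℝ → ℝ → ℝ → ℝ → ℝ)
    (hd1 : 0 < d1) (hd2 : 0 < d2) (hμ1 : 0 < μ1) (hμ2 : 0 < μ2) (hh0 : 0 < h0)
    (ha1 : 0 < a1) (hb1 : 0 < b1) (hc1 : 0 < c1)
    (ha2 : 0 < a2) (hb2 : 0 < b2) (hc2 : 0 < c2)
    (hJ1 : KernelJ J1) (hJ2 : KernelJ J2)
    (hJ1pos : ∀ x, 0 < J1 x) (hJ2pos : ∀ x, 0 < J2 x)
    (hu10 : InitCond h0 u10) (hu20 : InitCond h0 u20)
    (hmodel : F2 = compF2 a2 b2 c2 ∨ F2 = predF2 a2 b2 c2)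
    (hsol : IsSolution d1 d2 μ1 μ2 h0 J1 J2 (lvF1 a1 b1 c1) F2 u10 u20 u1 u2 g h)
    (had : d1 ≤ a1 ∨ d2 ≤ a2) :
    Tendsto (fun t => h t - g t) atTop atTop := by
  have hnn := sol_nonneg d1 d2 μ1 μ2 h0 a1 b1 c1 a2 b2 c2 J1 J2 u10 u20 u1 u2 g h F2
    hd1 hd2 hh0 ha1 hb1 hc1 ha2 hb2 hc2 hJ1 hJ2 hu10 hu20 hmodel hsol
  obtain ⟨hmonoh, hantig, hbounds⟩ := sol_monotone d1 d2 μ1 μ2 h0 a1 b1 c1 a2 b2 c2 J1 J2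
    u10 u20 u1 u2 g h F2 hμ1 hμ2 hh0 hJ1 hJ2 hsol hnn
  have hhcont : ContinuousOn h (Set.Ici 0) := fun s hs => (hsol.fbh s hs).continuousWithinAt
  have hglh : ∀ t, 0 ≤ t → g t ≤ h t := by
    intro t ht
    have h1 := (hbounds t ht).1
    have h2 := (hbounds t ht).2
    linarith
  by_contra hcon
  -- if the width were unbounded it would tend to infinity by monotonicity
  have hbdd : ∃ M : ℝ, ∀ t, 0 ≤ t → h t - g t < M := by
    by_contra hb
    push_neg at hb
    apply hcon
    rw [tendsto_atTop]
    intro M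
    obtain ⟨t0, ht0, hMle⟩ := hb M
    rw [eventually_atTop]
    refine ⟨t0, fun t ht => le_trans hMle ?_⟩
    have ht' : (0:ℝ) ≤ t := le_trans ht0 ht
    have h1 := hmonoh ht0 ht' ht
    have h2 := hantig ht0 ht' ht
    linarith
  obtain ⟨M, hM⟩ := hbdd
  have hMbig : 2 * h0 < M := by
    have := hM 0 (le_refl 0)
    rw [hsol.g_zero, hsol.h_zero] at this
    linarith
  set R : ℝ := M + h0 with hRdef
  have hRh0 : h0 < R := by linarith
  have hRpos : 0 < R := by linarith
  have hhub : ∀ t, 0 ≤ t → h t ≤ R := by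
    intro t ht
    have h1 := hM t ht
    have h2 := (hbounds t ht).1
    linarith
  have hglb : ∀ t, 0 ≤ t → -R ≤ g t := by
    intro t ht
    have h1 := hM t ht
    have h2 := (hbounds t ht).2
    linarith
  -- the core spatial set
  set core : Set ℝ := Set.Icc (-(h0/2)) (h0/2) with hcoredef
  have hcoremeas : MeasurableSet core := measurableSet_Icc
  have hcorevol : volume core = ENNReal.ofReal h0 := by
    rw [hcoredef, Real.volume_Icc]
    norm_num
  -- clamping map
  set cl : ℝ → ℝ := fun y => max (-(h0/2)) (min y (h0/2)) with hcldef
  have hclcont : Continuous cl := continuous_const.max (continuous_id.min continuous_const)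
  have hclmem : ∀ y, cl y ∈ core := by
    intro y
    constructor
    · exact le_max_left _ _
    · rw [hcldef]
      simp only [max_le_iff]
      constructor
      · linarith
      · exact min_le_right _ _
  have hcleq : ∀ y ∈ core, cl y = y := by
    intro y hy
    rw [hcldef]
    simp only
    rw [min_eq_left hy.2, max_eq_right hy.1]
  -- clamped densities are globally continuous
  have hregmem : ∀ p : ℝ × ℝ, ((max p.1 0, cl p.2) : ℝ × ℝ) ∈
      {p : ℝ × ℝ | 0 ≤ p.1 ∧ g p.1 ≤ p.2 ∧ p.2 ≤ h p.1} := by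
    intro p
    have ht' : (0:ℝ) ≤ max p.1 0 := le_max_right _ _
    have hb1' := (hbounds _ ht').1
    have hb2' := (hbounds _ ht').2
    have hm1 := (hclmem p.2).1
    have hm2 := (hclmem p.2).2
    exact ⟨ht', by linarith, by linarith⟩
  have hmapc : Continuous (fun p : ℝ × ℝ => ((max p.1 0, cl p.2) : ℝ × ℝ)) :=
    (continuous_fst.max continuous_const).prodMk (hclcont.comp continuous_snd)
  set v1 : ℝ × ℝ → ℝ := fun p => u1 (max p.1 0) (cl p.2) with hv1def
  set v2 : ℝ × ℝ → ℝ := fun p => u2 (max p.1 0) (cl p.2) with hv2def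
  have hv1c : Continuous v1 := hsol.cont1.comp_continuous hmapc hregmem
  have hv2c : Continuous v2 := hsol.cont2.comp_continuous hmapc hregmem
  have hv1nn : ∀ p, 0 ≤ v1 p := fun p => (hnn _ _ (le_max_right _ _)).1
  have hv2nn : ∀ p, 0 ≤ v2 p := fun p => (hnn _ _ (le_max_right _ _)).2
  have hv1eq : ∀ t x, 0 ≤ t → x ∈ core → v1 (t, x) = u1 t x := by
    intro t x ht hx
    rw [hv1def]
    simp only
    rw [max_eq_left ht, hcleq x hx]
  have hv2eq : ∀ t x, 0 ≤ t → x ∈ core → v2 (t, x) = u2 t x := by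
    intro t x ht hx
    rw [hv2def]
    simp only
    rw [max_eq_left ht, hcleq x hx]
  -- core masses
  set E1 : ℝ → ℝ := fun τ => ∫ x in core, v1 (τ, x) with hE1def
  set E2 : ℝ → ℝ := fun τ => ∫ x in core, v2 (τ, x) with hE2def
  have hEcont : ∀ (v : ℝ × ℝ → ℝ), Continuous v → (∀ p, 0 ≤ v p) →
      Continuous (fun τ => ∫ x in core, v (τ, x)) := by
    intro v hvc hvnn
    rw [continuous_iff_continuousAt]
    intro τ₀
    have hKcomp : IsCompact ((Set.Icc (τ₀ - 1) (τ₀ + 1)) ×ˢ core) :=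
      isCompact_Icc.prod isCompact_Icc
    have hKne : ((Set.Icc (τ₀ - 1) (τ₀ + 1)) ×ˢ core).Nonempty := by
      refine ⟨(τ₀, 0), ⟨by constructor <;> linarith, ?_⟩⟩
      constructor <;> [linarith; linarith]
    obtain ⟨pC, _, hpCmax⟩ := hKcomp.exists_isMaxOn hKne hvc.continuousOn
    apply continuousAt_of_dominated (bound := fun _ => v pC)
    · filter_upwards with τ
      exact ((hvc.comp (continuous_const.prodMk continuous_id)).aestronglyMeasurable)
    · filter_upwards [Metric.ball_mem_nhds τ₀ one_pos] with τ hτ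
      filter_upwards [ae_restrict_mem hcoremeas] with x hx
      rw [Real.norm_eq_abs, abs_of_nonneg (hvnn _)]
      apply hpCmax
      refine ⟨?_, hx⟩
      rw [Metric.mem_ball, Real.dist_eq] at hτ
      constructor
      · cases abs_lt.mp hτ; linarith
      · cases abs_lt.mp hτ; linarith
    · have hconst : IntegrableOn (fun _ => v pC) core volume := by
        refine integrableOn_const ?_
        rw [hcorevol]
        exact ENNReal.ofReal_ne_top
      exact hconst
    · filter_upwards with x
      exact ((hvc.comp (continuous_id.prodMk continuous_const)).continuousAt)
  have hE1c : Continuous E1 := hEcont v1 hv1c hv1nn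
  have hE2c : Continuous E2 := hEcont v2 hv2c hv2nn
  have hE1nn : ∀ τ, 0 ≤ E1 τ :=
    fun τ => setIntegral_nonneg hcoremeas (fun x _ => hv1nn _)
  have hE2nn : ∀ τ, 0 ≤ E2 τ :=
    fun τ => setIntegral_nonneg hcoremeas (fun x _ => hv2nn _)
  -- tail lower bounds for the kernels
  have htail : ∀ (J : ℝ → ℝ), Continuous J → (∀ z, 0 < J z) → Integrable J →
      ∃ c : ℝ, 0 < c ∧ ∀ t, 0 ≤ t → ∀ x ∈ core, c ≤ ∫ y in Set.Ioi (h t), J (x - y) := by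
    intro J hJc hJpos hJint
    obtain ⟨z0, hz0mem, hz0min⟩ := (isCompact_Icc (a := -(4*R+1)) (b := (0:ℝ))).exists_isMinOn
      ⟨0, by constructor <;> linarith⟩ hJc.continuousOn
    refine ⟨J z0, hJpos z0, ?_⟩
    intro t ht x hx
    have hhtub := hhub t ht
    have hhtlb := (hbounds t ht).2
    have hJxint : Integrable (fun y => J (x - y)) := (integrable_comp_sub_left J x).mpr hJint
    have hIccIoi : Set.Icc (h t + 2*R) (h t + 2*R + 1) ⊆ Set.Ioi (h t) := by
      intro y hy
      have := hy.1
      simp only [Set.mem_Ioi]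
      linarith
    have hstep1 : ∫ y in Set.Icc (h t + 2*R) (h t + 2*R + 1), J (x - y)
        ≤ ∫ y in Set.Ioi (h t), J (x - y) := by
      apply setIntegral_mono_set (hJxint.integrableOn)
      · filter_upwards with y using (hJpos _).le
      · exact Filter.Eventually.of_forall hIccIoi
    have hstep2 : J z0 * 1 ≤ ∫ y in Set.Icc (h t + 2*R) (h t + 2*R + 1), J (x - y) := by
      have hconstint : IntegrableOn (fun _ => J z0) (Set.Icc (h t + 2*R) (h t + 2*R + 1)) volume := by
        refine integrableOn_const ?_
        rw [Real.volume_Icc]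
        exact ENNReal.ofReal_ne_top
      have hmono := setIntegral_mono_on hconstint (hJxint.integrableOn) measurableSet_Icc
        (fun y hy => by
          apply hz0min
          have hy1 := hy.1
          have hy2 := hy.2
          have hx1 := hx.1
          have hx2 := hx.2
          constructor
          · show -(4*R+1) ≤ x - y; linarith
          · show x - y ≤ 0; linarith)
      calc J z0 * 1 = ∫ _ in Set.Icc (h t + 2*R) (h t + 2*R + 1), J z0 := by
            rw [setIntegral_const, Real.volume_real_Icc]
            rw [show h t + 2*R + 1 - (h t + 2*R) = 1 by ring]
            simp
        _ ≤ _ := hmono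
    linarith
  obtain ⟨c1J, hc1Jpos, hc1J⟩ := htail J1 hJ1.1 hJ1pos hJ1.2.2.2.2.1
  obtain ⟨c2J, hc2Jpos, hc2J⟩ := htail J2 hJ2.1 hJ2pos hJ2.2.2.2.2.1
  -- lower bound for the right fluxes in terms of the core masses
  have hfluxlow : ∀ (J : ℝ → ℝ) (w : ℝ → ℝ → ℝ) (v : ℝ × ℝ → ℝ) (c : ℝ), Continuous J →
      (∀ z, 0 < J z) → Integrable J → ((∫ z : ℝ, J z) = 1) →
      ContinuousOn (Function.uncurry w) {p : ℝ × ℝ | 0 ≤ p.1 ∧ g p.1 ≤ p.2 ∧ p.2 ≤ h p.1} →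
      (∀ t x, 0 ≤ t → 0 ≤ w t x) →
      (∀ t x, 0 ≤ t → x ∈ core → v (t, x) = w t x) →
      (0 < c) → (∀ t, 0 ≤ t → ∀ x ∈ core, c ≤ ∫ y in Set.Ioi (h t), J (x - y)) →
      ∀ t, 0 ≤ t → c * (∫ x in core, v (t, x)) ≤ fluxR J (w t) (g t) (h t) := by
    intro J w v c hJc hJpos hJint hJi1 hwc hwnn hveq hcpos hctail t ht
    have hght := hglh t ht
    set T : ℝ → ℝ := fun x => ∫ y in Set.Ioi (h t), J (x - y) with hTdef
    have hTnn : ∀ x, 0 ≤ T x :=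
      fun x => setIntegral_nonneg measurableSet_Ioi (fun y _ => (hJpos _).le)
    have hTle1 : ∀ x, T x ≤ 1 :=
      fun x => kernel_tail_le_one (fun z => (hJpos z).le) hJint hJi1 _ x
    have hTmeas : StronglyMeasurable T := by
      show StronglyMeasurable fun x => ∫ y in Set.Ioi (h t), J (x - y)
      exact StronglyMeasurable.integral_prod_right' (f := fun p : ℝ × ℝ => J (p.1 - p.2))
        ((hJc.comp (continuous_fst.sub continuous_snd)).stronglyMeasurable)
    have hwslice : ContinuousOn (fun x => w t x) (Set.Icc (g t) (h t)) :=
      hwc.comp (Continuous.continuousOn (continuous_const.prodMk continuous_id))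
        (fun y hy => ⟨ht, hy.1, hy.2⟩)
    have hwint : IntegrableOn (fun x => w t x) (Set.Icc (g t) (h t)) volume :=
      hwslice.integrableOn_Icc
    have hprodint : IntegrableOn (fun x => T x * w t x) (Set.Ioc (g t) (h t)) volume := by
      apply Integrable.bdd_mul (c := 1) (hwint.mono_set Set.Ioc_subset_Icc_self)
        (hTmeas.aestronglyMeasurable)
      exact Filter.Eventually.of_forall (fun x => by rw [Real.norm_eq_abs, abs_of_nonneg (hTnn x)]; exact hTle1 x)
    have hfluxeq : fluxR J (w t) (g t) (h t) = ∫ x in Set.Ioc (g t) (h t), T x * w t x := by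
      rw [fluxR, intervalIntegral.integral_of_le hght]
      apply setIntegral_congr_fun measurableSet_Ioc
      intro x _
      exact integral_mul_const _ _
    have hcoresub : core ⊆ Set.Ioc (g t) (h t) := by
      intro x hx
      have hb1' := (hbounds t ht).1
      have hb2' := (hbounds t ht).2
      have hx1 := hx.1
      have hx2 := hx.2
      constructor
      · show g t < x; linarith
      · show x ≤ h t; linarith
    have hstep1 : ∫ x in core, T x * w t x ≤ ∫ x in Set.Ioc (g t) (h t), T x * w t x := by
      apply setIntegral_mono_set hprodint
      · filter_upwards with x using mul_nonneg (hTnn x) (hwnn t x ht)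
      · exact Filter.Eventually.of_forall hcoresub
    have hstep2 : ∫ x in core, c * w t x ≤ ∫ x in core, T x * w t x := by
      apply setIntegral_mono_on
      · exact ((hwint.mono_set (hcoresub.trans Set.Ioc_subset_Icc_self)).const_mul c)
      · exact hprodint.mono_set hcoresub
      · exact hcoremeas
      · intro x hx
        exact mul_le_mul_of_nonneg_right (hctail t ht x hx) (hwnn t x ht)
    have hstep3 : c * (∫ x in core, v (t, x)) = ∫ x in core, c * w t x := by
      rw [← integral_const_mul]
      apply setIntegral_congr_fun hcoremeas
      intro x hx
      show c * v (t, x) = c * w t x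
      rw [hveq t x ht hx]
    linarith
  have hflux1 : ∀ t, 0 ≤ t → c1J * E1 t ≤ fluxR J1 (u1 t) (g t) (h t) :=
    hfluxlow J1 u1 v1 c1J hJ1.1 hJ1pos hJ1.2.2.2.2.1 hJ1.2.2.2.2.2.1 hsol.cont1
      (fun t x ht => (hnn t x ht).1) hv1eq hc1Jpos hc1J
  have hflux2 : ∀ t, 0 ≤ t → c2J * E2 t ≤ fluxR J2 (u2 t) (g t) (h t) :=
    hfluxlow J2 u2 v2 c2J hJ2.1 hJ2pos hJ2.2.2.2.2.1 hJ2.2.2.2.2.2.1 hsol.cont2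
      (fun t x ht => (hnn t x ht).2) hv2eq hc2Jpos hc2J
  -- flux nonnegativity
  have hfluxRnn : ∀ (J : ℝ → ℝ) (w : ℝ → ℝ), (∀ z, 0 ≤ J z) → (∀ x, 0 ≤ w x) →
      ∀ gt ht : ℝ, gt ≤ ht → 0 ≤ fluxR J w gt ht := by
    intro J w hJ hw gt ht hle
    apply intervalIntegral.integral_nonneg hle
    intro x _
    apply setIntegral_nonneg measurableSet_Ioi
    intro y _
    exact mul_nonneg (hJ _) (hw _)
  -- time-integral bounds for the core masses
  have hPhiBound : ∀ (E : ℝ → ℝ) (c : ℝ), Continuous E → (∀ τ, 0 ≤ E τ) → (0 < c) →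
      (∀ t, 0 ≤ t → c * E t ≤ μ1 * fluxR J1 (u1 t) (g t) (h t) + μ2 * fluxR J2 (u2 t) (g t) (h t)) →
      ∀ T, 0 ≤ T → (∫ s in (0:ℝ)..T, E s) ≤ (R - h0) / c := by
    intro E c hEc hEnn hcpos hflux T hT
    set Φ : ℝ → ℝ := fun T => ∫ s in (0:ℝ)..T, E s with hΦdef
    have hΦd : ∀ T : ℝ, HasDerivAt Φ (E T) T := fun T =>
      intervalIntegral.integral_hasDerivAt_right (hEc.intervalIntegrable _ _)
        (hEc.stronglyMeasurableAtFilter _ _) hEc.continuousAt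
    have hΦc : Continuous Φ := by
      rw [continuous_iff_continuousAt]
      intro τ
      exact (hΦd τ).continuousAt
    have hρmono : MonotoneOn (fun T => h T - c * Φ T) (Set.Ici 0) := by
      apply monoOn_Ici_of_hasDerivAt
        (hhcont.sub ((continuous_const.mul hΦc).continuousOn))
      · intro t ht
        exact ((hsol.fbh t ht.le).hasDerivAt (Ici_mem_nhds ht)).sub ((hΦd t).const_mul c)
      · intro t ht
        have := hflux t ht.le
        linarith
    have hval := hρmono Set.self_mem_Ici hT hT
    simp only at hval
    have hΦ0 : Φ 0 = 0 := intervalIntegral.integral_same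
    rw [hΦ0, mul_zero, sub_zero] at hval
    have hhT := hhub T hT
    have hh0' : h 0 = h0 := hsol.h_zero
    rw [hh0'] at hval
    rw [le_div_iff₀ hcpos]
    nlinarith [hval, hhT]
  have hB1 : ∀ T, 0 ≤ T → (∫ s in (0:ℝ)..T, E1 s) ≤ (R - h0) / (μ1 * c1J) := by
    apply hPhiBound E1 (μ1 * c1J) hE1c hE1nn (mul_pos hμ1 hc1Jpos)
    intro t ht
    have hf1 := hflux1 t ht
    have hf2nn := hfluxRnn J2 (u2 t) hJ2.2.1 (fun x => (hnn t x ht).2) (g t) (h t) (hglh t ht)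
    nlinarith [mul_le_mul_of_nonneg_left hf1 hμ1.le, mul_nonneg hμ2.le hf2nn]
  have hB2 : ∀ T, 0 ≤ T → (∫ s in (0:ℝ)..T, E2 s) ≤ (R - h0) / (μ2 * c2J) := by
    apply hPhiBound E2 (μ2 * c2J) hE2c hE2nn (mul_pos hμ2 hc2Jpos)
    intro t ht
    have hf2 := hflux2 t ht
    have hf1nn := hfluxRnn J1 (u1 t) hJ1.2.1 (fun x => (hnn t x ht).1) (g t) (h t) (hglh t ht)
    nlinarith [mul_le_mul_of_nonneg_left hf2 hμ2.le, mul_nonneg hμ1.le hf1nn]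
  -- lintegral version of the time-integral bound
  have hlint : ∀ (E : ℝ → ℝ) (Bv : ℝ), Continuous E → (∀ τ, 0 ≤ E τ) →
      (∀ T, 0 ≤ T → (∫ s in (0:ℝ)..T, E s) ≤ Bv) →
      (∫⁻ τ in Set.Ici (0:ℝ), ENNReal.ofReal (E τ)) ≤ ENNReal.ofReal Bv := by
    intro E Bv hEc hEnn hbd
    set f : ℝ → ENNReal := fun τ => ENNReal.ofReal (E τ) with hfdef
    have hfmeas : Measurable f := ENNReal.measurable_ofReal.comp hEc.measurable
    set fn : ℕ → ℝ → ENNReal := fun n => (Set.Icc (0:ℝ) n).indicator f with hfndef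
    have hfnmeas : ∀ n, Measurable (fn n) := fun n => hfmeas.indicator measurableSet_Icc
    have hfnmono : Monotone fn := by
      intro n m hnm τ
      apply Set.indicator_le_indicator_of_subset
      · exact Set.Icc_subset_Icc le_rfl (by exact_mod_cast hnm)
      · intro x; exact zero_le
    have hsup : ∀ τ, (⨆ n, fn n τ) = (Set.Ici (0:ℝ)).indicator f τ := by
      intro τ
      by_cases hτ : 0 ≤ τ
      · rw [Set.indicator_of_mem (Set.mem_Ici.mpr hτ)]
        apply le_antisymm
        · apply iSup_le
          intro n
          by_cases hmem : τ ∈ Set.Icc (0:ℝ) n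
          · rw [hfndef]; simp only; rw [Set.indicator_of_mem hmem]
          · rw [hfndef]; simp only; rw [Set.indicator_of_notMem hmem]; exact zero_le
        · obtain ⟨n, hn⟩ := exists_nat_ge τ
          refine le_trans ?_ (le_iSup _ n)
          rw [hfndef]; simp only; rw [Set.indicator_of_mem (Set.mem_Icc.mpr ⟨hτ, hn⟩)]
      · rw [Set.indicator_of_notMem (fun hmem => hτ (Set.mem_Ici.mp hmem))]
        have hzero : ∀ n, fn n τ = 0 := by
          intro n
          rw [hfndef]; simp only
          exact Set.indicator_of_notMem (fun hmem => hτ hmem.1) _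
        simp [hzero]
    have h1 : (∫⁻ τ in Set.Ici (0:ℝ), f τ) = ∫⁻ τ, (Set.Ici (0:ℝ)).indicator f τ :=
      (lintegral_indicator measurableSet_Ici f).symm
    rw [h1]
    have h2 : (∫⁻ τ, (Set.Ici (0:ℝ)).indicator f τ) = ⨆ n, ∫⁻ τ, fn n τ := by
      rw [← lintegral_iSup hfnmeas hfnmono]
      apply lintegral_congr
      intro τ
      rw [hsup τ]
    rw [h2]
    apply iSup_le
    intro n
    rw [hfndef]
    simp only
    rw [lintegral_indicator measurableSet_Icc]
    have hInt : IntegrableOn E (Set.Icc (0:ℝ) n) volume := hEc.continuousOn.integrableOn_Icc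
    rw [hfdef]
    simp only
    rw [← ofReal_integral_eq_lintegral_ofReal hInt
      (Filter.Eventually.of_forall fun τ => hEnn τ)]
    apply ENNReal.ofReal_le_ofReal
    have heq : (∫ τ in Set.Icc (0:ℝ) n, E τ) = ∫ s in (0:ℝ)..n, E s := by
      rw [intervalIntegral.integral_of_le (by positivity : (0:ℝ) ≤ (n:ℝ))]
      rw [integral_Icc_eq_integral_Ioc]
    rw [heq]
    exact hbd n (Nat.cast_nonneg n)
  -- Tonelli swap
  have hswap : ∀ (v : ℝ × ℝ → ℝ) (Bv : ℝ), Continuous v → (∀ p, 0 ≤ v p) →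
      ((∫⁻ τ in Set.Ici (0:ℝ), ENNReal.ofReal (∫ x in core, v (τ, x))) ≤ ENNReal.ofReal Bv) →
      (∫⁻ x in core, ∫⁻ τ in Set.Ici (0:ℝ), ENNReal.ofReal (v (τ, x))) ≤ ENNReal.ofReal Bv := by
    intro v Bv hvc hvnn hbound
    have hswap1 : (∫⁻ x in core, ∫⁻ τ in Set.Ici (0:ℝ), ENNReal.ofReal (v (τ, x)))
        = ∫⁻ τ in Set.Ici (0:ℝ), ∫⁻ x in core, ENNReal.ofReal (v (τ, x)) := by
      apply lintegral_lintegral_swap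
      apply Measurable.aemeasurable
      exact ENNReal.measurable_ofReal.comp
        (hvc.measurable.comp (measurable_snd.prodMk measurable_fst))
    rw [hswap1]
    have hinner : ∀ τ : ℝ, (∫⁻ x in core, ENNReal.ofReal (v (τ, x)))
        = ENNReal.ofReal (∫ x in core, v (τ, x)) := by
      intro τ
      rw [← ofReal_integral_eq_lintegral_ofReal]
      · exact (hvc.comp (continuous_const.prodMk continuous_id)).integrableOn_Icc
      · exact Filter.Eventually.of_forall fun x => hvnn _
    rw [lintegral_congr hinner]
    exact hbound
  have hswapped1 : (∫⁻ x in core, ∫⁻ τ in Set.Ici (0:ℝ), ENNReal.ofReal (v1 (τ, x)))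
      ≤ ENNReal.ofReal ((R - h0) / (μ1 * c1J)) :=
    hswap v1 _ hv1c hv1nn (hlint E1 _ hE1c hE1nn hB1)
  have hswapped2 : (∫⁻ x in core, ∫⁻ τ in Set.Ici (0:ℝ), ENNReal.ofReal (v2 (τ, x)))
      ≤ ENNReal.ofReal ((R - h0) / (μ2 * c2J)) :=
    hswap v2 _ hv2c hv2nn (hlint E2 _ hE2c hE2nn hB2)
  -- a.e. finiteness of the time integrals
  have hfin : ∀ (v : ℝ × ℝ → ℝ) (Bv : ℝ), Continuous v →
      ((∫⁻ x in core, ∫⁻ τ in Set.Ici (0:ℝ), ENNReal.ofReal (v (τ, x))) ≤ ENNReal.ofReal Bv) →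
      ∀ᵐ x ∂(volume.restrict core), (∫⁻ τ in Set.Ici (0:ℝ), ENNReal.ofReal (v (τ, x))) < ⊤ := by
    intro v Bv hvc hb
    apply ae_lt_top
    · exact Measurable.lintegral_prod_right (f := fun x τ => ENNReal.ofReal (v (τ, x)))
        (ENNReal.measurable_ofReal.comp (hvc.measurable.comp (measurable_snd.prodMk measurable_fst)))
    · exact ne_top_of_le_ne_top ENNReal.ofReal_ne_top hb
  -- choose a good point x₀ in the core
  have hnebot : (ae (volume.restrict core)).NeBot := by
    rw [ae_neBot, Ne, Measure.restrict_eq_zero, hcorevol]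
    simp only [ENNReal.ofReal_eq_zero, not_le]
    exact hh0
  obtain ⟨x₀, hx₀f1, hx₀f2, hx₀mem⟩ :=
    ((hfin v1 _ hv1c hswapped1).and ((hfin v2 _ hv2c hswapped2).and
      (ae_restrict_mem hcoremeas))).exists
  have hx₀core : x₀ ∈ core := hx₀mem
  have hx₀Ioo : ∀ t, 0 ≤ t → x₀ ∈ Set.Ioo (g t) (h t) := by
    intro t ht
    have hb1' := (hbounds t ht).1
    have hb2' := (hbounds t ht).2
    have h1 := hx₀core.1
    have h2 := hx₀core.2
    constructor
    · show g t < x₀; linarith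
    · show x₀ < h t; linarith
  have hx₀Icc0 : x₀ ∈ Set.Icc (-h0) h0 :=
    ⟨by linarith [hx₀core.1], by linarith [hx₀core.2]⟩
  have hx₀Ioo0 : x₀ ∈ Set.Ioo (-h0) h0 :=
    ⟨by linarith [hx₀core.1], by linarith [hx₀core.2]⟩
  -- time-integral bounds along the slice at x₀
  set C1 : ℝ := (∫⁻ τ in Set.Ici (0:ℝ), ENNReal.ofReal (v1 (τ, x₀))).toReal with hC1def
  set C2 : ℝ := (∫⁻ τ in Set.Ici (0:ℝ), ENNReal.ofReal (v2 (τ, x₀))).toReal with hC2def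
  have hC1nn : 0 ≤ C1 := ENNReal.toReal_nonneg
  have hC2nn : 0 ≤ C2 := ENNReal.toReal_nonneg
  have hCbound : ∀ (v : ℝ × ℝ → ℝ), Continuous v → (∀ p, 0 ≤ v p) →
      (∫⁻ τ in Set.Ici (0:ℝ), ENNReal.ofReal (v (τ, x₀))) < ⊤ →
      ∀ T, 0 ≤ T → (∫ s in (0:ℝ)..T, v (s, x₀))
        ≤ (∫⁻ τ in Set.Ici (0:ℝ), ENNReal.ofReal (v (τ, x₀))).toReal := by
    intro v hvc hvnn hlt T hT
    have hint : IntegrableOn (fun s => v (s, x₀)) (Set.Ioc 0 T) volume :=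
      ((hvc.comp (continuous_id.prodMk continuous_const)).integrableOn_Ioc)
    rw [intervalIntegral.integral_of_le hT]
    rw [← ENNReal.ofReal_le_iff_le_toReal hlt.ne]
    rw [ofReal_integral_eq_lintegral_ofReal hint
      (Filter.Eventually.of_forall fun s => hvnn _)]
    apply lintegral_mono_set
    intro s hs
    exact le_of_lt hs.1
  have hslice1c : Continuous (fun s : ℝ => v1 (s, x₀)) :=
    hv1c.comp (continuous_id.prodMk continuous_const)
  have hslice2c : Continuous (fun s : ℝ => v2 (s, x₀)) :=
    hv2c.comp (continuous_id.prodMk continuous_const)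
  have hI1 : ∀ T, 0 ≤ T → (∫ s in (0:ℝ)..T, v1 (s, x₀)) ≤ C1 :=
    fun T hT => hCbound v1 hv1c hv1nn hx₀f1 T hT
  have hI2 : ∀ T, 0 ≤ T → (∫ s in (0:ℝ)..T, v2 (s, x₀)) ≤ C2 :=
    fun T hT => hCbound v2 hv2c hv2nn hx₀f2 T hT
  -- The Gronwall persistence argument, specialized to the species selected by `had`
  -- We set up the data for the chosen species uniformly.
  obtain ⟨ψ, βf, Cψ, Cβ, hψ1c, hβc, hψpde, hψ0pos, hβsplit, hβnnC⟩ :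
      ∃ (ψ βf : ℝ → ℝ) (Cψ Cβ : ℝ), Continuous ψ ∧ Continuous βf ∧
        (∀ τ : ℝ, 0 < τ → ∃ D : ℝ, HasDerivAt ψ D τ ∧ -(βf τ) * ψ τ ≤ D) ∧
        (0 < ψ 0) ∧ (∀ T, 0 ≤ T → (∫ s in (0:ℝ)..T, βf s) ≤ Cβ) ∧
        (∀ T, 0 ≤ T → (∫ s in (0:ℝ)..T, ψ s) ≤ Cψ) := by
    rcases had with hda1 | hda2
    · -- species 1 persists
      refine ⟨fun s => v1 (s, x₀), fun s => b1 * v1 (s, x₀) + c1 * v2 (s, x₀),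
        C1, b1 * C1 + c1 * C2, hslice1c,
        (continuous_const.mul hslice1c).add (continuous_const.mul hslice2c), ?_, ?_, ?_, ?_⟩
      · intro τ hτ
        have hpde := hsol.pde1 τ x₀ hτ (hx₀Ioo τ hτ.le)
        have hev : (fun s => v1 (s, x₀)) =ᶠ[nhds τ] (fun s => u1 s x₀) := by
          filter_upwards [eventually_gt_nhds hτ] with s hs
          exact hv1eq s x₀ hs.le hx₀core
        refine ⟨_, hpde.congr_of_eventuallyEq hev, ?_⟩
        have hInn : 0 ≤ ∫ y in (g τ)..(h τ), J1 (x₀ - y) * u1 τ y :=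
          intervalIntegral.integral_nonneg (hglh τ hτ.le)
            (fun y _ => mul_nonneg (hJ1pos _).le (hnn τ y hτ.le).1)
        have he1 := hv1eq τ x₀ hτ.le hx₀core
        have he2 := hv2eq τ x₀ hτ.le hx₀core
        show -(b1 * v1 (τ, x₀) + c1 * v2 (τ, x₀)) * v1 (τ, x₀)
          ≤ d1 * (∫ y in (g τ)..(h τ), J1 (x₀ - y) * u1 τ y) - d1 * u1 τ x₀
            + lvF1 a1 b1 c1 τ x₀ (u1 τ x₀) (u2 τ x₀)
        rw [he1, he2]
        show -(b1 * u1 τ x₀ + c1 * u2 τ x₀) * u1 τ x₀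
          ≤ d1 * (∫ y in (g τ)..(h τ), J1 (x₀ - y) * u1 τ y) - d1 * u1 τ x₀
            + u1 τ x₀ * (a1 - b1 * u1 τ x₀ - c1 * u2 τ x₀)
        nlinarith [mul_nonneg (sub_nonneg.mpr hda1) (hnn τ x₀ hτ.le).1,
          mul_nonneg hd1.le hInn]
      · show 0 < v1 (0, x₀)
        rw [hv1eq 0 x₀ le_rfl hx₀core, hsol.init1 x₀ hx₀Icc0]
        exact hu10.2.2.2 x₀ hx₀Ioo0
      · intro T hT
        have hsplit : (∫ s in (0:ℝ)..T, (b1 * v1 (s, x₀) + c1 * v2 (s, x₀)))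
            = b1 * (∫ s in (0:ℝ)..T, v1 (s, x₀)) + c1 * (∫ s in (0:ℝ)..T, v2 (s, x₀)) := by
          rw [← intervalIntegral.integral_const_mul, ← intervalIntegral.integral_const_mul,
            ← intervalIntegral.integral_add (f := fun s => b1 * v1 (s, x₀)) (g := fun s => c1 * v2 (s, x₀))
              ((continuous_const.mul hslice1c).intervalIntegrable _ _)
              ((continuous_const.mul hslice2c).intervalIntegrable _ _)]
        rw [hsplit]
        have h1 := hI1 T hT
        have h2 := hI2 T hT
        nlinarith [hb1.le, hc1.le]
      · exact hI1
    · -- species 2 persists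
      have hF2form : ∃ e : ℝ, 0 ≤ e + c2 ∧
          F2 = (fun _ _ w1 w2 => w2 * (a2 - b2 * w2 + e * w1)) := by
        rcases hmodel with rfl | rfl
        · refine ⟨-c2, by linarith, ?_⟩
          funext t x w1 w2
          show w2 * (a2 - b2 * w2 - c2 * w1) = _
          ring
        · refine ⟨c2, by linarith, ?_⟩
          funext t x w1 w2
          show w2 * (a2 - b2 * w2 + c2 * w1) = _
          ring
      obtain ⟨e, hec2, hF2⟩ := hF2form
      refine ⟨fun s => v2 (s, x₀), fun s => b2 * v2 (s, x₀) + c2 * v1 (s, x₀),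
        C2, b2 * C2 + c2 * C1, hslice2c,
        (continuous_const.mul hslice2c).add (continuous_const.mul hslice1c), ?_, ?_, ?_, ?_⟩
      · intro τ hτ
        have hpde := hsol.pde2 τ x₀ hτ (hx₀Ioo τ hτ.le)
        rw [hF2] at hpde
        have hev : (fun s => v2 (s, x₀)) =ᶠ[nhds τ] (fun s => u2 s x₀) := by
          filter_upwards [eventually_gt_nhds hτ] with s hs
          exact hv2eq s x₀ hs.le hx₀core
        refine ⟨_, hpde.congr_of_eventuallyEq hev, ?_⟩
        have hInn : 0 ≤ ∫ y in (g τ)..(h τ), J2 (x₀ - y) * u2 τ y :=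
          intervalIntegral.integral_nonneg (hglh τ hτ.le)
            (fun y _ => mul_nonneg (hJ2pos _).le (hnn τ y hτ.le).2)
        have he1 := hv1eq τ x₀ hτ.le hx₀core
        have he2 := hv2eq τ x₀ hτ.le hx₀core
        show -(b2 * v2 (τ, x₀) + c2 * v1 (τ, x₀)) * v2 (τ, x₀)
          ≤ d2 * (∫ y in (g τ)..(h τ), J2 (x₀ - y) * u2 τ y) - d2 * u2 τ x₀
            + u2 τ x₀ * (a2 - b2 * u2 τ x₀ + e * u1 τ x₀)
        rw [he1, he2]
        nlinarith [mul_nonneg (sub_nonneg.mpr hda2) (hnn τ x₀ hτ.le).2,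
          mul_nonneg hd2.le hInn,
          mul_nonneg (mul_nonneg hec2 (hnn τ x₀ hτ.le).1) (hnn τ x₀ hτ.le).2]
      · show 0 < v2 (0, x₀)
        rw [hv2eq 0 x₀ le_rfl hx₀core, hsol.init2 x₀ hx₀Icc0]
        exact hu20.2.2.2 x₀ hx₀Ioo0
      · intro T hT
        have hsplit : (∫ s in (0:ℝ)..T, (b2 * v2 (s, x₀) + c2 * v1 (s, x₀)))
            = b2 * (∫ s in (0:ℝ)..T, v2 (s, x₀)) + c2 * (∫ s in (0:ℝ)..T, v1 (s, x₀)) := by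
          rw [← intervalIntegral.integral_const_mul, ← intervalIntegral.integral_const_mul,
            ← intervalIntegral.integral_add (f := fun s => b2 * v2 (s, x₀)) (g := fun s => c2 * v1 (s, x₀))
              ((continuous_const.mul hslice2c).intervalIntegrable _ _)
              ((continuous_const.mul hslice1c).intervalIntegrable _ _)]
        rw [hsplit]
        have h1 := hI1 T hT
        have h2 := hI2 T hT
        nlinarith [hb2.le, hc2.le]
      · exact hI2
  -- run the Gronwall estimate
  have hgron := gronwall_persist hψ1c hβc hψpde
  set ε0 : ℝ := ψ 0 * Real.exp (-Cβ) with hε0def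
  have hε0pos : 0 < ε0 := mul_pos hψ0pos (Real.exp_pos _)
  have hψlb : ∀ τ, 0 ≤ τ → ε0 ≤ ψ τ := by
    intro τ hτ
    refine le_trans ?_ (hgron τ hτ)
    rw [hε0def]
    apply mul_le_mul_of_nonneg_left _ hψ0pos.le
    apply Real.exp_le_exp.mpr
    simp only [neg_le_neg_iff]
    exact hβsplit τ hτ
  set Tbig : ℝ := (Cψ + 1) / ε0 with hTbigdef
  have hCψnn : 0 ≤ Cψ :=
    le_trans (le_of_eq intervalIntegral.integral_same.symm) (hβnnC 0 le_rfl)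
  have hTbig0 : 0 ≤ Tbig := div_nonneg (by linarith) hε0pos.le
  have hlow : ε0 * Tbig ≤ ∫ s in (0:ℝ)..Tbig, ψ s := by
    have hmono := intervalIntegral.integral_mono_on hTbig0
      (intervalIntegrable_const (μ := volume) (c := ε0)) (hψ1c.intervalIntegrable _ _)
      (fun s hs => hψlb s hs.1)
    rw [intervalIntegral.integral_const, smul_eq_mul, sub_zero] at hmono
    linarith [hmono]
  have hup := hβnnC Tbig hTbig0
  have hTbigval : ε0 * Tbig = Cψ + 1 := by
    rw [hTbigdef]
    field_simp
  rw [hTbigval] at hlow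
  linarith
end
end

section
/- Let J1, J2 satisfy condition (J) and let β1, β2 > 0 be constants. Suppose g, h ∈ C¹([0,∞)) with g(0) < h(0), g'(t) ≤ 0 and h'(t) ≥ 0 for all t, and suppose w1, w2 and their time derivatives ∂t w1, ∂t w2 are continuous and bounded on D := {(t,x): t > 0, g(t) < x < h(t)}. If for all t ≥ 0: h'(t) = Σ_{i=1}^{2} β_i ∫_{g(t)}^{h(t)} ∫_{h(t)}^{∞} J_i(x−y) wi(t,x) dy dx and g'(t) = −Σ_{i=1}^{2} β_i ∫_{g(t)}^{h(t)} ∫_{−∞}^{g(t)} J_i(x−y) wi(t,x) dy dx, and if lim_{t→∞} h(t) − lim_{t→∞} g(t) < ∞, then lim_{t→∞} g'(t) = lim_{t→∞} h'(t) = 0. -/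
open MeasureTheory Filter

noncomputable section

namespace BSTZ

def FF (J : ℝ → ℝ) (a : ℝ) : ℝ := ∫ z in Set.Iio a, J z
def GG (J : ℝ → ℝ) (a : ℝ) : ℝ := ∫ z in Set.Ioi a, J z

lemma sub_integral_Ioi (J : ℝ → ℝ) (x b : ℝ) :
    ∫ y in Set.Ioi b, J (x - y) = FF J (x - b) := by
  have hmp : MeasurePreserving (fun t : ℝ => x - t) volume volume :=
    Measure.measurePreserving_sub_left volume x
  have hemb : MeasurableEmbedding (fun t : ℝ => x - t) :=
    (MeasurableEquiv.subLeft x).measurableEmbedding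
  have h := hmp.setIntegral_preimage_emb hemb J (Set.Iio (x - b))
  have hpre : (fun t : ℝ => x - t) ⁻¹' Set.Iio (x - b) = Set.Ioi b := by
    ext t; simp only [Set.mem_preimage, Set.mem_Iio, Set.mem_Ioi]
    constructor <;> intro h <;> linarith
  rw [hpre] at h
  exact h

lemma sub_integral_Iio (J : ℝ → ℝ) (x b : ℝ) :
    ∫ y in Set.Iio b, J (x - y) = GG J (x - b) := by
  have hmp : MeasurePreserving (fun t : ℝ => x - t) volume volume :=
    Measure.measurePreserving_sub_left volume x
  have hemb : MeasurableEmbedding (fun t : ℝ => x - t) :=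
    (MeasurableEquiv.subLeft x).measurableEmbedding
  have h := hmp.setIntegral_preimage_emb hemb J (Set.Ioi (x - b))
  have hpre : (fun t : ℝ => x - t) ⁻¹' Set.Ioi (x - b) = Set.Iio b := by
    ext t; simp only [Set.mem_preimage, Set.mem_Iio, Set.mem_Ioi]
    constructor <;> intro h <;> linarith
  rw [hpre] at h
  exact h

variable {J : ℝ → ℝ} {C : ℝ}

lemma FF_nonneg (hnn : ∀ x, 0 ≤ J x) (a : ℝ) : 0 ≤ FF J a :=
  setIntegral_nonneg measurableSet_Iio fun x _ => hnn x

lemma GG_nonneg (hnn : ∀ x, 0 ≤ J x) (a : ℝ) : 0 ≤ GG J a :=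
  setIntegral_nonneg measurableSet_Ioi fun x _ => hnn x

lemma FF_le_one (hnn : ∀ x, 0 ≤ J x) (hint : Integrable J) (hone : (∫ x : ℝ, J x) = 1)
    (a : ℝ) : FF J a ≤ 1 := by
  rw [← hone]
  exact setIntegral_le_integral hint (Filter.Eventually.of_forall hnn)

lemma GG_le_one (hnn : ∀ x, 0 ≤ J x) (hint : Integrable J) (hone : (∫ x : ℝ, J x) = 1)
    (a : ℝ) : GG J a ≤ 1 := by
  rw [← hone]
  exact setIntegral_le_integral hint (Filter.Eventually.of_forall hnn)

lemma setInt_Ico_bound (hnn : ∀ x, 0 ≤ J x) (hC : ∀ x, J x ≤ C)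
    {a b : ℝ} (hab : a ≤ b) :
    0 ≤ (∫ z in Set.Ico a b, J z) ∧ (∫ z in Set.Ico a b, J z) ≤ C * (b - a) := by
  constructor
  · exact setIntegral_nonneg measurableSet_Ico fun x _ => hnn x
  · have h := norm_setIntegral_le_of_norm_le_const_ae' (C := C)
      (by rw [Real.volume_Ico]; exact ENNReal.ofReal_lt_top)
      (Filter.Eventually.of_forall fun x (_ : x ∈ Set.Ico a b) => by
        rw [Real.norm_eq_abs, abs_of_nonneg (hnn x)]; exact hC x)
    rw [Real.volume_real_Ico_of_le hab] at h
    calc (∫ z in Set.Ico a b, J z) ≤ ‖∫ z in Set.Ico a b, J z‖ := by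
          rw [Real.norm_eq_abs]; exact le_abs_self _
    _ ≤ C * (b - a) := h

lemma setInt_Ioc_bound (hnn : ∀ x, 0 ≤ J x) (hC : ∀ x, J x ≤ C)
    {a b : ℝ} (hab : a ≤ b) :
    0 ≤ (∫ z in Set.Ioc a b, J z) ∧ (∫ z in Set.Ioc a b, J z) ≤ C * (b - a) := by
  constructor
  · exact setIntegral_nonneg measurableSet_Ioc fun x _ => hnn x
  · have h := norm_setIntegral_le_of_norm_le_const_ae' (C := C)
      (by rw [Real.volume_Ioc]; exact ENNReal.ofReal_lt_top)
      (Filter.Eventually.of_forall fun x (_ : x ∈ Set.Ioc a b) => by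
        rw [Real.norm_eq_abs, abs_of_nonneg (hnn x)]; exact hC x)
    rw [Real.volume_real_Ioc_of_le hab] at h
    calc (∫ z in Set.Ioc a b, J z) ≤ ‖∫ z in Set.Ioc a b, J z‖ := by
          rw [Real.norm_eq_abs]; exact le_abs_self _
    _ ≤ C * (b - a) := h

lemma FF_diff (hnn : ∀ x, 0 ≤ J x) (hint : Integrable J) (hC : ∀ x, J x ≤ C)
    {a b : ℝ} (hab : a ≤ b) :
    0 ≤ FF J b - FF J a ∧ FF J b - FF J a ≤ C * (b - a) := by
  have hsplit : FF J b = FF J a + ∫ z in Set.Ico a b, J z := by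
    rw [FF, FF, ← setIntegral_union ((Set.Iio_disjoint_Ici le_rfl).mono_right
      Set.Ico_subset_Ici_self) measurableSet_Ico
      hint.integrableOn hint.integrableOn, Set.Iio_union_Ico_eq_Iio hab]
  have h := setInt_Ico_bound hnn hC hab
  constructor <;> [linarith [h.1]; linarith [h.2]]

lemma GG_diff (hnn : ∀ x, 0 ≤ J x) (hint : Integrable J) (hC : ∀ x, J x ≤ C)
    {a b : ℝ} (hab : a ≤ b) :
    0 ≤ GG J a - GG J b ∧ GG J a - GG J b ≤ C * (b - a) := by
  have hsplit : GG J a = (∫ z in Set.Ioc a b, J z) + GG J b := by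
    rw [GG, GG, ← setIntegral_union ((Set.Iic_disjoint_Ioi le_rfl).mono_left
      Set.Ioc_subset_Iic_self) measurableSet_Ioi
      hint.integrableOn hint.integrableOn, Set.Ioc_union_Ioi_eq_Ioi hab]
  have h := setInt_Ioc_bound hnn hC hab
  constructor <;> [linarith [h.1]; linarith [h.2]]

lemma FF_abs_diff (hnn : ∀ x, 0 ≤ J x) (hint : Integrable J) (hC : ∀ x, J x ≤ C)
    (a b : ℝ) : |FF J a - FF J b| ≤ C * |a - b| := by
  rcases le_total a b with hab | hab
  · have h := FF_diff hnn hint hC hab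
    rw [abs_sub_comm, abs_of_nonneg h.1, abs_sub_comm, abs_of_nonneg (by linarith)]
    exact h.2
  · have h := FF_diff hnn hint hC hab
    rw [abs_of_nonneg h.1, abs_of_nonneg (by linarith)]
    exact h.2

lemma GG_abs_diff (hnn : ∀ x, 0 ≤ J x) (hint : Integrable J) (hC : ∀ x, J x ≤ C)
    (a b : ℝ) : |GG J a - GG J b| ≤ C * |a - b| := by
  rcases le_total a b with hab | hab
  · have h := GG_diff hnn hint hC hab
    rw [abs_of_nonneg h.1, abs_sub_comm, abs_of_nonneg (by linarith)]
    exact h.2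
  · have h := GG_diff hnn hint hC hab
    rw [abs_sub_comm, abs_of_nonneg h.1, abs_of_nonneg (by linarith)]
    exact h.2

lemma FF_continuous (hnn : ∀ x, 0 ≤ J x) (hint : Integrable J) (hC : ∀ x, J x ≤ C)
    (hC0 : 0 ≤ C) : Continuous (FF J) := by
  have : LipschitzWith (Real.toNNReal C) (FF J) := by
    apply LipschitzWith.of_dist_le_mul
    intro a b
    rw [Real.dist_eq, Real.dist_eq]
    calc |FF J a - FF J b| ≤ C * |a - b| := FF_abs_diff hnn hint hC a b
    _ = (Real.toNNReal C : ℝ) * |a - b| := by rw [Real.coe_toNNReal C hC0]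
  exact this.continuous

lemma GG_continuous (hnn : ∀ x, 0 ≤ J x) (hint : Integrable J) (hC : ∀ x, J x ≤ C)
    (hC0 : 0 ≤ C) : Continuous (GG J) := by
  have : LipschitzWith (Real.toNNReal C) (GG J) := by
    apply LipschitzWith.of_dist_le_mul
    intro a b
    rw [Real.dist_eq, Real.dist_eq]
    calc |GG J a - GG J b| ≤ C * |a - b| := GG_abs_diff hnn hint hC a b
    _ = (Real.toNNReal C : ℝ) * |a - b| := by rw [Real.coe_toNNReal C hC0]
  exact this.continuous

lemma integrableOn_Qw {Q w : ℝ → ℝ} {M : ℝ} (hQc : Continuous Q) (hQ1 : ∀ x, |Q x| ≤ 1)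
    (hwm : AEStronglyMeasurable w volume) (hwb : ∀ᵐ x : ℝ, |w x| ≤ M) (a b : ℝ) :
    IntegrableOn (fun x => Q x * w x) (Set.Ioc a b) := by
  haveI : IsFiniteMeasure (volume.restrict (Set.Ioc a b)) :=
    ⟨by rw [Measure.restrict_apply_univ, Real.volume_Ioc]; exact ENNReal.ofReal_lt_top⟩
  refine ⟨(hQc.aestronglyMeasurable.mul hwm).restrict, HasFiniteIntegral.of_bounded (C := M) ?_⟩
  refine ae_restrict_of_ae (hwb.mono fun x hx => ?_)
  calc ‖Q x * w x‖ = |Q x| * |w x| := by rw [Real.norm_eq_abs, abs_mul]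
  _ ≤ 1 * M := mul_le_mul (hQ1 x) hx (abs_nonneg _) zero_le_one
  _ = M := one_mul M

lemma intervalIntegrable_Qw {Q w : ℝ → ℝ} {M : ℝ} (hQc : Continuous Q) (hQ1 : ∀ x, |Q x| ≤ 1)
    (hwm : AEStronglyMeasurable w volume) (hwb : ∀ᵐ x : ℝ, |w x| ≤ M) (a b : ℝ) :
    IntervalIntegrable (fun x => Q x * w x) volume a b :=
  ⟨integrableOn_Qw hQc hQ1 hwm hwb a b, integrableOn_Qw hQc hQ1 hwm hwb b a⟩

lemma tendsto_zero_of_control (q p r : ℝ → ℝ) (L C : ℝ) (hC : 0 < C)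
    (hq : ∀ t, (2:ℝ) ≤ t → HasDerivAt q (p t) t)
    (hp0 : ∀ t, (2:ℝ) ≤ t → 0 ≤ p t)
    (hest : ∀ t s, 2 ≤ t → t ≤ s → s ≤ t + 1 → p t - C * (s - t) - r t ≤ p s)
    (hql : Tendsto q atTop (nhds L))
    (hr : Tendsto r atTop (nhds 0)) :
    Tendsto p atTop (nhds 0) := by
  rw [Metric.tendsto_atTop]
  intro ε hε
  set δ : ℝ := min 1 (ε / (4 * C)) with hδdef
  have hδpos : 0 < δ := lt_min one_pos (div_pos hε (by linarith))
  have hδ1 : δ ≤ 1 := min_le_left _ _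
  have hδC : C * δ ≤ ε / 4 := by
    calc C * δ ≤ C * (ε / (4 * C)) := by
          exact mul_le_mul_of_nonneg_left (min_le_right _ _) hC.le
    _ = ε / 4 := by field_simp
  have hr' : ∀ᶠ t in atTop, |r t| < ε / 4 := by
    have := hr.eventually (eventually_abs_sub_lt 0 (by linarith : (0:ℝ) < ε / 4))
    simpa using this
  have hq' : ∀ᶠ t in atTop, |q t - L| < ε * δ / 16 := by
    have := hql.eventually (eventually_abs_sub_lt L
      (by positivity : (0:ℝ) < ε * δ / 16))
    simpa [abs_sub_comm] using this
  obtain ⟨N1, hN1⟩ := hr'.exists_forall_of_atTop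
  obtain ⟨N2, hN2⟩ := hq'.exists_forall_of_atTop
  refine ⟨max 2 (max N1 N2), fun t htN => ?_⟩
  have ht2 : (2:ℝ) ≤ t := le_trans (le_max_left _ _) htN
  have htN1 : N1 ≤ t := le_trans (le_trans (le_max_left _ _) (le_max_right _ _)) htN
  have htN2 : N2 ≤ t := le_trans (le_trans (le_max_right _ _) (le_max_right _ _)) htN
  rw [Real.dist_eq, sub_zero, abs_of_nonneg (hp0 t ht2)]
  by_contra hcon
  push_neg at hcon
  have hlow : ∀ s ∈ Set.Icc t (t + δ), ε / 2 ≤ p s := by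
    intro s hs
    have h1 := hest t s ht2 hs.1 (by linarith [hs.2])
    have h2 : C * (s - t) ≤ ε / 4 := by
      have : s - t ≤ δ := by linarith [hs.2]
      calc C * (s - t) ≤ C * δ := mul_le_mul_of_nonneg_left this hC.le
      _ ≤ ε / 4 := hδC
    have h3 : r t ≤ ε / 4 := le_of_lt (lt_of_le_of_lt (le_abs_self _) (hN1 t htN1))
    linarith
  have hgrow : ε / 2 * δ ≤ q (t + δ) - q t := by
    have := (convex_Icc t (t + δ)).mul_sub_le_image_sub_of_le_deriv
      (f := q) (C := ε / 2)
      (fun x hx => ((hq x (le_trans ht2 hx.1)).continuousAt).continuousWithinAt)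
      (fun x hx => ((hq x (le_trans ht2 (interior_subset hx).1)).differentiableAt).differentiableWithinAt)
      (fun x hx => by
        rw [(hq x (le_trans ht2 (interior_subset hx).1)).deriv]
        exact hlow x (interior_subset hx))
      t (Set.left_mem_Icc.2 (by linarith)) (t + δ) (Set.right_mem_Icc.2 (by linarith))
      (by linarith)
    simpa using this
  have hsmall : |q (t + δ) - q t| < ε * δ / 8 := by
    have h1 := hN2 t htN2
    have h2 := hN2 (t + δ) (by linarith)
    calc |q (t + δ) - q t| ≤ |q (t + δ) - L| + |L - q t| := abs_sub_le _ _ _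
    _ = |q (t + δ) - L| + |q t - L| := by rw [abs_sub_comm L (q t)]
    _ < ε * δ / 16 + ε * δ / 16 := add_lt_add h2 h1
    _ = ε * δ / 8 := by ring
  have : ε / 2 * δ ≤ |q (t + δ) - q t| := le_trans hgrow (le_abs_self _)
  nlinarith [mul_pos hε hδpos]

lemma flux_diff_est (g h : ℝ → ℝ) (w Q : ℝ → ℝ → ℝ)
    (M CJ D : ℝ) (hM : 0 ≤ M) (hCJ : 0 ≤ CJ) (hD0 : 0 ≤ D)
    (hgm : AntitoneOn g (Set.Ici 0)) (hhm : MonotoneOn h (Set.Ici 0))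
    (hD : ∀ t, (0:ℝ) ≤ t → h t - g t ≤ D)
    (hgh : ∀ t, (0:ℝ) ≤ t → g t ≤ h t)
    (hQ0 : ∀ τ x, 0 ≤ Q τ x) (hQ1 : ∀ τ x, Q τ x ≤ 1)
    (hQc : ∀ τ, Continuous (Q τ))
    (hQd : ∀ t s x, 1 ≤ t → t ≤ s → |Q s x - Q t x| ≤ CJ * ((h s - h t) + (g t - g s)))
    (hwm : ∀ τ, 0 < τ → AEStronglyMeasurable (w τ) volume)
    (hwb : ∀ τ, 0 < τ → ∀ᵐ x : ℝ, |w τ x| ≤ M)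
    (hwbd : ∀ τ x, 0 < τ → x ∈ Set.Ioo (g τ) (h τ) → |w τ x| ≤ M)
    (hwd : ∀ t s x, 1 ≤ t → t ≤ s → x ∈ Set.Ioo (g t) (h t) → |w s x - w t x| ≤ M * (s - t))
    {t s : ℝ} (ht : 1 ≤ t) (hts : t ≤ s) :
    |(∫ x in g s..h s, Q s x * w s x) - ∫ x in g t..h t, Q t x * w t x| ≤
      (D * (M + CJ * M) + 2 * M) * ((s - t) + (h s - h t) + (g t - g s)) := by
  have ht0 : (0:ℝ) ≤ t := by linarith
  have hs0 : (0:ℝ) ≤ s := by linarith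
  have hspos : (0:ℝ) < s := by linarith
  have htpos : (0:ℝ) < t := by linarith
  have hgs : g s ≤ g t := hgm ht0 hs0 hts
  have hhs : h t ≤ h s := hhm ht0 hs0 hts
  have hght : g t ≤ h t := hgh t ht0
  have hQabs : ∀ τ x, |Q τ x| ≤ 1 := fun τ x => abs_le.2 ⟨by linarith [hQ0 τ x], hQ1 τ x⟩
  set E := (s - t) + (h s - h t) + (g t - g s) with hE
  have hE0 : 0 ≤ E := by unfold E; linarith
  have hints : ∀ a b, IntervalIntegrable (fun x => Q s x * w s x) volume a b :=
    fun a b => intervalIntegrable_Qw (hQc s) (hQabs s) (hwm s hspos) (hwb s hspos) a b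
  have hintt : ∀ a b, IntervalIntegrable (fun x => Q t x * w t x) volume a b :=
    fun a b => intervalIntegrable_Qw (hQc t) (hQabs t) (hwm t htpos) (hwb t htpos) a b
  have hsplit : (∫ x in g s..h s, Q s x * w s x) =
      (∫ x in g s..g t, Q s x * w s x) + (∫ x in g t..h t, Q s x * w s x)
        + ∫ x in h t..h s, Q s x * w s x := by
    rw [intervalIntegral.integral_add_adjacent_intervals (hints _ _) (hints _ _),
      intervalIntegral.integral_add_adjacent_intervals (hints _ _) (hints _ _)]
  have hmid : |(∫ x in g t..h t, Q s x * w s x) - ∫ x in g t..h t, Q t x * w t x| ≤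
      D * (M + CJ * M) * E := by
    rw [← intervalIntegral.integral_sub (hints _ _) (hintt _ _)]
    rw [intervalIntegral.integral_of_le hght]
    have hae : ∀ᵐ x ∂volume.restrict (Set.Ioc (g t) (h t)),
        ‖Q s x * w s x - Q t x * w t x‖ ≤ M * (s - t) + CJ * M * ((h s - h t) + (g t - g s)) := by
      have hmem := ae_restrict_mem (μ := volume)
        (measurableSet_Ioc : MeasurableSet (Set.Ioc (g t) (h t)))
      have hne : ∀ᵐ x ∂volume.restrict (Set.Ioc (g t) (h t)), x ≠ h t := by
        refine ae_restrict_of_ae ?_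
        have : volume ({h t} : Set ℝ) = 0 := Real.volume_singleton
        exact (ae_iff.2 (by simpa using this))
      filter_upwards [hmem, hne] with x hx hxne
      have hxoo : x ∈ Set.Ioo (g t) (h t) := ⟨hx.1, lt_of_le_of_ne hx.2 hxne⟩
      have h1 : |w s x - w t x| ≤ M * (s - t) := hwd t s x ht hts hxoo
      have h2 : |Q s x - Q t x| ≤ CJ * ((h s - h t) + (g t - g s)) := hQd t s x ht hts
      have h3 : |w t x| ≤ M := hwbd t x htpos hxoo
      have key : Q s x * w s x - Q t x * w t x
          = Q s x * (w s x - w t x) + (Q s x - Q t x) * w t x := by ring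
      rw [Real.norm_eq_abs, key]
      calc |Q s x * (w s x - w t x) + (Q s x - Q t x) * w t x|
          ≤ |Q s x * (w s x - w t x)| + |(Q s x - Q t x) * w t x| := abs_add_le _ _
      _ = |Q s x| * |w s x - w t x| + |Q s x - Q t x| * |w t x| := by rw [abs_mul, abs_mul]
      _ ≤ 1 * (M * (s - t)) + (CJ * ((h s - h t) + (g t - g s))) * M := by
          refine add_le_add (mul_le_mul (hQabs s x) h1 (abs_nonneg _) zero_le_one)
            (mul_le_mul h2 h3 (abs_nonneg _) ?_)
          exact mul_nonneg hCJ (by linarith)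
      _ = M * (s - t) + CJ * M * ((h s - h t) + (g t - g s)) := by ring
    have hbound := norm_setIntegral_le_of_norm_le_const_ae
      (C := M * (s - t) + CJ * M * ((h s - h t) + (g t - g s))) (μ := volume)
      (s := Set.Ioc (g t) (h t))
      (by rw [Real.volume_Ioc]; exact ENNReal.ofReal_lt_top) hae
    rw [Real.volume_real_Ioc_of_le (by linarith)] at hbound
    rw [← Real.norm_eq_abs]
    refine hbound.trans ?_
    have h4 : h t - g t ≤ D := hD t ht0
    have h5 : 0 ≤ M * (s - t) + CJ * M * ((h s - h t) + (g t - g s)) :=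
      add_nonneg (mul_nonneg hM (by linarith)) (mul_nonneg (mul_nonneg hCJ hM) (by linarith))
    calc (M * (s - t) + CJ * M * ((h s - h t) + (g t - g s))) * (h t - g t)
        ≤ (M * (s - t) + CJ * M * ((h s - h t) + (g t - g s))) * D :=
          mul_le_mul_of_nonneg_left h4 h5
    _ ≤ D * (M + CJ * M) * E := by
          have hX : (0:ℝ) ≤ (h s - h t) + (g t - g s) := by linarith
          have hst : (0:ℝ) ≤ s - t := by linarith
          unfold E
          nlinarith [mul_nonneg (mul_nonneg hD0 hM) hX,
            mul_nonneg (mul_nonneg (mul_nonneg hD0 hCJ) hM) hst]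
  have hedge : ∀ a b : ℝ, a ≤ b → |∫ x in a..b, Q s x * w s x| ≤ M * (b - a) := by
    intro a b hab
    rw [intervalIntegral.integral_of_le hab]
    have hae : ∀ᵐ x ∂volume.restrict (Set.Ioc a b), ‖Q s x * w s x‖ ≤ M := by
      refine ae_restrict_of_ae ((hwb s hspos).mono fun x hx => ?_)
      calc ‖Q s x * w s x‖ = |Q s x| * |w s x| := by rw [Real.norm_eq_abs, abs_mul]
      _ ≤ 1 * M := mul_le_mul (hQabs s x) hx (abs_nonneg _) zero_le_one
      _ = M := one_mul M
    have hbound := norm_setIntegral_le_of_norm_le_const_ae (C := M) (μ := volume)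
      (s := Set.Ioc a b)
      (by rw [Real.volume_Ioc]; exact ENNReal.ofReal_lt_top) hae
    rw [Real.volume_real_Ioc_of_le (by linarith)] at hbound
    rw [← Real.norm_eq_abs]
    exact hbound
  have he1 := hedge (g s) (g t) hgs
  have he2 := hedge (h t) (h s) hhs
  have hdecomp : (∫ x in g s..h s, Q s x * w s x) - (∫ x in g t..h t, Q t x * w t x)
      = ((∫ x in g t..h t, Q s x * w s x) - ∫ x in g t..h t, Q t x * w t x)
        + (∫ x in g s..g t, Q s x * w s x) + ∫ x in h t..h s, Q s x * w s x := by
    rw [hsplit]; ring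
  rw [hdecomp]
  calc |((∫ x in g t..h t, Q s x * w s x) - ∫ x in g t..h t, Q t x * w t x)
        + (∫ x in g s..g t, Q s x * w s x) + ∫ x in h t..h s, Q s x * w s x|
      ≤ |((∫ x in g t..h t, Q s x * w s x) - ∫ x in g t..h t, Q t x * w t x)
        + (∫ x in g s..g t, Q s x * w s x)| + |∫ x in h t..h s, Q s x * w s x| := abs_add_le _ _
  _ ≤ |(∫ x in g t..h t, Q s x * w s x) - ∫ x in g t..h t, Q t x * w t x|
        + |∫ x in g s..g t, Q s x * w s x| + |∫ x in h t..h s, Q s x * w s x| := by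
      exact add_le_add (abs_add_le _ _) le_rfl
  _ ≤ D * (M + CJ * M) * E + M * (g t - g s) + M * (h s - h t) :=
      add_le_add (add_le_add hmid he1) he2
  _ ≤ (D * (M + CJ * M) + 2 * M) * E := by
      have hMCJ : (0:ℝ) ≤ M + CJ * M := by positivity
      unfold E
      nlinarith [mul_nonneg (mul_nonneg hD0 hMCJ) hE0,
        mul_nonneg hM (by linarith : (0:ℝ) ≤ s - t)]

end BSTZ

lemma fluxR_eq (J u : ℝ → ℝ) (a b : ℝ) :
    fluxR J u a b = ∫ x in a..b, BSTZ.FF J (x - b) * u x := by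
  unfold fluxR
  apply intervalIntegral.integral_congr
  intro x _
  show (∫ y in Set.Ioi b, J (x - y) * u x) = BSTZ.FF J (x - b) * u x
  rw [MeasureTheory.integral_mul_const, BSTZ.sub_integral_Ioi]

lemma fluxL_eq (J u : ℝ → ℝ) (a b : ℝ) :
    fluxL J u a b = ∫ x in a..b, BSTZ.GG J (x - a) * u x := by
  unfold fluxL
  apply intervalIntegral.integral_congr
  intro x _
  show (∫ y in Set.Iio a, J (x - y) * u x) = BSTZ.GG J (x - a) * u x
  rw [MeasureTheory.integral_mul_const, BSTZ.sub_integral_Iio]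


/-- Lemma 3.1: if the moving boundaries driven by the flux
conditions converge to a finite interval, then their speeds tend to 0. -/
theorem boundary_speeds_tend_to_zero
    (β1 β2 : ℝ) (J1 J2 : ℝ → ℝ) (g h g' h' : ℝ → ℝ)
    (w1 w2 w1t w2t : ℝ → ℝ → ℝ) (M ginf hinf : ℝ)
    (hβ1 : 0 < β1) (hβ2 : 0 < β2) (hJ1 : KernelJ J1) (hJ2 : KernelJ J2)
    (hgh0 : g 0 < h 0)
    (hg' : ∀ t, 0 ≤ t → HasDerivWithinAt g (g' t) (Set.Ici 0) t)
    (hh' : ∀ t, 0 ≤ t → HasDerivWithinAt h (h' t) (Set.Ici 0) t)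
    (hg'le : ∀ t, 0 ≤ t → g' t ≤ 0) (hh'ge : ∀ t, 0 ≤ t → 0 ≤ h' t)
    (hw1cont : ContinuousOn (Function.uncurry w1)
      {p : ℝ × ℝ | 0 < p.1 ∧ g p.1 < p.2 ∧ p.2 < h p.1})
    (hw2cont : ContinuousOn (Function.uncurry w2)
      {p : ℝ × ℝ | 0 < p.1 ∧ g p.1 < p.2 ∧ p.2 < h p.1})
    (hw1tcont : ContinuousOn (Function.uncurry w1t)
      {p : ℝ × ℝ | 0 < p.1 ∧ g p.1 < p.2 ∧ p.2 < h p.1})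
    (hw2tcont : ContinuousOn (Function.uncurry w2t)
      {p : ℝ × ℝ | 0 < p.1 ∧ g p.1 < p.2 ∧ p.2 < h p.1})
    (hw1t : ∀ t x, 0 < t → x ∈ Set.Ioo (g t) (h t) →
      HasDerivAt (fun τ => w1 τ x) (w1t t x) t)
    (hw2t : ∀ t x, 0 < t → x ∈ Set.Ioo (g t) (h t) →
      HasDerivAt (fun τ => w2 τ x) (w2t t x) t)
    (hbd : ∀ t x, 0 < t → x ∈ Set.Ioo (g t) (h t) →
      |w1 t x| ≤ M ∧ |w2 t x| ≤ M ∧ |w1t t x| ≤ M ∧ |w2t t x| ≤ M)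
    (hext1 : ∀ t x, 0 ≤ t → x ∉ Set.Icc (g t) (h t) → w1 t x = 0)
    (hext2 : ∀ t x, 0 ≤ t → x ∉ Set.Icc (g t) (h t) → w2 t x = 0)
    (heqh : ∀ t, 0 ≤ t →
      h' t = β1 * fluxR J1 (w1 t) (g t) (h t) + β2 * fluxR J2 (w2 t) (g t) (h t))
    (heqg : ∀ t, 0 ≤ t →
      g' t = -(β1 * fluxL J1 (w1 t) (g t) (h t) + β2 * fluxL J2 (w2 t) (g t) (h t)))
    (hglim : Tendsto g atTop (nhds ginf)) (hhlim : Tendsto h atTop (nhds hinf)) :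
    Tendsto g' atTop (nhds 0) ∧ Tendsto h' atTop (nhds 0) := by
  obtain ⟨J1c, J1nn, -, J1pos, J1int, J1one, J1bdd⟩ := hJ1
  obtain ⟨J2c, J2nn, -, J2pos, J2int, J2one, J2bdd⟩ := hJ2
  obtain ⟨C1, hC1⟩ : ∃ C, ∀ x, J1 x ≤ C := by
    obtain ⟨c, hc⟩ := J1bdd
    exact ⟨c, fun x => hc ⟨x, rfl⟩⟩
  obtain ⟨C2, hC2⟩ : ∃ C, ∀ x, J2 x ≤ C := by
    obtain ⟨c, hc⟩ := J2bdd
    exact ⟨c, fun x => hc ⟨x, rfl⟩⟩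
  have hC1pos : (0:ℝ) < C1 := lt_of_lt_of_le J1pos (hC1 0)
  have hC2pos : (0:ℝ) < C2 := lt_of_lt_of_le J2pos (hC2 0)
  have hgcont : ContinuousOn g (Set.Ici 0) := fun t htm => (hg' t htm).continuousWithinAt
  have hhcont : ContinuousOn h (Set.Ici 0) := fun t htm => (hh' t htm).continuousWithinAt
  have hgderiv : ∀ t, 0 < t → HasDerivAt g (g' t) t := fun t ht =>
    (hg' t ht.le).hasDerivAt (Ici_mem_nhds ht)
  have hhderiv : ∀ t, 0 < t → HasDerivAt h (h' t) t := fun t ht =>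
    (hh' t ht.le).hasDerivAt (Ici_mem_nhds ht)
  have hgmono : AntitoneOn g (Set.Ici 0) := by
    refine antitoneOn_of_deriv_nonpos (convex_Ici 0) hgcont (fun t htm => ?_) (fun t htm => ?_)
    · rw [interior_Ici] at htm
      exact (hgderiv t htm).differentiableAt.differentiableWithinAt
    · rw [interior_Ici] at htm
      rw [(hgderiv t htm).deriv]
      exact hg'le t htm.le
  have hhmono : MonotoneOn h (Set.Ici 0) := by
    refine monotoneOn_of_deriv_nonneg (convex_Ici 0) hhcont (fun t htm => ?_) (fun t htm => ?_)
    · rw [interior_Ici] at htm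
      exact (hhderiv t htm).differentiableAt.differentiableWithinAt
    · rw [interior_Ici] at htm
      rw [(hhderiv t htm).deriv]
      exact hh'ge t htm.le
  have hghlt : ∀ t, (0:ℝ) ≤ t → g t < h t := by
    intro t ht
    have h1 : g t ≤ g 0 := hgmono Set.self_mem_Ici ht ht
    have h2 : h 0 ≤ h t := hhmono Set.self_mem_Ici ht ht
    linarith
  have hhub : ∀ t, (0:ℝ) ≤ t → h t ≤ hinf := by
    intro t ht
    refine ge_of_tendsto hhlim (eventually_atTop.2 ⟨t, fun s hs => ?_⟩)
    exact hhmono ht (le_trans ht hs) hs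
  have hglb : ∀ t, (0:ℝ) ≤ t → ginf ≤ g t := by
    intro t ht
    refine le_of_tendsto hglim (eventually_atTop.2 ⟨t, fun s hs => ?_⟩)
    exact hgmono ht (le_trans ht hs) hs
  have hD0 : (0:ℝ) ≤ hinf - ginf := by
    have h1 := hghlt 0 le_rfl
    have h2 := hhub 0 le_rfl
    have h3 := hglb 0 le_rfl
    linarith
  have hDb : ∀ t, (0:ℝ) ≤ t → h t - g t ≤ hinf - ginf := by
    intro t ht
    have h1 := hhub t ht
    have h2 := hglb t ht
    linarith
  have hghle : ∀ t, (0:ℝ) ≤ t → g t ≤ h t := fun t ht => (hghlt t ht).le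
  have hM0 : (0:ℝ) ≤ M := by
    have hg1 := hghlt 1 zero_le_one
    have hmem : (g 1 + h 1) / 2 ∈ Set.Ioo (g 1) (h 1) := ⟨by linarith, by linarith⟩
    exact le_trans (abs_nonneg _) (hbd 1 _ one_pos hmem).1
  -- generic facts for w1, w2
  have wfacts : ∀ w wt : ℝ → ℝ → ℝ,
      (∀ t x, 0 < t → x ∈ Set.Ioo (g t) (h t) → HasDerivAt (fun τ => w τ x) (wt t x) t) →
      (∀ t x, 0 < t → x ∈ Set.Ioo (g t) (h t) → |w t x| ≤ M ∧ |wt t x| ≤ M) →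
      (∀ t x, 0 ≤ t → x ∉ Set.Icc (g t) (h t) → w t x = 0) →
      ContinuousOn (Function.uncurry w) {p : ℝ × ℝ | 0 < p.1 ∧ g p.1 < p.2 ∧ p.2 < h p.1} →
      (∀ τ, 0 < τ → AEStronglyMeasurable (w τ) volume) ∧
      (∀ τ, 0 < τ → ∀ᵐ x : ℝ, |w τ x| ≤ M) ∧
      (∀ t s x, 1 ≤ t → t ≤ s → x ∈ Set.Ioo (g t) (h t) → |w s x - w t x| ≤ M * (s - t)) := by
    intro w wt hd hb he hc
    have hslice : ∀ τ, 0 < τ → ContinuousOn (w τ) (Set.Ioo (g τ) (h τ)) := by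
      intro τ hτ
      have : ContinuousOn (Function.uncurry w ∘ fun x : ℝ => (τ, x)) (Set.Ioo (g τ) (h τ)) :=
        hc.comp (Continuous.prodMk_right τ).continuousOn (fun y hy => ⟨hτ, hy.1, hy.2⟩)
      exact this
    have hnull : ∀ τ : ℝ, volume ({g τ, h τ} : Set ℝ) = 0 := by
      intro τ
      rw [Set.insert_eq]
      exact measure_union_null Real.volume_singleton Real.volume_singleton
    have haeq : ∀ τ, 0 < τ → w τ =ᵐ[volume] (Set.Ioo (g τ) (h τ)).indicator (w τ) := by
      intro τ hτ
      refine ae_iff.2 (measure_mono_null ?_ (hnull τ))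
      intro x hx
      simp only [Set.mem_setOf_eq] at hx
      by_contra hx2
      simp only [Set.mem_insert_iff, Set.mem_singleton_iff, not_or] at hx2
      apply hx
      by_cases hmem : x ∈ Set.Ioo (g τ) (h τ)
      · rw [Set.indicator_of_mem hmem]
      · rw [Set.indicator_of_notMem hmem]
        refine he τ x hτ.le fun hicc => hmem ⟨?_, ?_⟩
        · exact lt_of_le_of_ne hicc.1 (Ne.symm hx2.1)
        · exact lt_of_le_of_ne hicc.2 hx2.2
    refine ⟨?_, ?_, ?_⟩
    · intro τ hτ
      have hind : AEStronglyMeasurable ((Set.Ioo (g τ) (h τ)).indicator (w τ)) volume :=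
        (aestronglyMeasurable_indicator_iff measurableSet_Ioo).2
          ((hslice τ hτ).aestronglyMeasurable measurableSet_Ioo)
      exact hind.congr (haeq τ hτ).symm
    · intro τ hτ
      have h0 : ∀ᵐ x : ℝ, x ∉ ({g τ, h τ} : Set ℝ) := by
        rw [ae_iff]
        have hset : {x : ℝ | ¬ x ∉ ({g τ, h τ} : Set ℝ)} = {g τ, h τ} := by
          ext x; simp only [Set.mem_setOf_eq, not_not]
        rw [hset]
        exact hnull τ
      refine h0.mono fun x hx => ?_
      by_cases hmem : x ∈ Set.Ioo (g τ) (h τ)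
      · exact (hb τ x hτ hmem).1
      · have hz : w τ x = 0 := by
          apply he τ x hτ.le
          intro hicc
          simp only [Set.mem_insert_iff, Set.mem_singleton_iff, not_or] at hx
          exact hmem ⟨lt_of_le_of_ne hicc.1 (Ne.symm hx.1), lt_of_le_of_ne hicc.2 hx.2⟩
        rw [hz, abs_zero]
        exact hM0
    · intro t s x ht hts hx
      rcases eq_or_lt_of_le hts with rfl | hlt
      · simp only [sub_self, abs_zero, mul_zero, le_refl]
      · have hxmem : ∀ τ, τ ∈ Set.Icc t s → (0:ℝ) < τ ∧ x ∈ Set.Ioo (g τ) (h τ) := by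
          intro τ hτ
          have hτ0 : (0:ℝ) < τ := by linarith [hτ.1]
          have h1 : g τ ≤ g t := hgmono (by linarith : (0:ℝ) ≤ t)
            (by linarith : (0:ℝ) ≤ τ) hτ.1
          have h2 : h t ≤ h τ := hhmono (by linarith : (0:ℝ) ≤ t)
            (by linarith : (0:ℝ) ≤ τ) hτ.1
          exact ⟨hτ0, lt_of_le_of_lt h1 hx.1, lt_of_lt_of_le hx.2 h2⟩
        have hder : ∀ τ ∈ Set.Icc t s,
            HasDerivWithinAt (fun τ => w τ x) (wt τ x) (Set.Icc t s) τ := by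
          intro τ hτ
          obtain ⟨hτ0, hxm⟩ := hxmem τ hτ
          exact (hd τ x hτ0 hxm).hasDerivWithinAt
        have hboundd : ∀ τ ∈ Set.Icc t s, ‖wt τ x‖ ≤ M := by
          intro τ hτ
          obtain ⟨hτ0, hxm⟩ := hxmem τ hτ
          rw [Real.norm_eq_abs]
          exact (hb τ x hτ0 hxm).2
        have key := (convex_Icc t s).norm_image_sub_le_of_norm_hasDerivWithin_le hder hboundd
          (Set.left_mem_Icc.2 hts) (Set.right_mem_Icc.2 hts)
        rw [Real.norm_eq_abs, Real.norm_eq_abs,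
          abs_of_nonneg (by linarith : (0:ℝ) ≤ s - t)] at key
        exact key
  obtain ⟨hw1m, hw1b, hw1d⟩ := wfacts w1 w1t hw1t
    (fun t x ht hx => ⟨(hbd t x ht hx).1, (hbd t x ht hx).2.2.1⟩) hext1 hw1cont
  obtain ⟨hw2m, hw2b, hw2d⟩ := wfacts w2 w2t hw2t
    (fun t x ht hx => ⟨(hbd t x ht hx).2.1, (hbd t x ht hx).2.2.2⟩) hext2 hw2cont
  have hw1bd : ∀ τ x, 0 < τ → x ∈ Set.Ioo (g τ) (h τ) → |w1 τ x| ≤ M :=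
    fun τ x hτ hx => (hbd τ x hτ hx).1
  have hw2bd : ∀ τ x, 0 < τ → x ∈ Set.Ioo (g τ) (h τ) → |w2 τ x| ≤ M :=
    fun τ x hτ hx => (hbd τ x hτ hx).2.1
  -- flux rewritten
  have hh'eq : ∀ τ, (0:ℝ) ≤ τ → h' τ =
      β1 * (∫ x in g τ..h τ, BSTZ.FF J1 (x - h τ) * w1 τ x)
      + β2 * (∫ x in g τ..h τ, BSTZ.FF J2 (x - h τ) * w2 τ x) := by
    intro τ hτ
    rw [heqh τ hτ, fluxR_eq, fluxR_eq]
  have hg'eq : ∀ τ, (0:ℝ) ≤ τ → -g' τ =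
      β1 * (∫ x in g τ..h τ, BSTZ.GG J1 (x - g τ) * w1 τ x)
      + β2 * (∫ x in g τ..h τ, BSTZ.GG J2 (x - g τ) * w2 τ x) := by
    intro τ hτ
    rw [heqg τ hτ, fluxL_eq, fluxL_eq, neg_neg]
  -- Q-difference estimates
  have habsR : ∀ (J : ℝ → ℝ) (C : ℝ), (∀ x, 0 ≤ J x) → Integrable J → (∀ x, J x ≤ C) →
      ∀ t s x : ℝ, 1 ≤ t → t ≤ s →
      |BSTZ.FF J (x - h s) - BSTZ.FF J (x - h t)| ≤ C * ((h s - h t) + (g t - g s)) := by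
    intro J C hnn hint hC t s x ht hts
    have hCpos : (0:ℝ) ≤ C := le_trans (hnn 0) (hC 0)
    have h1 := BSTZ.FF_abs_diff hnn hint hC (x - h s) (x - h t)
    have h2 : h t ≤ h s := hhmono (Set.mem_Ici.2 (by linarith)) (Set.mem_Ici.2 (by linarith)) hts
    have h3 : g s ≤ g t := hgmono (Set.mem_Ici.2 (by linarith)) (Set.mem_Ici.2 (by linarith)) hts
    have h4 : |x - h s - (x - h t)| = h s - h t := by
      rw [show x - h s - (x - h t) = -(h s - h t) by ring, abs_neg,
        abs_of_nonneg (by linarith)]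
    rw [h4] at h1
    nlinarith [mul_nonneg hCpos (by linarith : (0:ℝ) ≤ g t - g s)]
  have habsL : ∀ (J : ℝ → ℝ) (C : ℝ), (∀ x, 0 ≤ J x) → Integrable J → (∀ x, J x ≤ C) →
      ∀ t s x : ℝ, 1 ≤ t → t ≤ s →
      |BSTZ.GG J (x - g s) - BSTZ.GG J (x - g t)| ≤ C * ((h s - h t) + (g t - g s)) := by
    intro J C hnn hint hC t s x ht hts
    have hCpos : (0:ℝ) ≤ C := le_trans (hnn 0) (hC 0)
    have h1 := BSTZ.GG_abs_diff hnn hint hC (x - g s) (x - g t)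
    have h2 : h t ≤ h s := hhmono (Set.mem_Ici.2 (by linarith)) (Set.mem_Ici.2 (by linarith)) hts
    have h3 : g s ≤ g t := hgmono (Set.mem_Ici.2 (by linarith)) (Set.mem_Ici.2 (by linarith)) hts
    have h4 : |x - g s - (x - g t)| = g t - g s := by
      rw [show x - g s - (x - g t) = g t - g s by ring, abs_of_nonneg (by linarith)]
    rw [h4] at h1
    nlinarith [mul_nonneg hCpos (by linarith : (0:ℝ) ≤ h s - h t)]
  -- constants
  set A1 : ℝ := (hinf - ginf) * (M + C1 * M) + 2 * M with hA1
  set A2 : ℝ := (hinf - ginf) * (M + C2 * M) + 2 * M with hA2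
  have hA1nn : 0 ≤ A1 := by
    have : (0:ℝ) ≤ M + C1 * M := add_nonneg hM0 (mul_nonneg hC1pos.le hM0)
    have := mul_nonneg hD0 this
    unfold A1
    linarith
  have hA2nn : 0 ≤ A2 := by
    have : (0:ℝ) ≤ M + C2 * M := add_nonneg hM0 (mul_nonneg hC2pos.le hM0)
    have := mul_nonneg hD0 this
    unfold A2
    linarith
  set Ctot : ℝ := β1 * A1 + β2 * A2 with hCtot
  have hCtot0 : 0 ≤ Ctot :=
    add_nonneg (mul_nonneg hβ1.le hA1nn) (mul_nonneg hβ2.le hA2nn)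
  set r : ℝ → ℝ := fun t => Ctot * ((h (t + 1) - h t) + (g t - g (t + 1))) with hrdef
  have hr : Tendsto r atTop (nhds 0) := by
    have hh1 : Tendsto (fun t => h (t + 1)) atTop (nhds hinf) :=
      hhlim.comp (tendsto_atTop_add_const_right atTop 1 tendsto_id)
    have hg1 : Tendsto (fun t => g (t + 1)) atTop (nhds ginf) :=
      hglim.comp (tendsto_atTop_add_const_right atTop 1 tendsto_id)
    have := ((hh1.sub hhlim).add (hglim.sub hg1)).const_mul Ctot
    simpa using this
  -- the four flux estimates
  have estR1 : ∀ t s : ℝ, 1 ≤ t → t ≤ s →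
      |(∫ x in g s..h s, BSTZ.FF J1 (x - h s) * w1 s x)
        - ∫ x in g t..h t, BSTZ.FF J1 (x - h t) * w1 t x| ≤
      A1 * ((s - t) + (h s - h t) + (g t - g s)) := by
    intro t s ht hts
    exact BSTZ.flux_diff_est g h w1 (fun τ x => BSTZ.FF J1 (x - h τ)) M C1 (hinf - ginf)
      hM0 hC1pos.le hD0 hgmono hhmono hDb hghle
      (fun τ x => BSTZ.FF_nonneg J1nn _)
      (fun τ x => BSTZ.FF_le_one J1nn J1int J1one _)
      (fun τ => (BSTZ.FF_continuous J1nn J1int hC1 hC1pos.le).comp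
        (continuous_sub_right (h τ)))
      (fun t s x ht hts => habsR J1 C1 J1nn J1int hC1 t s x ht hts)
      hw1m hw1b hw1bd hw1d ht hts
  have estR2 : ∀ t s : ℝ, 1 ≤ t → t ≤ s →
      |(∫ x in g s..h s, BSTZ.FF J2 (x - h s) * w2 s x)
        - ∫ x in g t..h t, BSTZ.FF J2 (x - h t) * w2 t x| ≤
      A2 * ((s - t) + (h s - h t) + (g t - g s)) := by
    intro t s ht hts
    exact BSTZ.flux_diff_est g h w2 (fun τ x => BSTZ.FF J2 (x - h τ)) M C2 (hinf - ginf)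
      hM0 hC2pos.le hD0 hgmono hhmono hDb hghle
      (fun τ x => BSTZ.FF_nonneg J2nn _)
      (fun τ x => BSTZ.FF_le_one J2nn J2int J2one _)
      (fun τ => (BSTZ.FF_continuous J2nn J2int hC2 hC2pos.le).comp
        (continuous_sub_right (h τ)))
      (fun t s x ht hts => habsR J2 C2 J2nn J2int hC2 t s x ht hts)
      hw2m hw2b hw2bd hw2d ht hts
  have estL1 : ∀ t s : ℝ, 1 ≤ t → t ≤ s →
      |(∫ x in g s..h s, BSTZ.GG J1 (x - g s) * w1 s x)
        - ∫ x in g t..h t, BSTZ.GG J1 (x - g t) * w1 t x| ≤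
      A1 * ((s - t) + (h s - h t) + (g t - g s)) := by
    intro t s ht hts
    exact BSTZ.flux_diff_est g h w1 (fun τ x => BSTZ.GG J1 (x - g τ)) M C1 (hinf - ginf)
      hM0 hC1pos.le hD0 hgmono hhmono hDb hghle
      (fun τ x => BSTZ.GG_nonneg J1nn _)
      (fun τ x => BSTZ.GG_le_one J1nn J1int J1one _)
      (fun τ => (BSTZ.GG_continuous J1nn J1int hC1 hC1pos.le).comp
        (continuous_sub_right (g τ)))
      (fun t s x ht hts => habsL J1 C1 J1nn J1int hC1 t s x ht hts)
      hw1m hw1b hw1bd hw1d ht hts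
  have estL2 : ∀ t s : ℝ, 1 ≤ t → t ≤ s →
      |(∫ x in g s..h s, BSTZ.GG J2 (x - g s) * w2 s x)
        - ∫ x in g t..h t, BSTZ.GG J2 (x - g t) * w2 t x| ≤
      A2 * ((s - t) + (h s - h t) + (g t - g s)) := by
    intro t s ht hts
    exact BSTZ.flux_diff_est g h w2 (fun τ x => BSTZ.GG J2 (x - g τ)) M C2 (hinf - ginf)
      hM0 hC2pos.le hD0 hgmono hhmono hDb hghle
      (fun τ x => BSTZ.GG_nonneg J2nn _)
      (fun τ x => BSTZ.GG_le_one J2nn J2int J2one _)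
      (fun τ => (BSTZ.GG_continuous J2nn J2int hC2 hC2pos.le).comp
        (continuous_sub_right (g τ)))
      (fun t s x ht hts => habsL J2 C2 J2nn J2int hC2 t s x ht hts)
      hw2m hw2b hw2bd hw2d ht hts
  -- common env bound
  have hEbar : ∀ t s : ℝ, 1 ≤ t → t ≤ s → s ≤ t + 1 →
      (s - t) + (h s - h t) + (g t - g s) ≤
        (s - t) + (h (t + 1) - h t) + (g t - g (t + 1)) := by
    intro t s ht hts hst1
    have h1 : h s ≤ h (t + 1) := hhmono (Set.mem_Ici.2 (by linarith)) (Set.mem_Ici.2 (by linarith)) hst1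
    have h2 : g (t + 1) ≤ g s := hgmono (Set.mem_Ici.2 (by linarith)) (Set.mem_Ici.2 (by linarith)) hst1
    linarith
  -- Barbalat for h'
  have htend : Tendsto h' atTop (nhds 0) := by
    refine BSTZ.tendsto_zero_of_control h h' r hinf (Ctot + 1) (by linarith)
      (fun t ht => hhderiv t (by linarith)) (fun t ht => hh'ge t (by linarith))
      ?_ hhlim hr
    intro t s ht hts hst1
    have h1t : (1:ℝ) ≤ t := by linarith
    have e1 := estR1 t s h1t hts
    have e2 := estR2 t s h1t hts
    have hq1 := hh'eq t (by linarith)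
    have hq2 := hh'eq s (by linarith)
    have hE := hEbar t s h1t hts hst1
    have hE0 : (0:ℝ) ≤ (s - t) + (h s - h t) + (g t - g s) := by
      have h1 : h t ≤ h s := hhmono (Set.mem_Ici.2 (by linarith)) (Set.mem_Ici.2 (by linarith)) hts
      have h2 : g s ≤ g t := hgmono (Set.mem_Ici.2 (by linarith)) (Set.mem_Ici.2 (by linarith)) hts
      linarith
    set d1 := (∫ x in g s..h s, BSTZ.FF J1 (x - h s) * w1 s x)
        - ∫ x in g t..h t, BSTZ.FF J1 (x - h t) * w1 t x with hd1
    set d2 := (∫ x in g s..h s, BSTZ.FF J2 (x - h s) * w2 s x)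
        - ∫ x in g t..h t, BSTZ.FF J2 (x - h t) * w2 t x with hd2
    have hsub : h' s - h' t = β1 * d1 + β2 * d2 := by
      rw [hq1, hq2]
      unfold d1 d2
      ring
    have hb1 : β1 * (-(A1 * ((s - t) + (h s - h t) + (g t - g s)))) ≤ β1 * d1 :=
      mul_le_mul_of_nonneg_left (le_trans (neg_le_neg e1) (neg_abs_le d1)) hβ1.le
    have hb2 : β2 * (-(A2 * ((s - t) + (h s - h t) + (g t - g s)))) ≤ β2 * d2 :=
      mul_le_mul_of_nonneg_left (le_trans (neg_le_neg e2) (neg_abs_le d2)) hβ2.le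
    have hmul1 : β1 * (A1 * ((s - t) + (h s - h t) + (g t - g s)))
        ≤ β1 * (A1 * ((s - t) + (h (t + 1) - h t) + (g t - g (t + 1)))) :=
      mul_le_mul_of_nonneg_left (mul_le_mul_of_nonneg_left hE hA1nn) hβ1.le
    have hmul2 : β2 * (A2 * ((s - t) + (h s - h t) + (g t - g s)))
        ≤ β2 * (A2 * ((s - t) + (h (t + 1) - h t) + (g t - g (t + 1)))) :=
      mul_le_mul_of_nonneg_left (mul_le_mul_of_nonneg_left hE hA2nn) hβ2.le
    have hrt : r t = Ctot * ((h (t + 1) - h t) + (g t - g (t + 1))) := rfl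
    have hCt : Ctot = β1 * A1 + β2 * A2 := rfl
    have hexp : β1 * (A1 * ((s - t) + (h (t + 1) - h t) + (g t - g (t + 1))))
        + β2 * (A2 * ((s - t) + (h (t + 1) - h t) + (g t - g (t + 1))))
        = Ctot * (s - t) + r t := by
      rw [hrt, hCt]; ring
    have hexp2 : (Ctot + 1) * (s - t) = Ctot * (s - t) + (s - t) := by ring
    linarith [hsub, hb1, hb2, hmul1, hmul2, hexp, hexp2]
  -- Barbalat for g'
  have hgtend : Tendsto (fun t => -g' t) atTop (nhds 0) := by
    refine BSTZ.tendsto_zero_of_control (fun t => -g t) (fun t => -g' t) r (-ginf)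
      (Ctot + 1) (by linarith)
      (fun t ht => (hgderiv t (by linarith)).neg)
      (fun t ht => by simpa using hg'le t (by linarith)) ?_ hglim.neg hr
    intro t s ht hts hst1
    have h1t : (1:ℝ) ≤ t := by linarith
    have e1 := estL1 t s h1t hts
    have e2 := estL2 t s h1t hts
    have hq1 := hg'eq t (by linarith)
    have hq2 := hg'eq s (by linarith)
    have hE := hEbar t s h1t hts hst1
    have hE0 : (0:ℝ) ≤ (s - t) + (h s - h t) + (g t - g s) := by
      have h1 : h t ≤ h s := hhmono (Set.mem_Ici.2 (by linarith)) (Set.mem_Ici.2 (by linarith)) hts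
      have h2 : g s ≤ g t := hgmono (Set.mem_Ici.2 (by linarith)) (Set.mem_Ici.2 (by linarith)) hts
      linarith
    set d1 := (∫ x in g s..h s, BSTZ.GG J1 (x - g s) * w1 s x)
        - ∫ x in g t..h t, BSTZ.GG J1 (x - g t) * w1 t x with hd1
    set d2 := (∫ x in g s..h s, BSTZ.GG J2 (x - g s) * w2 s x)
        - ∫ x in g t..h t, BSTZ.GG J2 (x - g t) * w2 t x with hd2
    have hsub : (-g' s) - (-g' t) = β1 * d1 + β2 * d2 := by
      rw [hq1, hq2]
      unfold d1 d2
      ring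
    have hb1 : β1 * (-(A1 * ((s - t) + (h s - h t) + (g t - g s)))) ≤ β1 * d1 :=
      mul_le_mul_of_nonneg_left (le_trans (neg_le_neg e1) (neg_abs_le d1)) hβ1.le
    have hb2 : β2 * (-(A2 * ((s - t) + (h s - h t) + (g t - g s)))) ≤ β2 * d2 :=
      mul_le_mul_of_nonneg_left (le_trans (neg_le_neg e2) (neg_abs_le d2)) hβ2.le
    have hmul1 : β1 * (A1 * ((s - t) + (h s - h t) + (g t - g s)))
        ≤ β1 * (A1 * ((s - t) + (h (t + 1) - h t) + (g t - g (t + 1)))) :=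
      mul_le_mul_of_nonneg_left (mul_le_mul_of_nonneg_left hE hA1nn) hβ1.le
    have hmul2 : β2 * (A2 * ((s - t) + (h s - h t) + (g t - g s)))
        ≤ β2 * (A2 * ((s - t) + (h (t + 1) - h t) + (g t - g (t + 1)))) :=
      mul_le_mul_of_nonneg_left (mul_le_mul_of_nonneg_left hE hA2nn) hβ2.le
    have hrt : r t = Ctot * ((h (t + 1) - h t) + (g t - g (t + 1))) := rfl
    have hCt : Ctot = β1 * A1 + β2 * A2 := rfl
    have hexp : β1 * (A1 * ((s - t) + (h (t + 1) - h t) + (g t - g (t + 1))))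
        + β2 * (A2 * ((s - t) + (h (t + 1) - h t) + (g t - g (t + 1))))
        = Ctot * (s - t) + r t := by
      rw [hrt, hCt]; ring
    have hexp2 : (Ctot + 1) * (s - t) = Ctot * (s - t) + (s - t) := by ring
    show -g' t - (Ctot + 1) * (s - t) - r t ≤ -g' s
    linarith [hsub, hb1, hb2, hmul1, hmul2, hexp, hexp2]
  refine ⟨?_, htend⟩
  have := hgtend.neg
  simpa using this
end
end

section
/- Let J satisfy condition (J) and suppose in addition J(x) > 0 for all x ∈ ℝ. Suppose g, h ∈ C¹([0,∞)) with g(0) < h(0), g'(t) ≤ 0, h'(t) ≥ 0, and lim_{t→∞} h(t) − lim_{t→∞} g(t) < ∞. Suppose for some positive constants β and M the function w satisfies 0 ≤ w ≤ M on {(t,x): t > 0, g(t) < x < h(t)}, w(t, g(t)) = w(t, h(t)) = 0 for all t ≥ 0, h'(t) ≥ β ∫_{g(t)}^{h(t)} ∫_{h(t)}^{∞} J(x−y) w(t,x) dy dx for all t > 0, and lim_{t→∞} h'(t) = 0. Then lim_{t→∞} ∫_{g(t)}^{h(t)} w(t,x) dx = 0 and ∫_0^∞ ∫_{g(t)}^{h(t)}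 w(t,x) dx dt < ∞. -/
open MeasureTheory Filter

noncomputable section

/-- Lemma 3.2: if the right boundary speed dominates the flux of
`w` and tends to 0, and the domain converges to a finite interval, then the
total mass of `w` tends to 0 and is integrable in time. -/
theorem mass_tends_to_zero
    (β M : ℝ) (J : ℝ → ℝ) (g h g' h' : ℝ → ℝ) (w : ℝ → ℝ → ℝ) (ginf hinf : ℝ)
    (hβ : 0 < β) (hM : 0 < M) (hJ : KernelJ J) (hJpos : ∀ x, 0 < J x)
    (hgh0 : g 0 < h 0)
    (hg' : ∀ t, 0 ≤ t → HasDerivWithinAt g (g' t) (Set.Ici 0) t)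
    (hh' : ∀ t, 0 ≤ t → HasDerivWithinAt h (h' t) (Set.Ici 0) t)
    (hg'le : ∀ t, 0 ≤ t → g' t ≤ 0) (hh'ge : ∀ t, 0 ≤ t → 0 ≤ h' t)
    (hglim : Tendsto g atTop (nhds ginf)) (hhlim : Tendsto h atTop (nhds hinf))
    (hwcont : ContinuousOn (Function.uncurry w)
      {p : ℝ × ℝ | 0 ≤ p.1 ∧ g p.1 ≤ p.2 ∧ p.2 ≤ h p.1})
    (hwbd : ∀ t x, 0 < t → x ∈ Set.Ioo (g t) (h t) → 0 ≤ w t x ∧ w t x ≤ M)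
    (hwb : ∀ t, 0 ≤ t → w t (g t) = 0 ∧ w t (h t) = 0)
    (hext : ∀ t x, 0 ≤ t → x ∉ Set.Icc (g t) (h t) → w t x = 0)
    (hflux : ∀ t, 0 < t → β * fluxR J (w t) (g t) (h t) ≤ h' t)
    (hh'lim : Tendsto h' atTop (nhds 0)) :
    Tendsto (fun t => ∫ x in (g t)..(h t), w t x) atTop (nhds 0) ∧
    IntegrableOn (fun t => ∫ x in (g t)..(h t), w t x) (Set.Ioi 0) := by
  obtain ⟨hJc, hJnn, -, -, hJint, hJ1, -⟩ := hJ
  -- continuity and monotonicity of g, h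
  have hgc : ContinuousOn g (Set.Ici 0) := fun t ht => (hg' t ht).continuousWithinAt
  have hhc : ContinuousOn h (Set.Ici 0) := fun t ht => (hh' t ht).continuousWithinAt
  have hmono : MonotoneOn h (Set.Ici 0) := by
    apply monotoneOn_of_hasDerivWithinAt_nonneg (convex_Ici 0) hhc
    · intro x hx
      rw [interior_Ici] at hx ⊢
      exact (hh' x hx.le).mono Set.Ioi_subset_Ici_self
    · intro x hx
      rw [interior_Ici] at hx
      exact hh'ge x hx.le
  have hanti : AntitoneOn g (Set.Ici 0) := by
    apply antitoneOn_of_hasDerivWithinAt_nonpos (convex_Ici 0) hgc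
    · intro x hx
      rw [interior_Ici] at hx ⊢
      exact (hg' x hx.le).mono Set.Ioi_subset_Ici_self
    · intro x hx
      rw [interior_Ici] at hx
      exact hg'le x hx.le
  have hhle : ∀ t, 0 ≤ t → h t ≤ hinf := by
    intro t ht
    apply ge_of_tendsto hhlim
    filter_upwards [eventually_ge_atTop t] with s hs
    exact hmono ht (ht.trans hs) hs
  have hgge : ∀ t, 0 ≤ t → ginf ≤ g t := by
    intro t ht
    apply le_of_tendsto hglim
    filter_upwards [eventually_ge_atTop t] with s hs
    exact hanti ht (ht.trans hs) hs
  have hglt : ∀ t, 0 ≤ t → g t < h t := fun t ht =>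
    lt_of_le_of_lt (hanti (Set.self_mem_Ici) ht ht)
      (hgh0.trans_le (hmono (Set.self_mem_Ici) ht ht))
  -- the minimum of J on a compact interval
  have hK : ginf - hinf - 1 ≤ (0:ℝ) := by
    have h1 : ginf ≤ g 0 := hgge 0 le_rfl
    have h2 : h 0 ≤ hinf := hhle 0 le_rfl
    linarith
  obtain ⟨x0, hx0K, hx0min⟩ := isCompact_Icc.exists_isMinOn (Set.nonempty_Icc.2 hK)
    (hJc.continuousOn (s := Set.Icc (ginf - hinf - 1) 0))
  set δ := J x0 with hδdef
  have hδpos : 0 < δ := hJpos x0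
  have hδle : ∀ z ∈ Set.Icc (ginf - hinf - 1) (0:ℝ), δ ≤ J z := fun z hz => hx0min hz
  -- basic properties of w
  have hw0 : ∀ t, 0 ≤ t → ∀ x, x ∉ Set.Ioo (g t) (h t) → w t x = 0 := by
    intro t ht x hx
    by_cases hx' : x ∈ Set.Icc (g t) (h t)
    · rcases eq_or_lt_of_le hx'.1 with h1 | h1
      · rw [← h1]; exact (hwb t ht).1
      rcases eq_or_lt_of_le hx'.2 with h2 | h2
      · rw [h2]; exact (hwb t ht).2
      · exact absurd ⟨h1, h2⟩ hx
    · exact hext t x ht hx'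
  have hwnn : ∀ t, 0 < t → ∀ x ∈ Set.Icc (g t) (h t), 0 ≤ w t x := by
    intro t ht x hx
    by_cases hx' : x ∈ Set.Ioo (g t) (h t)
    · exact (hwbd t x ht hx').1
    · rw [hw0 t ht.le x hx']
  have hwM : ∀ t, 0 < t → ∀ x ∈ Set.Icc (g t) (h t), w t x ≤ M := by
    intro t ht x hx
    by_cases hx' : x ∈ Set.Ioo (g t) (h t)
    · exact (hwbd t x ht hx').2
    · rw [hw0 t ht.le x hx']; exact hM.le
  have hwtc : ∀ t, 0 ≤ t → ContinuousOn (w t) (Set.Icc (g t) (h t)) := by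
    intro t ht
    have heq : w t = (Function.uncurry w) ∘ (fun x => (t, x)) := rfl
    rw [heq]
    exact hwcont.comp (Continuous.continuousOn (Continuous.prodMk_right t))
      (fun x hx => ⟨ht, hx.1, hx.2⟩)
  -- the shifted kernel
  have hJsh : ∀ x : ℝ, Integrable (fun y => J (x - y)) :=
    fun x => (integrable_comp_sub_left J x).2 hJint
  have hcnn : ∀ T x : ℝ, 0 ≤ ∫ y in Set.Ioi T, J (x - y) :=
    fun T x => setIntegral_nonneg measurableSet_Ioi (fun y _ => hJnn _)
  have hcle : ∀ T x : ℝ, (∫ y in Set.Ioi T, J (x - y)) ≤ 1 := by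
    intro T x
    calc (∫ y in Set.Ioi T, J (x - y)) ≤ ∫ y, J (x - y) :=
          setIntegral_le_integral (hJsh x) (Eventually.of_forall fun y => hJnn _)
      _ = ∫ y, J y := integral_sub_left_eq_self J volume x
      _ = 1 := hJ1
  have hcm : ∀ T : ℝ, StronglyMeasurable (fun x => ∫ y in Set.Ioi T, J (x - y)) := by
    intro T
    exact StronglyMeasurable.integral_prod_right (f := fun x y => J (x - y))
      ((hJc.comp (continuous_fst.sub continuous_snd)).stronglyMeasurable)
  have hcge : ∀ t, 0 ≤ t → ∀ x ∈ Set.Icc (g t) (h t),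
      δ ≤ ∫ y in Set.Ioi (h t), J (x - y) := by
    intro t ht x hx
    have h1 : (∫ y in Set.Ioc (h t) (h t + 1), J (x - y))
        ≤ ∫ y in Set.Ioi (h t), J (x - y) :=
      setIntegral_mono_set (hJsh x).integrableOn
        (Eventually.of_forall fun y => hJnn _)
        (HasSubset.Subset.eventuallyLE Set.Ioc_subset_Ioi_self)
    refine le_trans ?_ h1
    have hvol : volume (Set.Ioc (h t) (h t + 1)) = 1 := by
      rw [Real.volume_Ioc]; norm_num
    have h2 := setIntegral_ge_of_const_le (c := δ) (f := fun y => J (x - y))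
      measurableSet_Ioc (by rw [hvol]; exact ENNReal.one_ne_top)
      (fun y hy => by
        apply hδle
        have hg1 : ginf ≤ g t := hgge t ht
        have hh1 : h t ≤ hinf := hhle t ht
        constructor
        · have := hx.1; have := hy.2; simp only [Set.mem_Ioc] at hy
          linarith [hx.1, hy.2]
        · linarith [hx.2, hy.1])
      ((hJsh x).integrableOn)
    rw [measureReal_def, hvol] at h2
    simpa using h2
  -- key inequality: δ * mass ≤ fluxR
  have key : ∀ t, 0 < t →
      δ * (∫ x in (g t)..(h t), w t x) ≤ fluxR J (w t) (g t) (h t) := by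
    intro t ht
    have hgh := (hglt t ht.le).le
    have hwc := hwtc t ht.le
    have hwint : IntervalIntegrable (w t) volume (g t) (h t) :=
      ContinuousOn.intervalIntegrable (by rwa [Set.uIcc_of_le hgh])
    have hflux_eq : fluxR J (w t) (g t) (h t)
        = ∫ x in (g t)..(h t), (∫ y in Set.Ioi (h t), J (x - y)) * w t x := by
      unfold fluxR
      refine intervalIntegral.integral_congr fun x _ => ?_
      exact integral_mul_const _ _
    have hprod_int : IntervalIntegrable
        (fun x => (∫ y in Set.Ioi (h t), J (x - y)) * w t x) volume (g t) (h t) := by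
      rw [intervalIntegrable_iff_integrableOn_Ioc_of_le hgh]
      apply Integrable.mono' (g := fun _ => M)
      · exact integrableOn_const measure_Ioc_lt_top.ne
      · exact ((hcm (h t)).aestronglyMeasurable).mul
          ((hwc.mono Set.Ioc_subset_Icc_self).aestronglyMeasurable measurableSet_Ioc)
      · filter_upwards [ae_restrict_mem measurableSet_Ioc] with x hx
        have h1 := hcnn (h t) x
        have h2 := hcle (h t) x
        have h3 := hwnn t ht x (Set.Ioc_subset_Icc_self hx)
        have h4 := hwM t ht x (Set.Ioc_subset_Icc_self hx)
        rw [Real.norm_eq_abs, abs_of_nonneg (mul_nonneg h1 h3)]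
        nlinarith
    calc δ * ∫ x in (g t)..(h t), w t x = ∫ x in (g t)..(h t), δ * w t x := by
          rw [intervalIntegral.integral_const_mul]
      _ ≤ ∫ x in (g t)..(h t), (∫ y in Set.Ioi (h t), J (x - y)) * w t x := by
          apply intervalIntegral.integral_mono_on hgh (hwint.const_mul δ) hprod_int
          intro x hx
          exact mul_le_mul_of_nonneg_right (hcge t ht.le x hx) (hwnn t ht x hx)
      _ = fluxR J (w t) (g t) (h t) := hflux_eq.symm
  have hβδ : 0 < β * δ := mul_pos hβ hδpos
  have hF0 : ∀ t, 0 < t → 0 ≤ ∫ x in (g t)..(h t), w t x := fun t ht =>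
    intervalIntegral.integral_nonneg (hglt t ht.le).le (fun x hx => hwnn t ht x hx)
  have hFle : ∀ t, 0 < t → (∫ x in (g t)..(h t), w t x) ≤ (β * δ)⁻¹ * h' t := by
    intro t ht
    rw [show (β * δ)⁻¹ * h' t = h' t / (β * δ) by ring, le_div_iff₀ hβδ]
    have h1 := mul_le_mul_of_nonneg_left (key t ht) hβ.le
    have h2 := hflux t ht
    nlinarith
  -- Part 1: the mass tends to zero
  have htend : Tendsto (fun t => ∫ x in (g t)..(h t), w t x) atTop (nhds 0) := by
    have hlim0 : Tendsto (fun t => (β * δ)⁻¹ * h' t) atTop (nhds 0) := by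
      simpa using hh'lim.const_mul ((β * δ)⁻¹)
    refine squeeze_zero' ?_ ?_ hlim0
    · filter_upwards [eventually_gt_atTop 0] with t ht; exact hF0 t ht
    · filter_upwards [eventually_gt_atTop 0] with t ht; exact hFle t ht
  -- integrability of h' on (0, ∞)
  have hIoc : ∀ T : ℝ, IntegrableOn h' (Set.Ioc 0 T) := by
    intro T
    rcases le_or_gt T 0 with hT | hT
    · rw [Set.Ioc_eq_empty (by exact fun hc => absurd (hc.trans_le hT) (lt_irrefl 0))]
      exact integrableOn_empty
    · exact intervalIntegral.integrableOn_deriv_of_nonneg (hhc.mono Set.Icc_subset_Ici_self)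
        (fun x hx => (hh' x hx.1.le).hasDerivAt (Ici_mem_nhds hx.1))
        (fun x hx => hh'ge x hx.1.le)
  have hh'int : IntegrableOn h' (Set.Ioi 0) := by
    apply integrableOn_Ioi_of_intervalIntegral_norm_bounded (hinf - h 0) 0
      (b := fun T : ℝ => T) (fun T => hIoc T) tendsto_id
    filter_upwards [eventually_ge_atTop (0:ℝ)] with T hT
    have heq : (∫ x in (0:ℝ)..T, ‖h' x‖) = ∫ x in (0:ℝ)..T, h' x := by
      refine intervalIntegral.integral_congr fun x hx => ?_
      rw [Set.uIcc_of_le hT] at hx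
      exact Real.norm_of_nonneg (hh'ge x hx.1)
    rw [heq, intervalIntegral.integral_eq_sub_of_hasDeriv_right_of_le hT
      (hhc.mono Set.Icc_subset_Ici_self)
      (fun x hx => ((hh' x hx.1.le).hasDerivAt (Ici_mem_nhds hx.1)).hasDerivWithinAt)
      (by rw [intervalIntegrable_iff_integrableOn_Ioc_of_le hT]; exact hIoc T)]
    have h1 := hhle T hT
    linarith
  -- the domain Ω and the measurable extension V of w
  set Ω : Set (ℝ × ℝ) := {p : ℝ × ℝ | 0 ≤ p.1 ∧ g p.1 ≤ p.2 ∧ p.2 ≤ h p.1} with hΩdef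
  have hΩmeas : MeasurableSet Ω := by
    have hgm : Continuous fun s : ℝ => g (max s 0) :=
      hgc.comp_continuous (continuous_id.max continuous_const) (fun x => le_max_right x 0)
    have hhm : Continuous fun s : ℝ => h (max s 0) :=
      hhc.comp_continuous (continuous_id.max continuous_const) (fun x => le_max_right x 0)
    have hΩeq : Ω = ({p : ℝ × ℝ | 0 ≤ p.1} ∩ {p | g (max p.1 0) ≤ p.2})
        ∩ {p | p.2 ≤ h (max p.1 0)} := by
      ext p
      simp only [hΩdef, Set.mem_setOf_eq, Set.mem_inter_iff]
      constructor
      · rintro ⟨h1, h2, h3⟩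
        rw [max_eq_left h1]
        exact ⟨⟨h1, h2⟩, h3⟩
      · rintro ⟨⟨h1, h2⟩, h3⟩
        rw [max_eq_left h1] at h2 h3
        exact ⟨h1, h2, h3⟩
    rw [hΩeq]
    exact (((isClosed_le continuous_const continuous_fst).inter
      (isClosed_le (hgm.comp continuous_fst) continuous_snd)).inter
      (isClosed_le continuous_snd (hhm.comp continuous_fst))).measurableSet
  set V : ℝ × ℝ → ℝ := Ω.indicator (Function.uncurry w) with hVdef
  have hVw : ∀ t, 0 ≤ t → ∀ x, V (t, x) = w t x := by
    intro t ht x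
    by_cases hx : (t, x) ∈ Ω
    · rw [hVdef, Set.indicator_of_mem hx]; rfl
    · rw [hVdef, Set.indicator_of_notMem hx]
      have hnot : x ∉ Set.Icc (g t) (h t) := fun hc => hx ⟨ht, hc.1, hc.2⟩
      exact (hext t x ht hnot).symm
  have hFeq : ∀ t, 0 < t → (∫ x in (g t)..(h t), w t x)
      = ∫ x in Set.Ioc ginf hinf, V (t, x) := by
    intro t ht
    rw [intervalIntegral.integral_of_le (hglt t ht.le).le]
    have e1 : (∫ x in Set.Ioc (g t) (h t), w t x) = ∫ x, w t x :=
      setIntegral_eq_integral_of_forall_compl_eq_zero (fun x hx =>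
        hw0 t ht.le x (fun hc => hx (Set.Ioo_subset_Ioc_self hc)))
    have e2 : (∫ x in Set.Ioc ginf hinf, V (t, x)) = ∫ x, V (t, x) :=
      setIntegral_eq_integral_of_forall_compl_eq_zero (fun x hx => by
        rw [hVw t ht.le x]
        exact hw0 t ht.le x (fun hc => hx ⟨lt_of_le_of_lt (hgge t ht.le) hc.1,
          hc.2.le.trans (hhle t ht.le)⟩))
    rw [e1, e2]
    exact integral_congr_ae (Eventually.of_forall fun x => (hVw t ht.le x).symm)
  have hVaesm : AEStronglyMeasurable V
      ((volume.restrict (Set.Ioi 0)).prod (volume.restrict (Set.Ioc ginf hinf))) := by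
    rw [hVdef, aestronglyMeasurable_indicator_iff hΩmeas]
    exact hwcont.aestronglyMeasurable hΩmeas
  have hFmeas : AEStronglyMeasurable (fun t => ∫ x in Set.Ioc ginf hinf, V (t, x))
      (volume.restrict (Set.Ioi 0)) := hVaesm.integral_prod_right'
  have hFint : IntegrableOn (fun t => ∫ x in (g t)..(h t), w t x) (Set.Ioi 0) := by
    apply Integrable.mono' (g := fun t => (β * δ)⁻¹ * h' t) (hh'int.const_mul _)
    · apply hFmeas.congr
      filter_upwards [ae_restrict_mem measurableSet_Ioi] with t ht
      exact (hFeq t ht).symm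
    · filter_upwards [ae_restrict_mem measurableSet_Ioi] with t ht
      rw [Real.norm_of_nonneg (hF0 t ht)]
      exact hFle t ht
  exact ⟨htend, hFint⟩
end
end
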